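/- arXiv:0709.1675 — 11 statements merged into one kernel-verified Lean document; each statement's English description precedes it below -/
import Mathlib

section
/- Let n ≥ 1 and let (V_i)_{i∈ι} be a finite family of n×n complex matrices with purely dissipative Lindblad generator L. Suppose ρ₀ is a positive definite matrix of trace one with L(ρ₀) = 0, and suppose that the commutant of the set {V_i : i ∈ ι} ∪ {V_i† : i ∈ ι} consists exactly of the scalar multiples of the identity. Then ρ₀ is the unique stationary state: every positive semidefinite trace-one matrix ρ with L(ρ) = 0 equals ρ₀. -/
open Matrix
open scoped ComplexOrder

lemma entry_mul_star_nonneg (z : ℂ) : 0 ≤ z * star z := by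
  rw [mul_comm]; exact star_mul_self_nonneg z

lemma trace_mul_conjTranspose_self_nonneg {m : ℕ} (B : Matrix (Fin m) (Fin m) ℂ) :
    0 ≤ (B * Bᴴ).trace := by
  rw [Matrix.trace]
  refine Finset.sum_nonneg fun i _ => ?_
  rw [Matrix.diag_apply, Matrix.mul_apply]
  exact Finset.sum_nonneg fun j _ => by
    simpa only [conjTranspose_apply] using entry_mul_star_nonneg (B i j)

lemma eq_zero_of_trace_mul_conjTranspose_self {m : ℕ} {B : Matrix (Fin m) (Fin m) ℂ}
    (h : (B * Bᴴ).trace = 0) : B = 0 := by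
  have hd : ∀ i ∈ Finset.univ, (B * Bᴴ).diag i = 0 := by
    rw [Matrix.trace] at h
    refine (Finset.sum_eq_zero_iff_of_nonneg fun i _ => ?_).mp h
    rw [Matrix.diag_apply, Matrix.mul_apply]
    exact Finset.sum_nonneg fun j _ => by
      simpa only [conjTranspose_apply] using entry_mul_star_nonneg (B i j)
  ext i j
  have h2 : (∑ j, B i j * star (B i j)) = 0 := by
    have := hd i (Finset.mem_univ i)
    rw [Matrix.diag_apply, Matrix.mul_apply] at this
    simpa only [conjTranspose_apply] using this
  have h3 := (Finset.sum_eq_zero_iff_of_nonneg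
    (fun j _ => entry_mul_star_nonneg (B i j))).mp h2 j (Finset.mem_univ j)
  rw [mul_comm] at h3
  simp only [Matrix.zero_apply]
  rcases mul_eq_zero.mp h3 with h4 | h4
  · exact star_eq_zero.mp h4
  · exact h4

lemma dissipation {m : ℕ} (W H : Matrix (Fin m) (Fin m) ℂ) (hH : Hᴴ = H) :
    (Wᴴ * (H * H) * W - (1/2 : ℂ) • ((H * H) * (Wᴴ * W) + (Wᴴ * W) * (H * H)))
      - H * (Wᴴ * H * W - (1/2 : ℂ) • (H * (Wᴴ * W) + (Wᴴ * W) * H))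
      - (Wᴴ * H * W - (1/2 : ℂ) • (H * (Wᴴ * W) + (Wᴴ * W) * H)) * H
    = (W * H - H * W)ᴴ * (W * H - H * W) := by
  simp only [conjTranspose_sub, conjTranspose_mul, hH]
  noncomm_ring
  module

lemma adj_term {m : ℕ} (W A X : Matrix (Fin m) (Fin m) ℂ) :
    ((W * A * Wᴴ - (1/2 : ℂ) • (Wᴴ * W * A + A * (Wᴴ * W))) * X).trace
    = (A * (Wᴴ * X * W - (1/2 : ℂ) • (X * (Wᴴ * W) + (Wᴴ * W) * X))).trace := by
  simp only [sub_mul, mul_sub, smul_mul_assoc, mul_smul_comm, add_mul, mul_add,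
    trace_sub, trace_add, trace_smul, mul_assoc]
  congr 1
  · rw [trace_mul_comm W (A * (Wᴴ * X)), mul_assoc, mul_assoc]
  congr 1
  congr 1
  · rw [trace_mul_comm Wᴴ (W * (A * X)), mul_assoc, mul_assoc, trace_mul_comm W (A * (X * Wᴴ)),
      mul_assoc, mul_assoc]

lemma tr_comm3 {m : ℕ} (P C : Matrix (Fin m) (Fin m) ℂ) :
    (P * (Cᴴ * C)).trace = ((C * P) * Cᴴ).trace := by
  rw [trace_mul_comm P, mul_assoc, trace_mul_comm Cᴴ]


/-- If the purely dissipative Lindblad generator built from a finite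
family `V i` admits a positive definite trace-one stationary state `ρ₀`, and the
commutant of `{V i} ∪ {(V i)ᴴ}` consists exactly of the scalar multiples of the
identity, then `ρ₀` is the unique stationary state. -/
theorem unique_stationary_state_of_trivial_commutant
    {n : ℕ} (hn : 1 ≤ n) {ι : Type} [Fintype ι]
    (V : ι → Matrix (Fin n) (Fin n) ℂ)
    (L : Matrix (Fin n) (Fin n) ℂ → Matrix (Fin n) (Fin n) ℂ)
    (hL : ∀ ρ, L ρ = ∑ i, (V i * ρ * (V i)ᴴ
        - (1 / 2 : ℂ) • ((V i)ᴴ * V i * ρ + ρ * ((V i)ᴴ * V i))))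
    (ρ₀ : Matrix (Fin n) (Fin n) ℂ)
    (hρ₀_pos : ρ₀.PosDef) (hρ₀_tr : ρ₀.trace = 1) (hρ₀_st : L ρ₀ = 0)
    (hcomm : {X : Matrix (Fin n) (Fin n) ℂ |
        ∀ i, X * V i = V i * X ∧ X * (V i)ᴴ = (V i)ᴴ * X}
      = {X : Matrix (Fin n) (Fin n) ℂ | ∃ c : ℂ, X = c • (1 : Matrix (Fin n) (Fin n) ℂ)}) :
    ∀ ρ : Matrix (Fin n) (Fin n) ℂ, ρ.PosSemidef → ρ.trace = 1 → L ρ = 0 → ρ = ρ₀ := by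
  intro ρ hρ_psd hρ_tr hρ_st
  classical
  -- The generator as a linear map
  let Lmap : Matrix (Fin n) (Fin n) ℂ →ₗ[ℂ] Matrix (Fin n) (Fin n) ℂ := {
    toFun := L
    map_add' := fun A B => by
      rw [hL, hL, hL, ← Finset.sum_add_distrib]
      exact Finset.sum_congr rfl fun i _ => by
        simp only [mul_add, add_mul, smul_add]; abel
    map_smul' := fun c A => by
      show L (c • A) = (RingHom.id ℂ) c • L A
      rw [hL, hL, RingHom.id_apply, Finset.smul_sum]
      exact Finset.sum_congr rfl fun i _ => by
        simp only [mul_smul_comm, smul_mul_assoc, smul_sub, smul_add, smul_smul,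
          mul_comm c (1/2 : ℂ)] }
  -- the trace-pairing adjoint generator
  let Mfun : Matrix (Fin n) (Fin n) ℂ → Matrix (Fin n) (Fin n) ℂ := fun X =>
    ∑ i, ((V i)ᴴ * X * V i
      - (1/2 : ℂ) • (X * ((V i)ᴴ * V i) + ((V i)ᴴ * V i) * X))
  let Mmap : Matrix (Fin n) (Fin n) ℂ →ₗ[ℂ] Matrix (Fin n) (Fin n) ℂ := {
    toFun := Mfun
    map_add' := fun A B => by
      show Mfun (A + B) = Mfun A + Mfun B
      unfold Mfun
      rw [← Finset.sum_add_distrib]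
      exact Finset.sum_congr rfl fun i _ => by
        simp only [mul_add, add_mul, smul_add]; abel
    map_smul' := fun c A => by
      show Mfun (c • A) = (RingHom.id ℂ) c • Mfun A
      unfold Mfun
      rw [RingHom.id_apply, Finset.smul_sum]
      exact Finset.sum_congr rfl fun i _ => by
        simp only [mul_smul_comm, smul_mul_assoc, smul_sub, smul_add, smul_smul,
          mul_comm c (1/2 : ℂ)] }
  have hMapp : ∀ X, Mmap X = Mfun X := fun X => rfl
  have hLapp : ∀ X, Lmap X = L X := fun X => rfl
  -- adjointness under the trace pairing
  have hadj : ∀ A X, (L A * X).trace = (A * Mmap X).trace := by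
    intro A X
    rw [hL, hMapp]
    unfold Mfun
    rw [Finset.sum_mul, Finset.mul_sum, trace_sum, trace_sum]
    exact Finset.sum_congr rfl fun i _ => adj_term (V i) A X
  have htr0 : ∀ Y, (ρ₀ * Mmap Y).trace = 0 := by
    intro Y
    rw [← hadj ρ₀ Y, hρ₀_st, zero_mul, trace_zero]
  -- square root of ρ₀
  open scoped MatrixOrder in
  set S := CFC.sqrt ρ₀ with hSdef
  have hSH : Sᴴ = S := (open scoped MatrixOrder in (CFC.sqrt_nonneg ρ₀).posSemidef.isHermitian)
  have hS2 : S * S = ρ₀ := (open scoped MatrixOrder in CFC.sqrt_mul_sqrt_self ρ₀ hρ₀_pos.posSemidef.nonneg)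
  have hSu : IsUnit S.det := by
    have hd : ρ₀.det ≠ 0 := ne_of_gt hρ₀_pos.det_pos
    rw [← hS2, det_mul] at hd
    exact isUnit_iff_ne_zero.mpr (left_ne_zero_of_mul hd)
  have hCzero : ∀ C : Matrix (Fin n) (Fin n) ℂ, ((C * ρ₀) * Cᴴ).trace = 0 → C = 0 := by
    intro C hC
    have he : (C * ρ₀) * Cᴴ = (C * S) * (C * S)ᴴ := by
      rw [conjTranspose_mul, hSH, ← hS2]; noncomm_ring
    rw [he] at hC
    have hCS : C * S = 0 := eq_zero_of_trace_mul_conjTranspose_self hC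
    calc C = C * (S * S⁻¹) := by rw [Matrix.mul_nonsing_inv S hSu, mul_one]
    _ = (C * S) * S⁻¹ := by rw [mul_assoc]
    _ = 0 := by rw [hCS, zero_mul]
  -- Hermitian kernel elements of Mmap commute with all V i
  have hHerm : ∀ H : Matrix (Fin n) (Fin n) ℂ, Hᴴ = H → Mmap H = 0 →
      ∀ i, V i * H = H * V i := by
    intro H hH hMH
    have hdiss : Mmap (H * H) = ∑ j, (V j * H - H * V j)ᴴ * (V j * H - H * V j) := by
      have h0 : Mmap (H * H) = Mmap (H * H) - H * (Mmap H) - (Mmap H) * H := by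
        rw [hMH]; simp
      rw [h0, hMapp, hMapp]
      unfold Mfun
      rw [Finset.mul_sum, Finset.sum_mul, ← Finset.sum_sub_distrib, ← Finset.sum_sub_distrib]
      exact Finset.sum_congr rfl fun j _ => dissipation (V j) H hH
    have hsum : (∑ j, (((V j * H - H * V j) * ρ₀) * (V j * H - H * V j)ᴴ).trace) = 0 := by
      have := htr0 (H * H)
      rw [hdiss, Finset.mul_sum, trace_sum] at this
      rw [← this]
      exact Finset.sum_congr rfl fun j _ => (tr_comm3 ρ₀ (V j * H - H * V j)).symm
    have hterm : ∀ j ∈ Finset.univ,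
        (((V j * H - H * V j) * ρ₀) * (V j * H - H * V j)ᴴ).trace = 0 := by
      refine (Finset.sum_eq_zero_iff_of_nonneg fun j _ => ?_).mp hsum
      have he : ((V j * H - H * V j) * ρ₀) * (V j * H - H * V j)ᴴ
          = ((V j * H - H * V j) * S) * ((V j * H - H * V j) * S)ᴴ := by
        rw [conjTranspose_mul (V j * H - H * V j) S, hSH, ← hS2]; noncomm_ring
      rw [he]
      exact trace_mul_conjTranspose_self_nonneg _
    intro i
    have := hCzero _ (hterm i (Finset.mem_univ i))
    have h5 : V i * H - H * V i = 0 := this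
    rw [sub_eq_zero] at h5
    exact h5
  -- Mmap commutes with conjTranspose
  have hMconj : ∀ X, Mmap Xᴴ = (Mmap X)ᴴ := by
    intro X
    rw [hMapp, hMapp]
    unfold Mfun
    rw [conjTranspose_sum]
    refine Finset.sum_congr rfl fun i _ => ?_
    have hs : star (1/2 : ℂ) = (1/2 : ℂ) := by
      simp [Complex.ext_iff]
    simp only [conjTranspose_sub, conjTranspose_smul, conjTranspose_add, conjTranspose_mul,
      conjTranspose_conjTranspose, hs]
    noncomm_ring
  -- the kernel of Mmap consists of scalar matrices
  have hker : ∀ X, Mmap X = 0 → ∃ c : ℂ, X = c • (1 : Matrix (Fin n) (Fin n) ℂ) := by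
    intro X hX
    have hX' : Mmap Xᴴ = 0 := by rw [hMconj, hX, conjTranspose_zero]
    have hH1 : (X + Xᴴ)ᴴ = X + Xᴴ := by
      rw [conjTranspose_add, conjTranspose_conjTranspose, add_comm]
    have hH2 : (Complex.I • (X - Xᴴ))ᴴ = Complex.I • (X - Xᴴ) := by
      rw [conjTranspose_smul, conjTranspose_sub, conjTranspose_conjTranspose,
        Complex.star_def, Complex.conj_I, neg_smul, smul_sub, smul_sub]
      module
    have hM1 : Mmap (X + Xᴴ) = 0 := by rw [map_add, hX, hX', add_zero]
    have hM2 : Mmap (Complex.I • (X - Xᴴ)) = 0 := by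
      rw [_root_.map_smul, map_sub, hX, hX', sub_zero, smul_zero]
    have hc1 := hHerm _ hH1 hM1
    have hc2' := hHerm _ hH2 hM2
    have hc2 : ∀ i, V i * (X - Xᴴ) = (X - Xᴴ) * V i := by
      intro i
      have := hc2' i
      rw [mul_smul_comm, smul_mul_assoc] at this
      exact smul_right_injective _ Complex.I_ne_zero this
    have hcX : ∀ i, V i * X = X * V i := by
      intro i
      have h3 : V i * X + V i * X = X * V i + X * V i := by
        calc V i * X + V i * X
            = V i * (X + Xᴴ) + V i * (X - Xᴴ) := by rw [mul_add, mul_sub]; abel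
        _ = (X + Xᴴ) * V i + (X - Xᴴ) * V i := by rw [hc1 i, hc2 i]
        _ = X * V i + X * V i := by rw [add_mul, sub_mul]; abel
      have h4 : (2 : ℂ) • (V i * X) = (2 : ℂ) • (X * V i) := by
        rw [two_smul, two_smul]; exact h3
      exact smul_right_injective _ two_ne_zero h4
    have hcXH : ∀ i, V i * Xᴴ = Xᴴ * V i := by
      intro i
      have h3 : V i * Xᴴ + V i * Xᴴ = Xᴴ * V i + Xᴴ * V i := by
        calc V i * Xᴴ + V i * Xᴴ
            = V i * (X + Xᴴ) - V i * (X - Xᴴ) := by rw [mul_add, mul_sub]; abel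
        _ = (X + Xᴴ) * V i - (X - Xᴴ) * V i := by rw [hc1 i, hc2 i]
        _ = Xᴴ * V i + Xᴴ * V i := by rw [add_mul, sub_mul]; abel
      have h4 : (2 : ℂ) • (V i * Xᴴ) = (2 : ℂ) • (Xᴴ * V i) := by
        rw [two_smul, two_smul]; exact h3
      exact smul_right_injective _ two_ne_zero h4
    have hmem : X ∈ {X : Matrix (Fin n) (Fin n) ℂ |
        ∀ i, X * V i = V i * X ∧ X * (V i)ᴴ = (V i)ᴴ * X} := by
      intro i
      constructor
      · exact (hcX i).symm
      · have := congrArg conjTranspose (hcXH i)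
        rwa [conjTranspose_mul, conjTranspose_mul, conjTranspose_conjTranspose] at this
    rw [hcomm] at hmem
    exact hmem
  -- dimension count
  have hone : (1 : Matrix (Fin n) (Fin n) ℂ) ≠ 0 := by
    intro h
    have := congrFun (congrFun h ⟨0, hn⟩) ⟨0, hn⟩
    simp at this
  have hρ₀ne : ρ₀ ≠ 0 := by
    intro h
    rw [h, trace_zero] at hρ₀_tr
    exact one_ne_zero hρ₀_tr.symm
  -- the pairing
  let φ : Matrix (Fin n) (Fin n) ℂ →ₗ[ℂ]
      Module.Dual ℂ (Matrix (Fin n) (Fin n) ℂ) := LinearMap.mk₂ ℂ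
    (fun A X => (A * X).trace)
    (fun A B X => by simp [add_mul])
    (fun c A X => by simp [smul_mul_assoc])
    (fun A B X => by simp [mul_add])
    (fun c A X => by simp [mul_smul_comm])
  have hφinj : Function.Injective φ := by
    rw [injective_iff_map_eq_zero]
    intro A hA
    have := congrArg (fun f => f Aᴴ) hA
    simp only [LinearMap.zero_apply] at this
    exact eq_zero_of_trace_mul_conjTranspose_self this
  have hφL : ∀ A, φ (Lmap A) = Mmap.dualMap (φ A) := by
    intro A
    refine LinearMap.ext fun X => ?_
    show ((Lmap A) * X).trace = (A * Mmap X).trace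
    rw [hLapp]
    exact hadj A X
  have hre : ∀ A ∈ LinearMap.ker Lmap, φ A ∈ LinearMap.ker Mmap.dualMap := by
    intro A hA
    rw [LinearMap.mem_ker] at hA ⊢
    rw [← hφL, hA, map_zero]
  let ψ := φ.restrict hre
  have hψinj : Function.Injective ψ := by
    intro x y hxy
    exact Subtype.ext (hφinj (Subtype.ext_iff.mp hxy))
  have hrank1 : Module.finrank ℂ (LinearMap.ker Lmap) ≤
      Module.finrank ℂ (LinearMap.ker Mmap.dualMap) :=
    LinearMap.finrank_le_finrank_of_injective hψinj
  have e1 := LinearMap.finrank_range_add_finrank_ker Mmap.dualMap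
  have e2 := LinearMap.finrank_range_add_finrank_ker Mmap
  have e3 := LinearMap.finrank_range_dualMap_eq_finrank_range Mmap
  have e4 : Module.finrank ℂ (Module.Dual ℂ (Matrix (Fin n) (Fin n) ℂ))
      = Module.finrank ℂ (Matrix (Fin n) (Fin n) ℂ) := Subspace.dual_finrank_eq
  have hMker_le : LinearMap.ker Mmap ≤ Submodule.span ℂ {(1 : Matrix (Fin n) (Fin n) ℂ)} := by
    intro X hX
    rw [LinearMap.mem_ker] at hX
    obtain ⟨c, hc⟩ := hker X hX
    rw [Submodule.mem_span_singleton]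
    exact ⟨c, hc.symm⟩
  have hMker_fin : Module.finrank ℂ (LinearMap.ker Mmap) ≤ 1 := by
    have h1 := Submodule.finrank_mono hMker_le
    rwa [finrank_span_singleton hone] at h1
  have hLker_fin : Module.finrank ℂ (LinearMap.ker Lmap) ≤ 1 := by
    have : Module.finrank ℂ (LinearMap.ker Mmap.dualMap)
        = Module.finrank ℂ (LinearMap.ker Mmap) := by omega
    omega
  -- conclude
  have hρ₀mem : ρ₀ ∈ LinearMap.ker Lmap := by
    rw [LinearMap.mem_ker, hLapp]; exact hρ₀_st
  have hspan_le : Submodule.span ℂ {ρ₀} ≤ LinearMap.ker Lmap := by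
    rw [Submodule.span_le, Set.singleton_subset_iff]; exact hρ₀mem
  have heq : Submodule.span ℂ {ρ₀} = LinearMap.ker Lmap := by
    refine Submodule.eq_of_le_of_finrank_le hspan_le ?_
    rw [finrank_span_singleton hρ₀ne]
    exact hLker_fin
  have hρmem : ρ ∈ Submodule.span ℂ {ρ₀} := by
    rw [heq, LinearMap.mem_ker, hLapp]; exact hρ_st
  obtain ⟨c, hc⟩ := Submodule.mem_span_singleton.mp hρmem
  have htr : c = 1 := by
    have := congrArg Matrix.trace hc
    rw [trace_smul, hρ₀_tr, hρ_tr, smul_eq_mul, mul_one] at this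
    exact this
  rw [← hc, htr, one_smul]
end

section
/- Let n ≥ 1 and let (V_i)_{i∈ι} be a finite family of n×n complex matrices with purely dissipative Lindblad generator L, and let ρ₀ be a positive definite trace-one matrix with L(ρ₀) = 0. Let M denote the commutant of {V_i : i ∈ ι} ∪ {V_i† : i ∈ ι}, and suppose the commutant of {V_i : i ∈ ι} equals M. Let P_1, …, P_m be nonzero Hermitian idempotent n×n matrices with P_k P_l = 0 for k ≠ l and Σ_k P_k = 𝟙, such that the commutant of M equals the linear span of {P_1, …, P_m} and this span is contained in M (i.e. Z = M′ in Frigerio's notation). Then for every positive semidefinite trace-one matrix ρ, exp(tL)(ρ) tends to Σ_k P_k ρ P_k as t → +∞. -/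
open Matrix Filter
open scoped ComplexOrder

attribute [local instance] Matrix.frobeniusNormedAddCommGroup Matrix.frobeniusNormedSpace
attribute [-instance] instTopologicalSpaceMatrix Matrix.instUniformSpace

lemma exp_apply_eig {E : Type*} [NormedAddCommGroup E] [NormedSpace ℂ E] [CompleteSpace E]
    (T : E →L[ℂ] E) (x : E) (μ : ℂ) (h : T x = μ • x) :
    NormedSpace.exp T x = Complex.exp μ • x := by
  have hpow : ∀ k : ℕ, (T ^ k) x = μ ^ k • x := by
    intro k
    induction k with
    | zero => simp
    | succ k ih =>
      rw [pow_succ', pow_succ', ContinuousLinearMap.mul_apply, ih, _root_.map_smul, h,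
        smul_smul, mul_comm]
  have hs : Summable fun k : ℕ => ((k.factorial : ℂ))⁻¹ • T ^ k :=
    NormedSpace.expSeries_summable' T
  have hs2 : Summable fun k : ℕ => ((k.factorial : ℂ))⁻¹ • μ ^ k :=
    NormedSpace.expSeries_summable' μ
  rw [NormedSpace.exp_eq_tsum ℂ, Complex.exp_eq_exp_ℂ, NormedSpace.exp_eq_tsum ℂ]
  have := (ContinuousLinearMap.apply ℂ E x).map_tsum hs
  simp only [ContinuousLinearMap.apply_apply] at this
  rw [this]
  have heq : (fun k : ℕ => (((k.factorial : ℂ))⁻¹ • T ^ k) x)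
      = fun k : ℕ => (((k.factorial : ℂ))⁻¹ • μ ^ k) • x := by
    funext k
    rw [ContinuousLinearMap.smul_apply, hpow, smul_smul, smul_eq_mul]
  rw [heq, hs2.tsum_smul_const]

/-- Frigerio, case `Z = M'`: with `M` the commutant of `{V i} ∪ {(V i)ᴴ}`,
if the commutant of `{V i}` equals `M`, and the commutant `M'` of `M` equals the linear
span of a complete family of pairwise orthogonal projectors `P k` with this span contained
in `M`, then every state `ρ` evolves towards `∑ k, P k ρ P k`. -/
theorem convergence_case_Z_eq_M'
    {n : ℕ} (hn : 1 ≤ n) {ι : Type} [Fintype ι]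
    (V : ι → Matrix (Fin n) (Fin n) ℂ)
    (L : Matrix (Fin n) (Fin n) ℂ →ₗ[ℂ] Matrix (Fin n) (Fin n) ℂ)
    (hL : ∀ ρ, L ρ = ∑ i, (V i * ρ * (V i)ᴴ
        - (1 / 2 : ℂ) • ((V i)ᴴ * V i * ρ + ρ * ((V i)ᴴ * V i))))
    (ρ₀ : Matrix (Fin n) (Fin n) ℂ)
    (hρ₀_pos : ρ₀.PosDef) (hρ₀_tr : ρ₀.trace = 1) (hρ₀_st : L ρ₀ = 0)
    (M : Set (Matrix (Fin n) (Fin n) ℂ))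
    (hM : M = {X : Matrix (Fin n) (Fin n) ℂ |
        ∀ i, X * V i = V i * X ∧ X * (V i)ᴴ = (V i)ᴴ * X})
    (hVcomm : {X : Matrix (Fin n) (Fin n) ℂ | ∀ i, X * V i = V i * X} = M)
    {m : ℕ} (P : Fin m → Matrix (Fin n) (Fin n) ℂ)
    (hP_ne : ∀ k, P k ≠ 0)
    (hP_herm : ∀ k, (P k)ᴴ = P k)
    (hP_idem : ∀ k, P k * P k = P k)
    (hP_orth : ∀ k l, k ≠ l → P k * P l = 0)
    (hP_sum : ∑ k, P k = 1)
    (hZ : {X : Matrix (Fin n) (Fin n) ℂ | ∀ Y ∈ M, X * Y = Y * X}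
      = (Submodule.span ℂ (Set.range P) : Set (Matrix (Fin n) (Fin n) ℂ)))
    (hZM : (Submodule.span ℂ (Set.range P) : Set (Matrix (Fin n) (Fin n) ℂ)) ⊆ M) :
    ∀ ρ : Matrix (Fin n) (Fin n) ℂ, ρ.PosSemidef → ρ.trace = 1 →
      Tendsto (fun t : ℝ =>
          NormedSpace.exp (t • LinearMap.toContinuousLinearMap L) ρ)
        atTop (nhds (∑ k, P k * ρ * P k)) := by
  intro ρ _ _
  classical
  -- each V i lies in the span of the projectors
  have hVmem : ∀ i, V i ∈ Submodule.span ℂ (Set.range P) := by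
    intro i
    have hmem : V i ∈ {X : Matrix (Fin n) (Fin n) ℂ | ∀ Y ∈ M, X * Y = Y * X} := by
      intro Y hY
      rw [hM] at hY
      exact ((hY i).1).symm
    rwa [hZ] at hmem
  choose c hc using fun i => (Submodule.mem_span_range_iff_exists_fun ℂ).1 (hVmem i)
  -- basic multiplication identities
  have hVP : ∀ i k, V i * P k = c i k • P k := by
    intro i k
    rw [← hc i, Finset.sum_mul, Finset.sum_eq_single k]
    · rw [smul_mul_assoc, hP_idem]
    · intro l _ hlk
      rw [smul_mul_assoc, hP_orth l k hlk, smul_zero]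
    · intro h; exact absurd (Finset.mem_univ k) h
  have hPV : ∀ i k, P k * V i = c i k • P k := by
    intro i k
    rw [← hc i, Finset.mul_sum, Finset.sum_eq_single k]
    · rw [Matrix.mul_smul, hP_idem]
    · intro l _ hlk
      rw [Matrix.mul_smul, hP_orth k l (Ne.symm hlk), smul_zero]
    · intro h; exact absurd (Finset.mem_univ k) h
  have hPVH : ∀ i k, P k * (V i)ᴴ = (starRingEnd ℂ) (c i k) • P k := by
    intro i k
    have := congrArg conjTranspose (hVP i k)
    rwa [Matrix.conjTranspose_mul, Matrix.conjTranspose_smul, hP_herm] at this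
  have hVHP : ∀ i k, (V i)ᴴ * P k = (starRingEnd ℂ) (c i k) • P k := by
    intro i k
    have := congrArg conjTranspose (hPV i k)
    rwa [Matrix.conjTranspose_mul, Matrix.conjTranspose_smul, hP_herm] at this
  -- the eigenvalues
  set Λ : Fin m → Fin m → ℂ := fun k l => ∑ i,
      (c i k * (starRingEnd ℂ) (c i l)
        - (1 / 2 : ℂ) * (c i k * (starRingEnd ℂ) (c i k)
          + c i l * (starRingEnd ℂ) (c i l))) with hΛ
  -- eigenvector property
  have hLB : ∀ (A : Matrix (Fin n) (Fin n) ℂ) (k l : Fin m),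
      L (P k * A * P l) = Λ k l • (P k * A * P l) := by
    intro A k l
    set B : Matrix (Fin n) (Fin n) ℂ := P k * A * P l with hBdef
    have hB1 : ∀ i, V i * B = c i k • B := by
      intro i
      rw [hBdef, ← mul_assoc, ← mul_assoc, hVP i k, smul_mul_assoc, smul_mul_assoc]
    have hB2 : ∀ i, B * (V i)ᴴ = (starRingEnd ℂ) (c i l) • B := by
      intro i
      rw [hBdef, mul_assoc, hPVH i l, Matrix.mul_smul]
    have hB3 : ∀ i, B * V i = c i l • B := by
      intro i
      rw [hBdef, mul_assoc, hPV i l, Matrix.mul_smul]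
    have hB4 : ∀ i, (V i)ᴴ * B = (starRingEnd ℂ) (c i k) • B := by
      intro i
      rw [hBdef, ← mul_assoc, ← mul_assoc, hVHP i k, smul_mul_assoc, smul_mul_assoc]
    rw [hL, hΛ, Finset.sum_smul]
    refine Finset.sum_congr rfl fun i _ => ?_
    have hA1 : V i * B * (V i)ᴴ = (c i k * (starRingEnd ℂ) (c i l)) • B := by
      rw [hB1 i, smul_mul_assoc, hB2 i, smul_smul]
    have hA2 : (V i)ᴴ * V i * B = (c i k * (starRingEnd ℂ) (c i k)) • B := by
      rw [mul_assoc, hB1 i, Matrix.mul_smul, hB4 i, smul_smul, mul_comm]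
    have hA3 : B * ((V i)ᴴ * V i) = (c i l * (starRingEnd ℂ) (c i l)) • B := by
      rw [← mul_assoc, hB2 i, smul_mul_assoc, hB3 i, smul_smul, mul_comm]
    rw [hA1, hA2, hA3]
    module
  -- eigenvector property for the scaled continuous linear map
  have hTB : ∀ (t : ℝ) (k l : Fin m),
      (t • LinearMap.toContinuousLinearMap L) (P k * ρ * P l)
        = ((t : ℂ) * Λ k l) • (P k * ρ * P l) := by
    intro t k l
    rw [ContinuousLinearMap.smul_apply, LinearMap.coe_toContinuousLinearMap', hLB,
      mul_smul]
    rw [← Complex.coe_algebraMap, algebraMap_smul]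
  -- the evolved state
  have hexp : ∀ t : ℝ,
      NormedSpace.exp (t • LinearMap.toContinuousLinearMap L) ρ
        = ∑ k, ∑ l, Complex.exp ((t : ℂ) * Λ k l) • (P k * ρ * P l) := by
    intro t
    have hdecomp : ρ = ∑ k, ∑ l, P k * ρ * P l := by
      calc ρ = (∑ k, P k) * ρ * (∑ l, P l) := by rw [hP_sum, one_mul, mul_one]
        _ = ∑ k, ∑ l, P k * ρ * P l := by
          simp only [Finset.sum_mul, Finset.mul_sum]
          exact Finset.sum_comm
    conv_lhs => rw [hdecomp]
    rw [map_sum]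
    refine Finset.sum_congr rfl fun k _ => ?_
    rw [map_sum]
    refine Finset.sum_congr rfl fun l _ => ?_
    exact exp_apply_eig _ _ _ (hTB t k l)
  simp only [hexp]
  -- for distinct blocks there is a distinguishing coefficient
  have hne : ∀ k l : Fin m, k ≠ l → ∃ i, c i k ≠ c i l := by
    intro k l hkl
    by_contra hcon
    push_neg at hcon
    obtain ⟨x, a, hxa⟩ : ∃ x a, P k x a ≠ 0 := by
      by_contra h; push_neg at h
      exact hP_ne k (by ext x a; simpa using h x a)
    obtain ⟨b, y, hby⟩ : ∃ b y, P l b y ≠ 0 := by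
      by_contra h; push_neg at h
      exact hP_ne l (by ext b y; simpa using h b y)
    set X : Matrix (Fin n) (Fin n) ℂ :=
      P k * Matrix.single a b (1 : ℂ) * P l with hX
    have hXentry : X x y = P k x a * P l b y := by
      rw [hX]
      simp [Matrix.mul_apply, Matrix.single, Finset.mul_sum, ite_and]
    have hXne : X ≠ 0 := by
      intro h0
      rw [h0] at hXentry
      exact mul_ne_zero hxa hby (by simpa using hXentry.symm)
    have hXM : X ∈ M := by
      rw [← hVcomm]
      intro i
      have h1 : X * V i = c i l • X := by
        rw [hX, mul_assoc, hPV i l, Matrix.mul_smul]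
      have h2 : V i * X = c i k • X := by
        rw [hX, ← mul_assoc, ← mul_assoc, hVP i k, smul_mul_assoc, smul_mul_assoc]
      rw [h1, h2, hcon i]
    have hPkX : P k * X = X * P k := by
      have hPk' : P k ∈ {X : Matrix (Fin n) (Fin n) ℂ | ∀ Y ∈ M, X * Y = Y * X} := by
        rw [hZ]; exact Submodule.subset_span ⟨k, rfl⟩
      exact hPk' X hXM
    have h3 : P k * X = X := by
      rw [hX, ← mul_assoc, ← mul_assoc, hP_idem]
    have h4 : X * P k = 0 := by
      rw [hX, mul_assoc, hP_orth l k (Ne.symm hkl), mul_zero]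
    exact hXne (by rw [← h3, hPkX, h4])
  -- real parts of off-diagonal eigenvalues are negative
  have hre : ∀ k l : Fin m, k ≠ l → (Λ k l).re < 0 := by
    intro k l hkl
    obtain ⟨i₀, hi₀⟩ := hne k l hkl
    have hΛre : (Λ k l).re
        = ∑ i, (-(1 / 2) * Complex.normSq (c i k - c i l)) := by
      rw [hΛ, Complex.re_sum]
      refine Finset.sum_congr rfl fun i _ => ?_
      have h2 : ((1 : ℂ) / 2) = ((1 / 2 : ℝ) : ℂ) := by norm_num
      rw [h2]
      simp [Complex.mul_re, Complex.mul_im, Complex.sub_re, Complex.add_re,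
        Complex.conj_re, Complex.conj_im, Complex.normSq_apply, Complex.sub_im,
        Complex.add_im, Complex.ofReal_re, Complex.ofReal_im]
      ring
    rw [hΛre]
    have := Finset.sum_lt_sum (s := (Finset.univ : Finset ι))
      (f := fun i => (-(1 / 2 : ℝ) * Complex.normSq (c i k - c i l)))
      (g := fun _ => (0 : ℝ))
      (by
        intro i _
        have := Complex.normSq_nonneg (c i k - c i l)
        nlinarith)
      ⟨i₀, Finset.mem_univ i₀, by
        have h0 : 0 < Complex.normSq (c i₀ k - c i₀ l) :=
          Complex.normSq_pos.2 (sub_ne_zero.2 hi₀)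
        nlinarith⟩
    simpa using this
  -- diagonal eigenvalues vanish
  have hΛdiag : ∀ k, Λ k k = 0 := by
    intro k
    rw [hΛ]
    refine Finset.sum_eq_zero fun i _ => ?_
    ring
  -- final limit computation
  have htarget : (∑ k, P k * ρ * P k)
      = ∑ k, ∑ l, (if l = k then P k * ρ * P l else 0) := by
    refine Finset.sum_congr rfl fun k _ => ?_
    rw [Finset.sum_ite_eq']
    simp
  rw [htarget]
  refine tendsto_finset_sum _ fun k _ => tendsto_finset_sum _ fun l _ => ?_
  by_cases hkl : l = k
  · subst hkl
    simp only [if_pos rfl, hΛdiag, mul_zero, Complex.exp_zero, one_smul]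
    exact tendsto_const_nhds
  · simp only [if_neg hkl]
    have hlim : Tendsto (fun t : ℝ => Complex.exp ((t : ℂ) * Λ k l)) atTop (nhds 0) := by
      rw [tendsto_zero_iff_norm_tendsto_zero]
      have hnorm : ∀ t : ℝ, ‖Complex.exp ((t : ℂ) * Λ k l)‖
          = Real.exp (t * (Λ k l).re) := by
        intro t
        rw [Complex.norm_exp]
        congr 1
        simp [Complex.mul_re]
      simp only [hnorm]
      exact Real.tendsto_exp_atBot.comp
        ((tendsto_mul_const_atBot_of_neg (hre k l (Ne.symm hkl))).2 tendsto_id)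
    have := hlim.smul_const (P k * ρ * P l)
    simpa using this
end

section
/- Let a, b be real numbers, let A be the 3×3 complex matrix !![a, i·b, 0; −i·b, a, 0; 0, 0, a], and let C = fromBlocks A A A A be the 6×6 block matrix [[A, A], [A, A]] (the Kossakowski matrix of the model with B = A). Then C is positive semidefinite if and only if 0 ≤ a and b² ≤ a² (the complete positivity condition a² − b² ≥ 0). -/
open Matrix Complex
open scoped ComplexOrder

lemma kossakowski_key (a b : ℝ) (ha : 0 ≤ a) (hb : b ^ 2 ≤ a ^ 2) (u v w : ℂ) :
    0 ≤ (a : ℂ) * ((starRingEnd ℂ) u * u + (starRingEnd ℂ) v * v + (starRingEnd ℂ) w * w)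
      + Complex.I * b * ((starRingEnd ℂ) u * v) - Complex.I * b * ((starRingEnd ℂ) v * u) := by
  have h1 : 0 ≤ a - b := by nlinarith
  have h2 : 0 ≤ a + b := by nlinarith
  rw [Complex.le_def]
  constructor
  · simp [Complex.add_re, Complex.mul_re, Complex.mul_im]
    nlinarith [mul_nonneg h1 (sq_nonneg (u.re + v.im)), mul_nonneg h2 (sq_nonneg (u.re - v.im)),
      mul_nonneg h1 (sq_nonneg (u.im - v.re)), mul_nonneg h2 (sq_nonneg (u.im + v.re)),
      mul_nonneg ha (sq_nonneg w.re), mul_nonneg ha (sq_nonneg w.im)]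
  · simp [Complex.add_im, Complex.mul_re, Complex.mul_im]
    ring

/-- the Kossakowski matrix `C = fromBlocks A A A A`, with
`A = !![a, i·b, 0; -i·b, a, 0; 0, 0, a]`, is positive semidefinite if and only if
`0 ≤ a` and `b² ≤ a²`. -/
theorem kossakowski_posSemidef_iff
    (a b : ℝ)
    (A : Matrix (Fin 3) (Fin 3) ℂ)
    (hA : A = !![(a : ℂ), Complex.I * b, 0; -Complex.I * b, (a : ℂ), 0; 0, 0, (a : ℂ)])
    (C : Matrix (Fin 3 ⊕ Fin 3) (Fin 3 ⊕ Fin 3) ℂ)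
    (hC : C = fromBlocks A A A A) :
    C.PosSemidef ↔ (0 ≤ a ∧ b ^ 2 ≤ a ^ 2) := by
  constructor
  · intro h
    have h1 := h.dotProduct_mulVec_nonneg (Sum.elim ![1, 0, 0] 0)
    have h2 := h.dotProduct_mulVec_nonneg (Sum.elim ![1, Complex.I, 0] 0)
    have h3 := h.dotProduct_mulVec_nonneg (Sum.elim ![1, -Complex.I, 0] 0)
    simp [hC, hA, dotProduct, mulVec, Fintype.sum_sum_type, Fin.sum_univ_succ, fromBlocks,
      Complex.le_def, Complex.ext_iff] at h1 h2 h3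
    constructor
    · linarith [h1]
    · nlinarith [h2, h3, h1]
  · rintro ⟨ha, hb⟩
    refine posSemidef_iff_dotProduct_mulVec.mpr ⟨?_, ?_⟩
    · rw [Matrix.IsHermitian, hC, fromBlocks_conjTranspose]
      have : Aᴴ = A := by
        rw [hA]; ext i j; fin_cases i <;> fin_cases j <;>
          simp [conjTranspose_apply, Complex.ext_iff]
      rw [this]
    · intro x
      have := kossakowski_key a b ha hb (x (Sum.inl 0) + x (Sum.inr 0))
        (x (Sum.inl 1) + x (Sum.inr 1)) (x (Sum.inl 2) + x (Sum.inr 2))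
      simp only [hC, hA, dotProduct, mulVec, Fintype.sum_sum_type, Fin.sum_univ_succ,
        Fin.sum_univ_zero, fromBlocks, Pi.star_apply, RCLike.star_def] at this ⊢
      convert this using 1
      simp [Sum.elim_inl, Sum.elim_inr, Matrix.cons_val_zero, Matrix.cons_val_one]
      ring
end

section
/- Let σ be a 2×2 complex matrix with Tr σ = 0 and det σ ≠ 0. Then there exist μ ∈ ℂ and an invertible 2×2 complex matrix R with R·R = 𝟙 (so R = R⁻¹) such that σ = μ · R σ3 R and μ² = −det σ (equivalently, writing σ = Σ_k c_k σ_k, μ² = Σ_k c_k²). -/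
open Matrix

/-- The third Pauli matrix. -/
noncomputable def pauli3 : Matrix (Fin 2) (Fin 2) ℂ := !![1, 0; 0, -1]

/-- a traceless non-singular 2×2 matrix `σ` can be written as
`σ = μ • R σ3 R` with `R` an involution (`R R = 𝟙`, hence `R = R⁻¹`) and `μ² = -det σ`. -/
theorem traceless_nonsingular_normal_form
    (σ : Matrix (Fin 2) (Fin 2) ℂ) (htr : σ.trace = 0) (hdet : σ.det ≠ 0) :
    ∃ (μ : ℂ) (R : Matrix (Fin 2) (Fin 2) ℂ),
      IsUnit R ∧ R * R = 1 ∧ σ = μ • (R * pauli3 * R) ∧ μ ^ 2 = -σ.det := by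
  obtain ⟨a, ha⟩ : ∃ x, σ 0 0 = x := ⟨_, rfl⟩
  obtain ⟨b, hb⟩ : ∃ x, σ 0 1 = x := ⟨_, rfl⟩
  obtain ⟨c, hc⟩ : ∃ x, σ 1 0 = x := ⟨_, rfl⟩
  have hd : σ 1 1 = -a := by
    have := htr
    rw [Matrix.trace_fin_two, ha] at this
    linear_combination this
  have hdet' : σ.det = -a ^ 2 - b * c := by
    rw [Matrix.det_fin_two, hd, ha, hb, hc]; ring
  obtain ⟨μ0, hμ0⟩ := IsAlgClosed.exists_pow_nat_eq (a ^ 2 + b * c) zero_lt_two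
  -- choose the sign of μ so that μ + a ≠ 0
  have hcases : ∃ μ : ℂ, μ ^ 2 = a ^ 2 + b * c ∧ μ + a ≠ 0 := by
    by_cases h : μ0 = -a
    · refine ⟨a, ?_, ?_⟩
      · have : (-a) ^ 2 = a ^ 2 + b * c := by rw [← h, hμ0]
        linear_combination this
      · have hbc : b * c = 0 := by
          have : (-a) ^ 2 = a ^ 2 + b * c := by rw [← h, hμ0]
          linear_combination -this
        have ha0 : a ≠ 0 := by
          intro h0
          apply hdet
          rw [hdet', h0, hbc]; ring
        intro h0
        exact ha0 (by linear_combination h0 / 2)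
    · exact ⟨μ0, hμ0, fun h0 => h (by linear_combination h0)⟩
  obtain ⟨μ, hμ2, hμa⟩ := hcases
  have hμ0' : μ ≠ 0 := by
    intro h0
    apply hdet
    rw [hdet']
    have : (0:ℂ) = a ^ 2 + b * c := by rw [← hμ2, h0]; ring
    linear_combination this
  have hne : 2 * μ * (μ + a) ≠ 0 := by
    simp only [mul_ne_zero_iff]
    exact ⟨⟨two_ne_zero, hμ0'⟩, hμa⟩
  obtain ⟨ν, hν⟩ := IsAlgClosed.exists_pow_nat_eq (2 * μ * (μ + a))⁻¹ zero_lt_two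
  have hν' : ν ^ 2 * (2 * μ * (μ + a)) = 1 := by
    rw [hν]; field_simp
  refine ⟨μ, ν • !![a + μ, b; c, -(a + μ)], ?_, ?_, ?_, ?_⟩
  case _ =>
    -- R * R = 1 first
    have hRR : (ν • !![a + μ, b; c, -(a + μ)]) * (ν • !![a + μ, b; c, -(a + μ)]) = 1 := by
      ext i j
      fin_cases i <;> fin_cases j <;>
        simp [Matrix.mul_apply, Fin.sum_univ_two, Matrix.one_apply, ha, hb, hc, hd]
      all_goals first
        | ring1
        | linear_combination hν' - ν ^ 2 * hμ2
        | linear_combination ν ^ 2 * hμ2 - hν'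
    exact ⟨⟨_, _, hRR, hRR⟩, rfl⟩
  case _ =>
    ext i j
    fin_cases i <;> fin_cases j <;>
      simp [Matrix.mul_apply, Fin.sum_univ_two, Matrix.one_apply, ha, hb, hc, hd]
    all_goals first
      | ring1
      | linear_combination hν' - ν ^ 2 * hμ2
      | linear_combination ν ^ 2 * hμ2 - hν'
  case _ =>
    ext i j
    fin_cases i <;> fin_cases j <;>
      simp [Matrix.mul_apply, Fin.sum_univ_two, pauli3, ha, hb, hc, hd]
    all_goals first
      | ring1
      | linear_combination (-a) * hν' - μ * ν ^ 2 * hμ2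
      | linear_combination (-b) * hν'
      | linear_combination (-c) * hν'
      | linear_combination a * hν' + μ * ν ^ 2 * hμ2
      | linear_combination a * hν' - μ * ν ^ 2 * hμ2
      | linear_combination (-a) * hν' + μ * ν ^ 2 * hμ2
      | linear_combination b * hν'
      | linear_combination c * hν'
  case _ =>
    rw [hdet']
    linear_combination hμ2
end

section
/- Let R be an invertible 2×2 complex matrix with R·R = 𝟙, let μ ∈ ℂ with μ ≠ 0, and set σ = μ · R σ3 R. Then the commutant of the single 4×4 matrix 𝟙⊗σ + σ⊗𝟙, i.e. {X ∈ M₄(ℂ) : X(𝟙⊗σ + σ⊗𝟙) = (𝟙⊗σ + σ⊗𝟙)X}, equals the complex linear span of the six matrices 𝟙⊗𝟙, 𝟙⊗σ, σ⊗𝟙, σ⊗σ, Ω⁺, and (R⊗R)(σ1⊗σ2 − σ2⊗σ1)(R⊗R). -/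
open Matrix Complex
open scoped Kronecker

noncomputable section

/-- The Pauli matrices. -/
def pauli : Fin 3 → Matrix (Fin 2) (Fin 2) ℂ :=
  ![!![0, 1; 1, 0], !![0, -Complex.I; Complex.I, 0], !![1, 0; 0, -1]]

/-- `Ω⁺ = σ1⊗σ1 + σ2⊗σ2 + σ3⊗σ3`. -/
def OmegaPlus : Matrix (Fin 2 × Fin 2) (Fin 2 × Fin 2) ℂ :=
  pauli 0 ⊗ₖ pauli 0 + pauli 1 ⊗ₖ pauli 1 + pauli 2 ⊗ₖ pauli 2

abbrev MM2aux := Matrix (Fin 2) (Fin 2) ℂ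
abbrev MM4aux := Matrix (Fin 2 × Fin 2) (Fin 2 × Fin 2) ℂ

def D0aux : MM4aux := (1 : MM2aux) ⊗ₖ pauli 2 + pauli 2 ⊗ₖ (1 : MM2aux)

def S0aux : Set MM4aux :=
  {(1:MM2aux) ⊗ₖ (1:MM2aux), (1:MM2aux) ⊗ₖ pauli 2, pauli 2 ⊗ₖ (1:MM2aux),
    pauli 2 ⊗ₖ pauli 2, OmegaPlus, pauli 0 ⊗ₖ pauli 1 - pauli 1 ⊗ₖ pauli 0}

set_option maxHeartbeats 3200000 in
lemma comm_gen_aux (B : MM4aux) (hB : B ∈ S0aux) : B * D0aux = D0aux * B := by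
  simp only [S0aux, Set.mem_insert_iff, Set.mem_singleton_iff] at hB
  rcases hB with rfl | rfl | rfl | rfl | rfl | rfl <;>
    · ext ⟨i,j⟩ ⟨k,l⟩
      fin_cases i <;> fin_cases j <;> fin_cases k <;> fin_cases l <;>
        (try simp [D0aux, OmegaPlus, pauli, Matrix.mul_apply, Fintype.sum_prod_type,
          Fin.sum_univ_succ, Matrix.kroneckerMap_apply, Matrix.one_apply]) <;>
        (try ring) <;> (try decide)

set_option maxHeartbeats 3200000 in
lemma key_aux (Y : MM4aux) : Y * D0aux = D0aux * Y ↔ Y ∈ Submodule.span ℂ S0aux := by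
  constructor
  · intro hY
    have h : ∀ a b : Fin 2 × Fin 2, (Y * D0aux) a b = (D0aux * Y) a b :=
      fun a b => congrFun (congrFun hY a) b
    have z1 := h (0,0) (0,1); have z2 := h (0,0) (1,0); have z3 := h (0,0) (1,1)
    have z4 := h (0,1) (0,0); have z5 := h (1,0) (0,0); have z6 := h (1,1) (0,0)
    have z7 := h (0,1) (1,1); have z8 := h (1,0) (1,1); have z9 := h (1,1) (0,1)
    have z10 := h (1,1) (1,0)
    simp [D0aux, Matrix.mul_apply, Fintype.sum_prod_type, Fin.sum_univ_succ,
      Matrix.kroneckerMap_apply, pauli, Matrix.one_apply] at z1 z2 z3 z4 z5 z6 z7 z8 z9 z10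
    have z3' : Y (0,0) (1,1) = 0 := by linear_combination -z3/4
    have z6' : Y (1,1) (0,0) = 0 := by linear_combination z6/4
    have hrep : Y =
      (((Y (0,0) (0,0) - ((Y (0,1) (1,0) + Y (1,0) (0,1)) / 4)) + (Y (0,1) (0,1) + ((Y (0,1) (1,0) + Y (1,0) (0,1)) / 4)) + (Y (1,0) (1,0) + ((Y (0,1) (1,0) + Y (1,0) (0,1)) / 4)) + (Y (1,1) (1,1) - ((Y (0,1) (1,0) + Y (1,0) (0,1)) / 4))) / 4) • ((1:MM2aux) ⊗ₖ (1:MM2aux))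
      + (((Y (0,0) (0,0) - ((Y (0,1) (1,0) + Y (1,0) (0,1)) / 4)) - (Y (0,1) (0,1) + ((Y (0,1) (1,0) + Y (1,0) (0,1)) / 4)) + (Y (1,0) (1,0) + ((Y (0,1) (1,0) + Y (1,0) (0,1)) / 4)) - (Y (1,1) (1,1) - ((Y (0,1) (1,0) + Y (1,0) (0,1)) / 4))) / 4) • ((1:MM2aux) ⊗ₖ pauli 2)
      + (((Y (0,0) (0,0) - ((Y (0,1) (1,0) + Y (1,0) (0,1)) / 4)) + (Y (0,1) (0,1) + ((Y (0,1) (1,0) + Y (1,0) (0,1)) / 4)) - (Y (1,0) (1,0) + ((Y (0,1) (1,0) + Y (1,0) (0,1)) / 4)) - (Y (1,1) (1,1) - ((Y (0,1) (1,0) + Y (1,0) (0,1)) / 4))) / 4) • (pauli 2 ⊗ₖ (1:MM2aux))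
      + (((Y (0,0) (0,0) - ((Y (0,1) (1,0) + Y (1,0) (0,1)) / 4)) - (Y (0,1) (0,1) + ((Y (0,1) (1,0) + Y (1,0) (0,1)) / 4)) - (Y (1,0) (1,0) + ((Y (0,1) (1,0) + Y (1,0) (0,1)) / 4)) + (Y (1,1) (1,1) - ((Y (0,1) (1,0) + Y (1,0) (0,1)) / 4))) / 4) • (pauli 2 ⊗ₖ pauli 2)
      + ((Y (0,1) (1,0) + Y (1,0) (0,1)) / 4) • OmegaPlus
      + ((-Complex.I * (Y (0,1) (1,0) - Y (1,0) (0,1))) / 4) • (pauli 0 ⊗ₖ pauli 1 - pauli 1 ⊗ₖ pauli 0) := by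
      ext ⟨i,j⟩ ⟨k,l⟩
      fin_cases i <;> fin_cases j <;> fin_cases k <;> fin_cases l <;>
        (try simp only [OmegaPlus, pauli, Matrix.add_apply, Matrix.sub_apply, Matrix.smul_apply,
          Matrix.kroneckerMap_apply, Matrix.one_apply, Matrix.cons_val', Matrix.cons_val_zero,
          Matrix.cons_val_one, Matrix.head_cons, Matrix.head_fin_const, Matrix.cons_val_fin_one,
          Matrix.of_apply, Fin.isValue, smul_eq_mul, mul_zero, zero_mul, mul_one, one_mul,
          add_zero, zero_add, neg_zero, Matrix.cons_val, z1, z2, z3', z4, z5, z6', z7, z8, z9, z10]) <;>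
        (try norm_num) <;> (try ring_nf) <;> (try simp only [Complex.I_sq]) <;>
        (try (first | ring | assumption))
      all_goals assumption
    rw [hrep]
    refine Submodule.add_mem _ (Submodule.add_mem _ (Submodule.add_mem _ (Submodule.add_mem _
      (Submodule.add_mem _ ?_ ?_) ?_) ?_) ?_) ?_ <;>
      exact Submodule.smul_mem _ _ (Submodule.subset_span (by simp [S0aux]))
  · intro hY
    induction hY using Submodule.span_induction with
    | mem x hx => exact comm_gen_aux x hx
    | zero => simp
    | add x y _ _ hx hy => rw [Matrix.add_mul, Matrix.mul_add, hx, hy]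
    | smul c x _ hx => rw [Matrix.smul_mul, Matrix.mul_smul, hx]

lemma conj_impl_aux (T M X : MM4aux) (hT : T * T = 1)
    (h : X * (T * M * T) = (T * M * T) * X) : (T * X * T) * M = M * (T * X * T) := by
  simp only [← Matrix.mul_assoc] at h
  have h1 := congrArg (fun Z => T * Z) h
  simp only [← Matrix.mul_assoc] at h1
  rw [hT, Matrix.one_mul] at h1
  have h2 := congrArg (fun Z => Z * T) h1
  rw [Matrix.mul_assoc (T * X * T * M) T T, hT, Matrix.mul_one] at h2
  simpa only [Matrix.mul_assoc] using h2

set_option maxHeartbeats 3200000 in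
lemma omega_swap_aux (R : MM2aux) : (R ⊗ₖ R) * OmegaPlus = OmegaPlus * (R ⊗ₖ R) := by
  ext ⟨i,j⟩ ⟨k,l⟩
  fin_cases i <;> fin_cases j <;> fin_cases k <;> fin_cases l <;>
    (try simp [OmegaPlus, pauli, Matrix.mul_apply, Matrix.kroneckerMap_apply,
      Fintype.sum_prod_type, Fin.sum_univ_succ, Matrix.one_apply]) <;> (try ring)

/-- conjugation by `T` as a linear map -/
def conjMapAux (T : MM4aux) : MM4aux →ₗ[ℂ] MM4aux where
  toFun X := T * X * T
  map_add' X Y := by rw [Matrix.mul_add, Matrix.add_mul]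
  map_smul' c X := by rw [Matrix.mul_smul, Matrix.smul_mul]; rfl

/-- for `σ = μ • R σ3 R` with `R` an invertible involution and `μ ≠ 0`, the
commutant of `𝟙⊗σ + σ⊗𝟙` is the span of the six matrices
`𝟙⊗𝟙, 𝟙⊗σ, σ⊗𝟙, σ⊗σ, Ω⁺, (R⊗R)(σ1⊗σ2 - σ2⊗σ1)(R⊗R)`. -/
theorem commutant_symmetric_V
    (R : Matrix (Fin 2) (Fin 2) ℂ) (hR_unit : IsUnit R) (hR : R * R = 1)
    (μ : ℂ) (hμ : μ ≠ 0)
    (σ : Matrix (Fin 2) (Fin 2) ℂ) (hσ : σ = μ • (R * pauli 2 * R)) :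
    {X : Matrix (Fin 2 × Fin 2) (Fin 2 × Fin 2) ℂ |
        X * ((1 : Matrix (Fin 2) (Fin 2) ℂ) ⊗ₖ σ + σ ⊗ₖ (1 : Matrix (Fin 2) (Fin 2) ℂ))
          = ((1 : Matrix (Fin 2) (Fin 2) ℂ) ⊗ₖ σ + σ ⊗ₖ (1 : Matrix (Fin 2) (Fin 2) ℂ)) * X}
      = (Submodule.span ℂ
          {(1 : Matrix (Fin 2) (Fin 2) ℂ) ⊗ₖ (1 : Matrix (Fin 2) (Fin 2) ℂ),
            (1 : Matrix (Fin 2) (Fin 2) ℂ) ⊗ₖ σ,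
            σ ⊗ₖ (1 : Matrix (Fin 2) (Fin 2) ℂ),
            σ ⊗ₖ σ,
            OmegaPlus,
            (R ⊗ₖ R) * (pauli 0 ⊗ₖ pauli 1 - pauli 1 ⊗ₖ pauli 0) * (R ⊗ₖ R)}
          : Set (Matrix (Fin 2 × Fin 2) (Fin 2 × Fin 2) ℂ)) := by
  set T : MM4aux := R ⊗ₖ R with hTdef
  have hT : T * T = 1 := by
    rw [hTdef, ← Matrix.mul_kronecker_mul, hR, Matrix.one_kronecker_one]
  have hff : ∀ Z : MM4aux, T * (T * Z * T) * T = Z := by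
    intro Z
    simp only [← Matrix.mul_assoc]
    rw [hT, Matrix.one_mul, Matrix.mul_assoc Z T T, hT, Matrix.mul_one]
  have e : ∀ M N : MM2aux, T * (M ⊗ₖ N) * T = (R * M * R) ⊗ₖ (R * N * R) := by
    intro M N
    rw [Matrix.mul_kronecker_mul, Matrix.mul_kronecker_mul, ← hTdef]
  have hN : R * pauli 2 * R = μ⁻¹ • σ := by
    rw [hσ, smul_smul, inv_mul_cancel₀ hμ, one_smul]
  have hA : (1 : MM2aux) ⊗ₖ σ + σ ⊗ₖ (1 : MM2aux) = μ • (T * D0aux * T) := by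
    have hD : T * D0aux * T
        = (1:MM2aux) ⊗ₖ (R * pauli 2 * R) + (R * pauli 2 * R) ⊗ₖ (1:MM2aux) := by
      rw [D0aux, Matrix.mul_add, Matrix.add_mul, e, e, Matrix.mul_one, hR]
    rw [hD, hN, Matrix.kronecker_smul, Matrix.smul_kronecker, ← smul_add, smul_smul,
      mul_inv_cancel₀ hμ, one_smul]
  have homega : T * OmegaPlus * T = OmegaPlus := by
    rw [hTdef, omega_swap_aux R, Matrix.mul_assoc, ← Matrix.mul_kronecker_mul, hR,
      Matrix.one_kronecker_one, Matrix.mul_one]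
  have hone : T * ((1:MM2aux) ⊗ₖ (1:MM2aux)) * T = (1:MM2aux) ⊗ₖ (1:MM2aux) := by
    rw [e, Matrix.mul_one, hR]
  have hspan : Submodule.span ℂ
      {(1 : MM2aux) ⊗ₖ (1 : MM2aux), (1 : MM2aux) ⊗ₖ σ, σ ⊗ₖ (1 : MM2aux), σ ⊗ₖ σ,
        OmegaPlus, T * (pauli 0 ⊗ₖ pauli 1 - pauli 1 ⊗ₖ pauli 0) * T}
      = Submodule.map (conjMapAux T) (Submodule.span ℂ S0aux) := by
    rw [Submodule.map_span]
    apply le_antisymm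
    · rw [Submodule.span_le]
      intro x hx
      simp only [Set.mem_insert_iff, Set.mem_singleton_iff] at hx
      have himg : ∀ b ∈ S0aux, T * b * T ∈
          Submodule.span ℂ ((conjMapAux T) '' S0aux) :=
        fun b hb => Submodule.subset_span ⟨b, hb, rfl⟩
      rcases hx with rfl | rfl | rfl | rfl | rfl | rfl
      · have := himg ((1:MM2aux) ⊗ₖ (1:MM2aux)) (by simp [S0aux])
        rwa [hone] at this
      · have := himg ((1:MM2aux) ⊗ₖ pauli 2) (by simp [S0aux])
        have h2 := Submodule.smul_mem _ μ this
        rwa [e, Matrix.mul_one, hR, hN, Matrix.kronecker_smul, smul_smul,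
          mul_inv_cancel₀ hμ, one_smul] at h2
      · have := himg (pauli 2 ⊗ₖ (1:MM2aux)) (by simp [S0aux])
        have h2 := Submodule.smul_mem _ μ this
        rwa [e, Matrix.mul_one, hR, hN, Matrix.smul_kronecker, smul_smul,
          mul_inv_cancel₀ hμ, one_smul] at h2
      · have := himg (pauli 2 ⊗ₖ pauli 2) (by simp [S0aux])
        have h2 := Submodule.smul_mem _ (μ * μ) this
        rwa [e, hN, Matrix.kronecker_smul, Matrix.smul_kronecker, smul_smul, smul_smul,
          show μ * μ * μ⁻¹ * μ⁻¹ = 1 by field_simp, one_smul] at h2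
      · have := himg OmegaPlus (by simp [S0aux])
        rwa [homega] at this
      · exact himg (pauli 0 ⊗ₖ pauli 1 - pauli 1 ⊗ₖ pauli 0) (by simp [S0aux])
    · rw [Submodule.span_le]
      rintro x ⟨b, hb, rfl⟩
      simp only [S0aux, Set.mem_insert_iff, Set.mem_singleton_iff] at hb
      have hsub : ∀ y ∈ ({(1 : MM2aux) ⊗ₖ (1 : MM2aux), (1 : MM2aux) ⊗ₖ σ,
          σ ⊗ₖ (1 : MM2aux), σ ⊗ₖ σ, OmegaPlus,
          T * (pauli 0 ⊗ₖ pauli 1 - pauli 1 ⊗ₖ pauli 0) * T} : Set MM4aux),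
          y ∈ Submodule.span ℂ ({(1 : MM2aux) ⊗ₖ (1 : MM2aux), (1 : MM2aux) ⊗ₖ σ,
          σ ⊗ₖ (1 : MM2aux), σ ⊗ₖ σ, OmegaPlus,
          T * (pauli 0 ⊗ₖ pauli 1 - pauli 1 ⊗ₖ pauli 0) * T} : Set MM4aux) :=
        fun y hy => Submodule.subset_span hy
      have hf : ∀ b : MM4aux, (conjMapAux T) b = T * b * T := fun _ => rfl
      rcases hb with rfl | rfl | rfl | rfl | rfl | rfl <;> rw [hf]
      · rw [hone]; exact hsub _ (by simp)
      · rw [e, Matrix.mul_one, hR, hN, Matrix.kronecker_smul]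
        exact Submodule.smul_mem _ _ (hsub _ (by simp))
      · rw [e, Matrix.mul_one, hR, hN, Matrix.smul_kronecker]
        exact Submodule.smul_mem _ _ (hsub _ (by simp))
      · rw [e, hN, Matrix.kronecker_smul, Matrix.smul_kronecker, smul_smul]
        exact Submodule.smul_mem _ _ (hsub _ (by simp))
      · rw [homega]; exact hsub _ (by simp)
      · exact hsub _ (by simp)
  ext X
  simp only [Set.mem_setOf_eq, SetLike.mem_coe]
  rw [hA]
  constructor
  · intro hx
    have hx' : X * (T * D0aux * T) = (T * D0aux * T) * X := by
      rw [Matrix.mul_smul, Matrix.smul_mul] at hx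
      exact smul_right_injective _ hμ hx
    have hc : (T * X * T) * D0aux = D0aux * (T * X * T) := conj_impl_aux T D0aux X hT hx'
    have hm : T * X * T ∈ Submodule.span ℂ S0aux := (key_aux _).mp hc
    rw [hspan]
    exact ⟨T * X * T, hm, hff X⟩
  · intro hx
    rw [hspan] at hx
    obtain ⟨y, hy, hyX⟩ := hx
    have hfy : T * y * T = X := hyX
    have hc : y * D0aux = D0aux * y := (key_aux _).mpr hy
    have hy2 : y * (T * (T * D0aux * T) * T) = (T * (T * D0aux * T) * T) * y := by
      rw [hff]; exact hc
    have hc2 := conj_impl_aux T (T * D0aux * T) y hT hy2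
    rw [hfy] at hc2
    rw [Matrix.mul_smul, Matrix.smul_mul, hc2]

end
end

section
/- Let S be an invertible 2×2 complex matrix with S·S = 𝟙, let μ ∈ ℂ with μ ≠ 0, and set σ = μ · S σ3 S. Then the commutant of the single 4×4 matrix 𝟙⊗σ − σ⊗𝟙, i.e. {X ∈ M₄(ℂ) : X(𝟙⊗σ − σ⊗𝟙) = (𝟙⊗σ − σ⊗𝟙)X}, equals the complex linear span of the six matrices 𝟙⊗𝟙, 𝟙⊗σ, σ⊗𝟙, σ⊗σ, (S⊗S)(σ1⊗σ1 − σ2⊗σ2)(S⊗S), and (S⊗S)(σ1⊗σ2 + σ2⊗σ1)(S⊗S). -/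
open Matrix Complex
open scoped Kronecker

noncomputable section

abbrev MyM4 := Matrix (Fin 2 × Fin 2) (Fin 2 × Fin 2) ℂ

def dfun : Fin 2 × Fin 2 → ℂ := fun p => !![0, -2; 2, 0] p.1 p.2

def Dm : MyM4 := (1 : Matrix (Fin 2) (Fin 2) ℂ) ⊗ₖ pauli 2 - pauli 2 ⊗ₖ (1 : Matrix (Fin 2) (Fin 2) ℂ)

lemma Dm_def : Dm = (1 : Matrix (Fin 2) (Fin 2) ℂ) ⊗ₖ pauli 2 - pauli 2 ⊗ₖ (1 : Matrix (Fin 2) (Fin 2) ℂ) := rfl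

lemma hDm : Dm = Matrix.diagonal dfun := by
  ext a b
  fin_cases a <;> fin_cases b <;>
    simp [Dm, pauli, dfun, Matrix.diagonal, Matrix.one_apply] <;> norm_num

def modelSet : Set MyM4 :=
  {(1 : Matrix (Fin 2) (Fin 2) ℂ) ⊗ₖ (1 : Matrix (Fin 2) (Fin 2) ℂ),
    (1 : Matrix (Fin 2) (Fin 2) ℂ) ⊗ₖ pauli 2,
    pauli 2 ⊗ₖ (1 : Matrix (Fin 2) (Fin 2) ℂ),
    pauli 2 ⊗ₖ pauli 2,
    pauli 0 ⊗ₖ pauli 0 - pauli 1 ⊗ₖ pauli 1,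
    pauli 0 ⊗ₖ pauli 1 + pauli 1 ⊗ₖ pauli 0}

def commDm : Submodule ℂ MyM4 where
  carrier := {Y : MyM4 | Y * Dm = Dm * Y}
  add_mem' := by
    intro a b ha hb
    simp only [Set.mem_setOf_eq] at *
    rw [Matrix.add_mul, Matrix.mul_add, ha, hb]
  zero_mem' := by simp [Set.mem_setOf_eq]
  smul_mem' := by
    intro c a ha
    simp only [Set.mem_setOf_eq] at *
    rw [Matrix.smul_mul, Matrix.mul_smul, ha]

lemma comm1 : ((1 : Matrix (Fin 2) (Fin 2) ℂ) ⊗ₖ (1 : Matrix (Fin 2) (Fin 2) ℂ) : MyM4) * Dm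
    = Dm * ((1 : Matrix (Fin 2) (Fin 2) ℂ) ⊗ₖ (1 : Matrix (Fin 2) (Fin 2) ℂ)) := by
  rw [hDm]; ext a b
  rw [Matrix.mul_diagonal, Matrix.diagonal_mul]
  fin_cases a <;> fin_cases b <;> simp [pauli, dfun, Matrix.one_apply] <;> ring

lemma comm2 : ((1 : Matrix (Fin 2) (Fin 2) ℂ) ⊗ₖ pauli 2 : MyM4) * Dm
    = Dm * ((1 : Matrix (Fin 2) (Fin 2) ℂ) ⊗ₖ pauli 2) := by
  rw [hDm]; ext a b
  rw [Matrix.mul_diagonal, Matrix.diagonal_mul]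
  fin_cases a <;> fin_cases b <;> simp [pauli, dfun, Matrix.one_apply] <;> ring

lemma comm3 : (pauli 2 ⊗ₖ (1 : Matrix (Fin 2) (Fin 2) ℂ) : MyM4) * Dm
    = Dm * (pauli 2 ⊗ₖ (1 : Matrix (Fin 2) (Fin 2) ℂ)) := by
  rw [hDm]; ext a b
  rw [Matrix.mul_diagonal, Matrix.diagonal_mul]
  fin_cases a <;> fin_cases b <;> simp [pauli, dfun, Matrix.one_apply] <;> ring

lemma comm4 : (pauli 2 ⊗ₖ pauli 2 : MyM4) * Dm = Dm * (pauli 2 ⊗ₖ pauli 2) := by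
  rw [hDm]; ext a b
  rw [Matrix.mul_diagonal, Matrix.diagonal_mul]
  fin_cases a <;> fin_cases b <;> simp [pauli, dfun, Matrix.one_apply] <;> ring

lemma comm5 : (pauli 0 ⊗ₖ pauli 0 - pauli 1 ⊗ₖ pauli 1 : MyM4) * Dm
    = Dm * (pauli 0 ⊗ₖ pauli 0 - pauli 1 ⊗ₖ pauli 1) := by
  rw [hDm]; ext a b
  rw [Matrix.mul_diagonal, Matrix.diagonal_mul]
  fin_cases a <;> fin_cases b <;> simp [pauli, dfun, Matrix.one_apply] <;> ring

lemma comm6 : (pauli 0 ⊗ₖ pauli 1 + pauli 1 ⊗ₖ pauli 0 : MyM4) * Dm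
    = Dm * (pauli 0 ⊗ₖ pauli 1 + pauli 1 ⊗ₖ pauli 0) := by
  rw [hDm]; ext a b
  rw [Matrix.mul_diagonal, Matrix.diagonal_mul]
  fin_cases a <;> fin_cases b <;> simp [pauli, dfun, Matrix.one_apply] <;> ring

lemma model (Y : MyM4) : Y * Dm = Dm * Y ↔ Y ∈ Submodule.span ℂ modelSet := by
  constructor
  · intro hY
    rw [hDm] at hY
    have key : ∀ a b : Fin 2 × Fin 2, Y a b * dfun b = dfun a * Y a b := fun a b => by
      have := congrFun (congrFun hY a) b
      simpa [Matrix.mul_diagonal, Matrix.diagonal_mul] using this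
    have h1 : Y 0 (0,1) = 0 := by have t := key (0,0) (0,1); simp [dfun] at t; exact t
    have h2 : Y 0 (1,0) = 0 := by have t := key (0,0) (1,0); simp [dfun] at t; exact t
    have h3 : Y (0,1) 0 = 0 := by have t := key (0,1) (0,0); simp [dfun] at t; exact t
    have h4 : Y (0,1) (1,0) = 0 := by have t := key (0,1) (1,0); simp [dfun] at t; linear_combination t/4
    have h5 : Y (0,1) 1 = 0 := by have t := key (0,1) (1,1); simp [dfun] at t; exact t
    have h6 : Y (1,0) 0 = 0 := by have t := key (1,0) (0,0); simp [dfun] at t; exact t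
    have h7 : Y (1,0) (0,1) = 0 := by have t := key (1,0) (0,1); simp [dfun] at t; linear_combination -t/4
    have h8 : Y (1,0) 1 = 0 := by have t := key (1,0) (1,1); simp [dfun] at t; exact t
    have h9 : Y 1 (0,1) = 0 := by have t := key (1,1) (0,1); simp [dfun] at t; exact t
    have h10 : Y 1 (1,0) = 0 := by have t := key (1,1) (1,0); simp [dfun] at t; exact t
    have hcombo : Y = ((Y 0 0 + Y (0,1) (0,1) + Y (1,0) (1,0) + Y 1 1)/4) •
          ((1 : Matrix (Fin 2) (Fin 2) ℂ) ⊗ₖ (1 : Matrix (Fin 2) (Fin 2) ℂ))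
      + ((Y 0 0 - Y (0,1) (0,1) + Y (1,0) (1,0) - Y 1 1)/4) •
          ((1 : Matrix (Fin 2) (Fin 2) ℂ) ⊗ₖ pauli 2)
      + ((Y 0 0 + Y (0,1) (0,1) - Y (1,0) (1,0) - Y 1 1)/4) •
          (pauli 2 ⊗ₖ (1 : Matrix (Fin 2) (Fin 2) ℂ))
      + ((Y 0 0 - Y (0,1) (0,1) - Y (1,0) (1,0) + Y 1 1)/4) •
          (pauli 2 ⊗ₖ pauli 2)
      + ((Y 0 1 + Y 1 0)/4) • (pauli 0 ⊗ₖ pauli 0 - pauli 1 ⊗ₖ pauli 1)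
      + ((Y 0 1 - Y 1 0) * Complex.I /4) • (pauli 0 ⊗ₖ pauli 1 + pauli 1 ⊗ₖ pauli 0) := by
      ext a b
      fin_cases a <;> fin_cases b <;>
        simp [pauli, Matrix.one_apply, Prod.ext_iff, h1,h2,h3,h4,h5,h6,h7,h8,h9,h10] <;>
        ring_nf <;> simp [Complex.I_sq, Prod.mk_zero_zero, Prod.mk_one_one, h1,h2,h3,h4,h5,h6,h7,h8,h9,h10] <;> ring
    rw [hcombo]
    refine Submodule.add_mem _ (Submodule.add_mem _ (Submodule.add_mem _ (Submodule.add_mem _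
      (Submodule.add_mem _ (Submodule.smul_mem _ _ ?_) (Submodule.smul_mem _ _ ?_))
      (Submodule.smul_mem _ _ ?_)) (Submodule.smul_mem _ _ ?_)) (Submodule.smul_mem _ _ ?_))
      (Submodule.smul_mem _ _ ?_) <;>
      exact Submodule.subset_span (by simp [modelSet])
  · intro hY
    have hle : Submodule.span ℂ modelSet ≤ commDm := by
      rw [Submodule.span_le]
      intro x hx
      simp only [modelSet, Set.mem_insert_iff, Set.mem_singleton_iff] at hx
      have : x * Dm = Dm * x := by
        rcases hx with rfl|rfl|rfl|rfl|rfl|rfl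
        exacts [comm1, comm2, comm3, comm4, comm5, comm6]
      exact this
    exact hle hY

def conjL (T : MyM4) : MyM4 →ₗ[ℂ] MyM4 where
  toFun X := T * X * T
  map_add' X Y := by simp [Matrix.mul_add, Matrix.add_mul]
  map_smul' c X := by simp [Matrix.mul_smul, Matrix.smul_mul]

/-- for `σ = μ • S σ3 S` with `S` an invertible involution and `μ ≠ 0`, the
commutant of `𝟙⊗σ - σ⊗𝟙` is the span of the six matrices
`𝟙⊗𝟙, 𝟙⊗σ, σ⊗𝟙, σ⊗σ, (S⊗S)(σ1⊗σ1 - σ2⊗σ2)(S⊗S), (S⊗S)(σ1⊗σ2 + σ2⊗σ1)(S⊗S)`. -/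
theorem commutant_antisymmetric_V
    (S : Matrix (Fin 2) (Fin 2) ℂ) (hS_unit : IsUnit S) (hS : S * S = 1)
    (μ : ℂ) (hμ : μ ≠ 0)
    (σ : Matrix (Fin 2) (Fin 2) ℂ) (hσ : σ = μ • (S * pauli 2 * S)) :
    {X : Matrix (Fin 2 × Fin 2) (Fin 2 × Fin 2) ℂ |
        X * ((1 : Matrix (Fin 2) (Fin 2) ℂ) ⊗ₖ σ - σ ⊗ₖ (1 : Matrix (Fin 2) (Fin 2) ℂ))
          = ((1 : Matrix (Fin 2) (Fin 2) ℂ) ⊗ₖ σ - σ ⊗ₖ (1 : Matrix (Fin 2) (Fin 2) ℂ)) * X}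
      = (Submodule.span ℂ
          {(1 : Matrix (Fin 2) (Fin 2) ℂ) ⊗ₖ (1 : Matrix (Fin 2) (Fin 2) ℂ),
            (1 : Matrix (Fin 2) (Fin 2) ℂ) ⊗ₖ σ,
            σ ⊗ₖ (1 : Matrix (Fin 2) (Fin 2) ℂ),
            σ ⊗ₖ σ,
            (S ⊗ₖ S) * (pauli 0 ⊗ₖ pauli 0 - pauli 1 ⊗ₖ pauli 1) * (S ⊗ₖ S),
            (S ⊗ₖ S) * (pauli 0 ⊗ₖ pauli 1 + pauli 1 ⊗ₖ pauli 0) * (S ⊗ₖ S)}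
          : Set (Matrix (Fin 2 × Fin 2) (Fin 2 × Fin 2) ℂ)) := by
  set T : MyM4 := S ⊗ₖ S with hTdef
  set A : MyM4 := (1 : Matrix (Fin 2) (Fin 2) ℂ) ⊗ₖ σ - σ ⊗ₖ (1 : Matrix (Fin 2) (Fin 2) ℂ)
    with hAdef
  have hT : T * T = 1 := by
    rw [hTdef, ← Matrix.mul_kronecker_mul, hS, Matrix.one_kronecker_one]
  have hfdef : ∀ X : MyM4, conjL T X = T * X * T := fun _ => rfl
  have hinv : Function.Involutive (conjL T) := by
    intro X
    rw [hfdef, hfdef]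
    calc T * (T * X * T) * T = (T * T) * X * (T * T) := by noncomm_ring
    _ = X := by rw [hT, Matrix.one_mul, Matrix.mul_one]
  have hfmul : ∀ P Q : MyM4, conjL T (P * Q) = conjL T P * conjL T Q := by
    intro P Q
    rw [hfdef, hfdef, hfdef]
    calc T * (P * Q) * T = T * P * 1 * (Q * T) := by noncomm_ring
    _ = T * P * (T * T) * (Q * T) := by rw [hT]
    _ = (T * P * T) * (T * Q * T) := by noncomm_ring
  have hker : ∀ P Q : Matrix (Fin 2) (Fin 2) ℂ,
      conjL T (P ⊗ₖ Q) = (S * P * S) ⊗ₖ (S * Q * S) := by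
    intro P Q
    rw [hfdef, hTdef, ← Matrix.mul_kronecker_mul, ← Matrix.mul_kronecker_mul]
  have hS1S : S * (1 : Matrix (Fin 2) (Fin 2) ℂ) * S = 1 := by rw [Matrix.mul_one, hS]
  have hSσS : S * σ * S = μ • pauli 2 := by
    rw [hσ, Matrix.mul_smul, Matrix.smul_mul]
    congr 1
    calc S * (S * pauli 2 * S) * S = (S * S) * pauli 2 * (S * S) := by noncomm_ring
    _ = pauli 2 := by rw [hS, Matrix.one_mul, Matrix.mul_one]
  have hSσ3S : S * pauli 2 * S = μ⁻¹ • σ := by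
    rw [hσ, smul_smul, inv_mul_cancel₀ hμ, one_smul]
  -- conjugates of the statement generators
  have hc1 : conjL T ((1 : Matrix (Fin 2) (Fin 2) ℂ) ⊗ₖ σ)
      = μ • ((1 : Matrix (Fin 2) (Fin 2) ℂ) ⊗ₖ pauli 2) := by
    rw [hker, hS1S, hSσS, Matrix.kronecker_smul]
  have hc2 : conjL T (σ ⊗ₖ (1 : Matrix (Fin 2) (Fin 2) ℂ))
      = μ • (pauli 2 ⊗ₖ (1 : Matrix (Fin 2) (Fin 2) ℂ)) := by
    rw [hker, hS1S, hSσS, Matrix.smul_kronecker]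
  -- conjugates of the model generators
  have w1 : conjL T ((1 : Matrix (Fin 2) (Fin 2) ℂ) ⊗ₖ (1 : Matrix (Fin 2) (Fin 2) ℂ))
      = (1 : Matrix (Fin 2) (Fin 2) ℂ) ⊗ₖ (1 : Matrix (Fin 2) (Fin 2) ℂ) := by
    rw [hker, hS1S]
  have w2 : conjL T ((1 : Matrix (Fin 2) (Fin 2) ℂ) ⊗ₖ pauli 2)
      = μ⁻¹ • ((1 : Matrix (Fin 2) (Fin 2) ℂ) ⊗ₖ σ) := by
    rw [hker, hS1S, hSσ3S, Matrix.kronecker_smul]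
  have w3 : conjL T (pauli 2 ⊗ₖ (1 : Matrix (Fin 2) (Fin 2) ℂ))
      = μ⁻¹ • (σ ⊗ₖ (1 : Matrix (Fin 2) (Fin 2) ℂ)) := by
    rw [hker, hS1S, hSσ3S, Matrix.smul_kronecker]
  have w4 : conjL T (pauli 2 ⊗ₖ pauli 2) = (μ⁻¹ * μ⁻¹) • (σ ⊗ₖ σ) := by
    rw [hker, hSσ3S, Matrix.smul_kronecker, Matrix.kronecker_smul, smul_smul]
  have hfA : conjL T A = μ • Dm := by
    rw [hAdef, map_sub, hc1, hc2, ← smul_sub, Dm_def]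
  have hstep : ∀ X : MyM4, (X * A = A * X) ↔ (conjL T X * Dm = Dm * conjL T X) := by
    intro X
    constructor
    · intro h
      have h2 : conjL T X * (μ • Dm) = (μ • Dm) * conjL T X := by
        rw [← hfA, ← hfmul, ← hfmul, h]
      have h3 := congrArg (fun M : MyM4 => μ⁻¹ • M) h2
      simpa [Matrix.mul_smul, Matrix.smul_mul, smul_smul, inv_mul_cancel₀ hμ] using h3
    · intro h
      have h2 : conjL T (X * A) = conjL T (A * X) := by
        rw [hfmul, hfmul, hfA, Matrix.mul_smul, Matrix.smul_mul, h]
      exact hinv.injective h2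
  have hmem : ∀ (p : Submodule ℂ MyM4) (X : MyM4),
      conjL T X ∈ p ↔ X ∈ Submodule.map (conjL T) p := by
    intro p X
    constructor
    · intro h; exact ⟨conjL T X, h, hinv X⟩
    · rintro ⟨w, hw, rfl⟩; rw [hinv w]; exact hw
  have hspan : Submodule.span ℂ ((conjL T) '' modelSet)
      = Submodule.span ℂ
          {(1 : Matrix (Fin 2) (Fin 2) ℂ) ⊗ₖ (1 : Matrix (Fin 2) (Fin 2) ℂ),
            (1 : Matrix (Fin 2) (Fin 2) ℂ) ⊗ₖ σ,
            σ ⊗ₖ (1 : Matrix (Fin 2) (Fin 2) ℂ),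
            σ ⊗ₖ σ,
            T * (pauli 0 ⊗ₖ pauli 0 - pauli 1 ⊗ₖ pauli 1) * T,
            T * (pauli 0 ⊗ₖ pauli 1 + pauli 1 ⊗ₖ pauli 0) * T} := by
    apply le_antisymm
    · rw [Submodule.span_le]
      rintro x ⟨G, hG, rfl⟩
      simp only [modelSet, Set.mem_insert_iff, Set.mem_singleton_iff] at hG
      rcases hG with rfl|rfl|rfl|rfl|rfl|rfl
      · rw [w1]; exact Submodule.subset_span (by simp)
      · rw [w2]; exact Submodule.smul_mem _ _ (Submodule.subset_span (by simp))
      · rw [w3]; exact Submodule.smul_mem _ _ (Submodule.subset_span (by simp))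
      · rw [w4]; exact Submodule.smul_mem _ _ (Submodule.subset_span (by simp))
      · rw [hfdef]; exact Submodule.subset_span (by simp)
      · rw [hfdef]; exact Submodule.subset_span (by simp)
    · rw [Submodule.span_le]
      intro x hx
      simp only [Set.mem_insert_iff, Set.mem_singleton_iff] at hx
      rcases hx with rfl|rfl|rfl|rfl|rfl|rfl
      · exact Submodule.subset_span ⟨_, by simp [modelSet], w1⟩
      · have hx1 : (1 : Matrix (Fin 2) (Fin 2) ℂ) ⊗ₖ σ
            = μ • conjL T ((1 : Matrix (Fin 2) (Fin 2) ℂ) ⊗ₖ pauli 2) := by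
          rw [w2, smul_smul, mul_inv_cancel₀ hμ, one_smul]
        rw [hx1]
        exact Submodule.smul_mem _ _ (Submodule.subset_span ⟨_, by simp [modelSet], rfl⟩)
      · have hx1 : σ ⊗ₖ (1 : Matrix (Fin 2) (Fin 2) ℂ)
            = μ • conjL T (pauli 2 ⊗ₖ (1 : Matrix (Fin 2) (Fin 2) ℂ)) := by
          rw [w3, smul_smul, mul_inv_cancel₀ hμ, one_smul]
        rw [hx1]
        exact Submodule.smul_mem _ _ (Submodule.subset_span ⟨_, by simp [modelSet], rfl⟩)
      · have hx1 : σ ⊗ₖ σ = (μ * μ) • conjL T (pauli 2 ⊗ₖ pauli 2) := by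
          rw [w4, smul_smul, show (μ * μ) * (μ⁻¹ * μ⁻¹) = 1 by field_simp, one_smul]
        rw [hx1]
        exact Submodule.smul_mem _ _ (Submodule.subset_span ⟨_, by simp [modelSet], rfl⟩)
      · exact Submodule.subset_span ⟨_, by simp [modelSet], rfl⟩
      · exact Submodule.subset_span ⟨_, by simp [modelSet], rfl⟩
  ext X
  simp only [Set.mem_setOf_eq, SetLike.mem_coe]
  rw [hstep X, model, hmem, Submodule.map_span, hspan]

end
end

section
/- Let R be an invertible 2×2 complex matrix with R·R = 𝟙, let μ ∈ ℂ with μ ≠ 0, set σ = μ · R σ3 R and Δ⁻ = (R⊗R)(σ1⊗σ2 − σ2⊗σ1)(R⊗R), and let M be the complex linear span of the six matrices 𝟙⊗𝟙, 𝟙⊗σ, σ⊗𝟙, σ⊗σ, Ω⁺, Δ⁻. Then the commutant of M (the set of 4×4 matrices commuting with every element of M, equivalently with each of the six spanning matrices) equals the complex linear span of 𝟙⊗𝟙, σ⊗σ, and 𝟙⊗σ + σ⊗𝟙; moreover this commutant is contained in M, so that M ∩ M′ = M′. -/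
open Matrix Complex
open scoped Kronecker

noncomputable section

/-! ### Auxiliary lemmas -/

/-- `Δ₀ = σ1⊗σ2 − σ2⊗σ1`. -/
def Delta0 : Matrix (Fin 2 × Fin 2) (Fin 2 × Fin 2) ℂ :=
  pauli 0 ⊗ₖ pauli 1 - pauli 1 ⊗ₖ pauli 0

lemma comm_extend (T S : Set (Matrix (Fin 2 × Fin 2) (Fin 2 × Fin 2) ℂ))
    (h : ∀ t ∈ T, ∀ s ∈ S, t*s = s*t) :
    ∀ X ∈ Submodule.span ℂ T, ∀ Y ∈ Submodule.span ℂ S, X*Y = Y*X := by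
  intro X hX
  induction hX using Submodule.span_induction with
  | mem t ht =>
    intro Y hY
    induction hY using Submodule.span_induction with
    | mem s hs => exact h t ht s hs
    | zero => simp
    | add y z _ _ hy hz => rw [mul_add, hy, hz, add_mul]
    | smul a y _ hy => rw [mul_smul_comm, hy, smul_mul_assoc]
  | zero => intro Y hY; simp
  | add x y _ _ hx hy => intro Y hY; rw [add_mul, hx Y hY, hy Y hY, mul_add]
  | smul a x _ hx => intro Y hY; rw [smul_mul_assoc, hx Y hY, mul_smul_comm]

set_option maxHeartbeats 1000000 in
lemma omega_comm_kron (R : Matrix (Fin 2) (Fin 2) ℂ) :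
    (R ⊗ₖ R) * OmegaPlus = OmegaPlus * (R ⊗ₖ R) := by
  ext ⟨i,j⟩ ⟨k,l⟩
  fin_cases i <;> fin_cases j <;> fin_cases k <;> fin_cases l <;>
    simp [Matrix.mul_apply, Fintype.sum_prod_type, Fin.sum_univ_two, pauli, OmegaPlus,
      Matrix.kroneckerMap_apply] <;> ring

set_option maxHeartbeats 1000000 in
lemma C2_omega_comm : (pauli 2 ⊗ₖ pauli 2) * OmegaPlus = OmegaPlus * (pauli 2 ⊗ₖ pauli 2) := by
  ext ⟨i,j⟩ ⟨k,l⟩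
  fin_cases i <;> fin_cases j <;> fin_cases k <;> fin_cases l <;>
    simp [Matrix.mul_apply, Fintype.sum_prod_type, Fin.sum_univ_two, pauli, OmegaPlus,
      Matrix.kroneckerMap_apply] <;> ring

set_option maxHeartbeats 1000000 in
lemma C3_omega_comm :
    ((1 : Matrix (Fin 2) (Fin 2) ℂ) ⊗ₖ pauli 2 + pauli 2 ⊗ₖ (1 : Matrix (Fin 2) (Fin 2) ℂ)) * OmegaPlus
      = OmegaPlus * ((1 : Matrix (Fin 2) (Fin 2) ℂ) ⊗ₖ pauli 2 + pauli 2 ⊗ₖ (1 : Matrix (Fin 2) (Fin 2) ℂ)) := by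
  ext ⟨i,j⟩ ⟨k,l⟩
  fin_cases i <;> fin_cases j <;> fin_cases k <;> fin_cases l <;>
    simp [Matrix.mul_apply, Fintype.sum_prod_type, Fin.sum_univ_two, pauli, OmegaPlus,
      Matrix.kroneckerMap_apply, Matrix.one_apply] <;> ring

set_option maxHeartbeats 1000000 in
lemma C2_delta_comm : (pauli 2 ⊗ₖ pauli 2) * Delta0 = Delta0 * (pauli 2 ⊗ₖ pauli 2) := by
  ext ⟨i,j⟩ ⟨k,l⟩
  fin_cases i <;> fin_cases j <;> fin_cases k <;> fin_cases l <;>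
    simp [Matrix.mul_apply, Fintype.sum_prod_type, Fin.sum_univ_two, pauli, Delta0,
      Matrix.kroneckerMap_apply] <;> ring

set_option maxHeartbeats 1000000 in
lemma C3_delta_comm :
    ((1 : Matrix (Fin 2) (Fin 2) ℂ) ⊗ₖ pauli 2 + pauli 2 ⊗ₖ (1 : Matrix (Fin 2) (Fin 2) ℂ)) * Delta0
      = Delta0 * ((1 : Matrix (Fin 2) (Fin 2) ℂ) ⊗ₖ pauli 2 + pauli 2 ⊗ₖ (1 : Matrix (Fin 2) (Fin 2) ℂ)) := by
  ext ⟨i,j⟩ ⟨k,l⟩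
  fin_cases i <;> fin_cases j <;> fin_cases k <;> fin_cases l <;>
    simp [Matrix.mul_apply, Fintype.sum_prod_type, Fin.sum_univ_two, pauli, Delta0,
      Matrix.kroneckerMap_apply, Matrix.one_apply] <;> ring

set_option maxHeartbeats 2000000 in
lemma core (X : Matrix (Fin 2 × Fin 2) (Fin 2 × Fin 2) ℂ)
    (h1 : X * ((1 : Matrix (Fin 2) (Fin 2) ℂ) ⊗ₖ pauli 2) = ((1 : Matrix (Fin 2) (Fin 2) ℂ) ⊗ₖ pauli 2) * X)
    (h2 : X * (pauli 2 ⊗ₖ (1 : Matrix (Fin 2) (Fin 2) ℂ)) = (pauli 2 ⊗ₖ (1 : Matrix (Fin 2) (Fin 2) ℂ)) * X)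
    (h3 : X * OmegaPlus = OmegaPlus * X) :
    ∃ a b c : ℂ,
      X = a • (1 : Matrix (Fin 2 × Fin 2) (Fin 2 × Fin 2) ℂ)
        + b • (pauli 2 ⊗ₖ pauli 2)
        + c • ((1 : Matrix (Fin 2) (Fin 2) ℂ) ⊗ₖ pauli 2 + pauli 2 ⊗ₖ (1 : Matrix (Fin 2) (Fin 2) ℂ)) := by
  refine ⟨(X (0,0) (0,0) + X (1,1) (1,1) + 2*X (0,1) (0,1))/4,
    (X (0,0) (0,0) + X (1,1) (1,1) - 2*X (0,1) (0,1))/4,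
    (X (0,0) (0,0) - X (1,1) (1,1))/4, ?_⟩
  have tac : ∀ (p q : Fin 2 × Fin 2), (X * ((1 : Matrix (Fin 2) (Fin 2) ℂ) ⊗ₖ pauli 2)) p q = (((1 : Matrix (Fin 2) (Fin 2) ℂ) ⊗ₖ pauli 2) * X) p q := fun p q => by rw [h1]
  have tac2 : ∀ (p q : Fin 2 × Fin 2), (X * (pauli 2 ⊗ₖ (1 : Matrix (Fin 2) (Fin 2) ℂ))) p q = ((pauli 2 ⊗ₖ (1 : Matrix (Fin 2) (Fin 2) ℂ)) * X) p q := fun p q => by rw [h2]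
  have z1 : X (0,0) (0,1) = 0 := by
    have h := tac (0,0) (0,1)
    simp [Matrix.mul_apply, Fintype.sum_prod_type, Fin.sum_univ_two, pauli, Matrix.kroneckerMap_apply, Matrix.one_apply] at h
    first | exact h | linear_combination -h/2 | linear_combination h/2
  have z2 : X (0,0) (1,1) = 0 := by
    have h := tac (0,0) (1,1)
    simp [Matrix.mul_apply, Fintype.sum_prod_type, Fin.sum_univ_two, pauli, Matrix.kroneckerMap_apply, Matrix.one_apply] at h
    first | exact h | linear_combination -h/2 | linear_combination h/2
  have z3 : X (0,1) (0,0) = 0 := by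
    have h := tac (0,1) (0,0)
    simp [Matrix.mul_apply, Fintype.sum_prod_type, Fin.sum_univ_two, pauli, Matrix.kroneckerMap_apply, Matrix.one_apply] at h
    first | exact h | linear_combination -h/2 | linear_combination h/2
  have z4 : X (0,1) (1,0) = 0 := by
    have h := tac (0,1) (1,0)
    simp [Matrix.mul_apply, Fintype.sum_prod_type, Fin.sum_univ_two, pauli, Matrix.kroneckerMap_apply, Matrix.one_apply] at h
    first | exact h | linear_combination -h/2 | linear_combination h/2
  have z5 : X (1,0) (0,1) = 0 := by
    have h := tac (1,0) (0,1)
    simp [Matrix.mul_apply, Fintype.sum_prod_type, Fin.sum_univ_two, pauli, Matrix.kroneckerMap_apply, Matrix.one_apply] at h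
    first | exact h | linear_combination -h/2 | linear_combination h/2
  have z6 : X (1,0) (1,1) = 0 := by
    have h := tac (1,0) (1,1)
    simp [Matrix.mul_apply, Fintype.sum_prod_type, Fin.sum_univ_two, pauli, Matrix.kroneckerMap_apply, Matrix.one_apply] at h
    first | exact h | linear_combination -h/2 | linear_combination h/2
  have z7 : X (1,1) (0,0) = 0 := by
    have h := tac (1,1) (0,0)
    simp [Matrix.mul_apply, Fintype.sum_prod_type, Fin.sum_univ_two, pauli, Matrix.kroneckerMap_apply, Matrix.one_apply] at h
    first | exact h | linear_combination -h/2 | linear_combination h/2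
  have z8 : X (1,1) (1,0) = 0 := by
    have h := tac (1,1) (1,0)
    simp [Matrix.mul_apply, Fintype.sum_prod_type, Fin.sum_univ_two, pauli, Matrix.kroneckerMap_apply, Matrix.one_apply] at h
    first | exact h | linear_combination -h/2 | linear_combination h/2
  have z9 : X (0,0) (1,0) = 0 := by
    have h := tac2 (0,0) (1,0)
    simp [Matrix.mul_apply, Fintype.sum_prod_type, Fin.sum_univ_two, pauli, Matrix.kroneckerMap_apply, Matrix.one_apply] at h
    first | exact h | linear_combination -h/2 | linear_combination h/2
  have z10 : X (0,1) (1,1) = 0 := by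
    have h := tac2 (0,1) (1,1)
    simp [Matrix.mul_apply, Fintype.sum_prod_type, Fin.sum_univ_two, pauli, Matrix.kroneckerMap_apply, Matrix.one_apply] at h
    first | exact h | linear_combination -h/2 | linear_combination h/2
  have z11 : X (1,0) (0,0) = 0 := by
    have h := tac2 (1,0) (0,0)
    simp [Matrix.mul_apply, Fintype.sum_prod_type, Fin.sum_univ_two, pauli, Matrix.kroneckerMap_apply, Matrix.one_apply] at h
    first | exact h | linear_combination -h/2 | linear_combination h/2
  have z12 : X (1,1) (0,1) = 0 := by
    have h := tac2 (1,1) (0,1)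
    simp [Matrix.mul_apply, Fintype.sum_prod_type, Fin.sum_univ_two, pauli, Matrix.kroneckerMap_apply, Matrix.one_apply] at h
    first | exact h | linear_combination -h/2 | linear_combination h/2
  have hbc : X (1,0) (1,0) = X (0,1) (0,1) := by
    have h : (X * OmegaPlus) (0,1) (1,0) = (OmegaPlus * X) (0,1) (1,0) := by rw [h3]
    simp [Matrix.mul_apply, Fintype.sum_prod_type, Fin.sum_univ_two, pauli, OmegaPlus, Matrix.kroneckerMap_apply, z4, z5, z10, z12] at h
    first | exact h.symm | exact h | linear_combination h/2 | linear_combination -h/2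
  ext ⟨i,j⟩ ⟨k,l⟩
  fin_cases i <;> fin_cases j <;> fin_cases k <;> fin_cases l <;>
    simp [Matrix.add_apply, Matrix.smul_apply, Matrix.one_apply, pauli, Matrix.kroneckerMap_apply,
      ← Prod.mk_zero_zero, ← Prod.mk_one_one, Prod.mk.injEq,
      z1, z2, z3, z4, z5, z6, z7, z8, z9, z10, z11, z12] <;>
    first | ring1 | exact hbc | linear_combination hbc | linear_combination -hbc

/-- Case 1: for `σ = μ • R σ3 R` and
`M = span{𝟙⊗𝟙, 𝟙⊗σ, σ⊗𝟙, σ⊗σ, Ω⁺, Δ⁻}`, the commutant of `M` equals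
`span{𝟙⊗𝟙, σ⊗σ, 𝟙⊗σ + σ⊗𝟙}`, and this commutant is contained in `M`
(so `Z = M ∩ M' = M'`). -/
theorem commutant_of_M_case1
    (R : Matrix (Fin 2) (Fin 2) ℂ) (hR_unit : IsUnit R) (hR : R * R = 1)
    (μ : ℂ) (hμ : μ ≠ 0)
    (σ : Matrix (Fin 2) (Fin 2) ℂ) (hσ : σ = μ • (R * pauli 2 * R))
    (Δ : Matrix (Fin 2 × Fin 2) (Fin 2 × Fin 2) ℂ)
    (hΔ : Δ = (R ⊗ₖ R) * (pauli 0 ⊗ₖ pauli 1 - pauli 1 ⊗ₖ pauli 0) * (R ⊗ₖ R))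
    (M : Submodule ℂ (Matrix (Fin 2 × Fin 2) (Fin 2 × Fin 2) ℂ))
    (hM : M = Submodule.span ℂ
        {(1 : Matrix (Fin 2) (Fin 2) ℂ) ⊗ₖ (1 : Matrix (Fin 2) (Fin 2) ℂ),
          (1 : Matrix (Fin 2) (Fin 2) ℂ) ⊗ₖ σ,
          σ ⊗ₖ (1 : Matrix (Fin 2) (Fin 2) ℂ),
          σ ⊗ₖ σ, OmegaPlus, Δ}) :
    {X : Matrix (Fin 2 × Fin 2) (Fin 2 × Fin 2) ℂ | ∀ Y ∈ M, X * Y = Y * X}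
      = (Submodule.span ℂ
          {(1 : Matrix (Fin 2) (Fin 2) ℂ) ⊗ₖ (1 : Matrix (Fin 2) (Fin 2) ℂ),
            σ ⊗ₖ σ,
            (1 : Matrix (Fin 2) (Fin 2) ℂ) ⊗ₖ σ + σ ⊗ₖ (1 : Matrix (Fin 2) (Fin 2) ℂ)}
          : Set (Matrix (Fin 2 × Fin 2) (Fin 2 × Fin 2) ℂ))
    ∧ {X : Matrix (Fin 2 × Fin 2) (Fin 2 × Fin 2) ℂ | ∀ Y ∈ M, X * Y = Y * X}
        ⊆ (M : Set (Matrix (Fin 2 × Fin 2) (Fin 2 × Fin 2) ℂ)) := by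
  have hΔ' : Δ = (R ⊗ₖ R) * Delta0 * (R ⊗ₖ R) := hΔ
  set Q : Matrix (Fin 2 × Fin 2) (Fin 2 × Fin 2) ℂ := R ⊗ₖ R with hQdef
  have hQ : Q * Q = 1 := by
    rw [hQdef, ← Matrix.mul_kronecker_mul, hR, Matrix.one_kronecker_one]
  have hQ' : ∀ Z : Matrix (Fin 2 × Fin 2) (Fin 2 × Fin 2) ℂ, Q*(Q*Z) = Z := fun Z => by
    rw [← mul_assoc, hQ, one_mul]
  have assoc : ∀ Z : Matrix (Fin 2 × Fin 2) (Fin 2 × Fin 2) ℂ, Q*(Q*Z*Q)*Q = Z := by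
    intro Z
    rw [show Q*(Q*Z*Q)*Q = (Q*Q)*Z*(Q*Q) from by simp only [mul_assoc], hQ, one_mul, mul_one]
  have key : ∀ U V : Matrix (Fin 2 × Fin 2) (Fin 2 × Fin 2) ℂ,
      U*V = V*U → (Q*U*Q)*(Q*V*Q) = (Q*V*Q)*(Q*U*Q) := by
    intro U V h
    have e : ∀ (A B : Matrix (Fin 2 × Fin 2) (Fin 2 × Fin 2) ℂ),
        (Q*A*Q)*(Q*B*Q) = Q*(A*B)*Q := fun A B => by simp only [mul_assoc, hQ']
    rw [e, e, h]
  have comm_iff : ∀ U V : Matrix (Fin 2 × Fin 2) (Fin 2 × Fin 2) ℂ,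
      U*V = V*U ↔ (Q*U*Q)*(Q*V*Q) = (Q*V*Q)*(Q*U*Q) := fun U V =>
    ⟨key U V, fun h => by have := key _ _ h; rwa [assoc, assoc] at this⟩
  have cancel : ∀ (c : ℂ), c ≠ 0 → ∀ (A B : Matrix (Fin 2 × Fin 2) (Fin 2 × Fin 2) ℂ),
      A*(c•B) = (c•B)*A → A*B = B*A := by
    intro c hc A B h
    rw [mul_smul_comm, smul_mul_assoc] at h
    exact smul_right_injective _ hc h
  have sm : ∀ (a b : ℂ) (A B : Matrix (Fin 2 × Fin 2) (Fin 2 × Fin 2) ℂ),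
      A*B = B*A → (a•A)*(b•B) = (b•B)*(a•A) := by
    intro a b A B h
    simp only [smul_mul_assoc, mul_smul_comm, h]
    rw [smul_comm a b (B*A)]
  have sm1 : ∀ (a : ℂ) (A B : Matrix (Fin 2 × Fin 2) (Fin 2 × Fin 2) ℂ),
      A*B = B*A → (a•A)*B = B*(a•A) := by
    intro a A B h
    simp only [smul_mul_assoc, mul_smul_comm, h]
  have conjK : ∀ A B : Matrix (Fin 2) (Fin 2) ℂ,
      Q*(A ⊗ₖ B)*Q = (R*A*R) ⊗ₖ (R*B*R) := by
    intro A B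
    rw [hQdef, Matrix.mul_kronecker_mul, Matrix.mul_kronecker_mul]
  have hRσR : R * σ * R = μ • pauli 2 := by
    rw [hσ, mul_smul_comm, smul_mul_assoc]
    congr 1
    rw [show R*(R*pauli 2*R)*R = (R*R)*pauli 2*(R*R) from by simp only [mul_assoc], hR, one_mul, mul_one]
  have hRp3R : R * pauli 2 * R = μ⁻¹ • σ := by
    rw [hσ, smul_smul, inv_mul_cancel₀ hμ, one_smul]
  have hR1R : R * (1 : Matrix (Fin 2) (Fin 2) ℂ) * R = 1 := by rw [mul_one, hR]
  -- conjugates of the generators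
  have c1 : Q*((1 : Matrix (Fin 2) (Fin 2) ℂ) ⊗ₖ (1 : Matrix (Fin 2) (Fin 2) ℂ))*Q = 1 := by
    rw [Matrix.one_kronecker_one, mul_one, hQ]
  have c2 : Q*((1 : Matrix (Fin 2) (Fin 2) ℂ) ⊗ₖ σ)*Q = μ • ((1 : Matrix (Fin 2) (Fin 2) ℂ) ⊗ₖ pauli 2) := by
    rw [conjK, hR1R, hRσR, Matrix.kronecker_smul]
  have c3 : Q*(σ ⊗ₖ (1 : Matrix (Fin 2) (Fin 2) ℂ))*Q = μ • (pauli 2 ⊗ₖ (1 : Matrix (Fin 2) (Fin 2) ℂ)) := by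
    rw [conjK, hR1R, hRσR, Matrix.smul_kronecker]
  have c4 : Q*(σ ⊗ₖ σ)*Q = (μ*μ) • (pauli 2 ⊗ₖ pauli 2) := by
    rw [conjK, hRσR, Matrix.smul_kronecker, Matrix.kronecker_smul, smul_smul]
  have c5 : Q*OmegaPlus*Q = OmegaPlus := by
    rw [hQdef, omega_comm_kron, mul_assoc, ← hQdef, hQ, mul_one]
  have c6 : Q*Δ*Q = Delta0 := by rw [hΔ']; exact assoc Delta0
  have cT3 : Q*((1 : Matrix (Fin 2) (Fin 2) ℂ) ⊗ₖ σ + σ ⊗ₖ (1 : Matrix (Fin 2) (Fin 2) ℂ))*Q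
      = μ • ((1 : Matrix (Fin 2) (Fin 2) ℂ) ⊗ₖ pauli 2 + pauli 2 ⊗ₖ (1 : Matrix (Fin 2) (Fin 2) ℂ)) := by
    rw [mul_add, add_mul, c2, c3, ← smul_add]
  -- conjugates of inverse direction generators (σ3 level back to σ level)
  have e1 : Q*(1 : Matrix (Fin 2 × Fin 2) (Fin 2 × Fin 2) ℂ)*Q
      = (1 : Matrix (Fin 2) (Fin 2) ℂ) ⊗ₖ (1 : Matrix (Fin 2) (Fin 2) ℂ) := by
    rw [mul_one, hQ, Matrix.one_kronecker_one]
  have e2 : Q*(pauli 2 ⊗ₖ pauli 2)*Q = (μ⁻¹*μ⁻¹) • (σ ⊗ₖ σ) := by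
    rw [conjK, hRp3R, Matrix.smul_kronecker, Matrix.kronecker_smul, smul_smul]
  have e3 : Q*((1 : Matrix (Fin 2) (Fin 2) ℂ) ⊗ₖ pauli 2 + pauli 2 ⊗ₖ (1 : Matrix (Fin 2) (Fin 2) ℂ))*Q
      = μ⁻¹ • ((1 : Matrix (Fin 2) (Fin 2) ℂ) ⊗ₖ σ + σ ⊗ₖ (1 : Matrix (Fin 2) (Fin 2) ℂ)) := by
    rw [mul_add, add_mul, conjK, conjK, hR1R, hRp3R, Matrix.kronecker_smul, Matrix.smul_kronecker, ← smul_add]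
  -- cheap commutation identities at σ3 level
  have d12 : ((1 : Matrix (Fin 2) (Fin 2) ℂ) ⊗ₖ pauli 2) * (pauli 2 ⊗ₖ (1 : Matrix (Fin 2) (Fin 2) ℂ))
      = (pauli 2 ⊗ₖ (1 : Matrix (Fin 2) (Fin 2) ℂ)) * ((1 : Matrix (Fin 2) (Fin 2) ℂ) ⊗ₖ pauli 2) := by
    rw [← Matrix.mul_kronecker_mul, ← Matrix.mul_kronecker_mul, one_mul, mul_one]
  have hc1 : (pauli 2 ⊗ₖ pauli 2) * ((1 : Matrix (Fin 2) (Fin 2) ℂ) ⊗ₖ pauli 2)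
      = ((1 : Matrix (Fin 2) (Fin 2) ℂ) ⊗ₖ pauli 2) * (pauli 2 ⊗ₖ pauli 2) := by
    rw [← Matrix.mul_kronecker_mul, ← Matrix.mul_kronecker_mul, one_mul, mul_one]
  have hc2 : (pauli 2 ⊗ₖ pauli 2) * (pauli 2 ⊗ₖ (1 : Matrix (Fin 2) (Fin 2) ℂ))
      = (pauli 2 ⊗ₖ (1 : Matrix (Fin 2) (Fin 2) ℂ)) * (pauli 2 ⊗ₖ pauli 2) := by
    rw [← Matrix.mul_kronecker_mul, ← Matrix.mul_kronecker_mul, one_mul, mul_one]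
  have hc3 : ((1 : Matrix (Fin 2) (Fin 2) ℂ) ⊗ₖ pauli 2 + pauli 2 ⊗ₖ (1 : Matrix (Fin 2) (Fin 2) ℂ)) * ((1 : Matrix (Fin 2) (Fin 2) ℂ) ⊗ₖ pauli 2)
      = ((1 : Matrix (Fin 2) (Fin 2) ℂ) ⊗ₖ pauli 2) * ((1 : Matrix (Fin 2) (Fin 2) ℂ) ⊗ₖ pauli 2 + pauli 2 ⊗ₖ (1 : Matrix (Fin 2) (Fin 2) ℂ)) := by
    rw [add_mul, mul_add, d12]
  have hc4 : ((1 : Matrix (Fin 2) (Fin 2) ℂ) ⊗ₖ pauli 2 + pauli 2 ⊗ₖ (1 : Matrix (Fin 2) (Fin 2) ℂ)) * (pauli 2 ⊗ₖ (1 : Matrix (Fin 2) (Fin 2) ℂ))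
      = (pauli 2 ⊗ₖ (1 : Matrix (Fin 2) (Fin 2) ℂ)) * ((1 : Matrix (Fin 2) (Fin 2) ℂ) ⊗ₖ pauli 2 + pauli 2 ⊗ₖ (1 : Matrix (Fin 2) (Fin 2) ℂ)) := by
    rw [add_mul, mul_add, d12]
  have hc6 : ((1 : Matrix (Fin 2) (Fin 2) ℂ) ⊗ₖ pauli 2 + pauli 2 ⊗ₖ (1 : Matrix (Fin 2) (Fin 2) ℂ)) * (pauli 2 ⊗ₖ pauli 2)
      = (pauli 2 ⊗ₖ pauli 2) * ((1 : Matrix (Fin 2) (Fin 2) ℂ) ⊗ₖ pauli 2 + pauli 2 ⊗ₖ (1 : Matrix (Fin 2) (Fin 2) ℂ)) := by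
    rw [add_mul, mul_add, ← hc1, ← hc2]
  -- main set equality
  have hmain : {X : Matrix (Fin 2 × Fin 2) (Fin 2 × Fin 2) ℂ | ∀ Y ∈ M, X * Y = Y * X}
      = (Submodule.span ℂ
          {(1 : Matrix (Fin 2) (Fin 2) ℂ) ⊗ₖ (1 : Matrix (Fin 2) (Fin 2) ℂ),
            σ ⊗ₖ σ,
            (1 : Matrix (Fin 2) (Fin 2) ℂ) ⊗ₖ σ + σ ⊗ₖ (1 : Matrix (Fin 2) (Fin 2) ℂ)}
          : Set (Matrix (Fin 2 × Fin 2) (Fin 2 × Fin 2) ℂ)) := by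
    ext X
    simp only [Set.mem_setOf_eq, SetLike.mem_coe]
    constructor
    · intro hX
      have hs : ∀ Y ∈ ({(1 : Matrix (Fin 2) (Fin 2) ℂ) ⊗ₖ (1 : Matrix (Fin 2) (Fin 2) ℂ),
          (1 : Matrix (Fin 2) (Fin 2) ℂ) ⊗ₖ σ, σ ⊗ₖ (1 : Matrix (Fin 2) (Fin 2) ℂ),
          σ ⊗ₖ σ, OmegaPlus, Δ} : Set (Matrix (Fin 2 × Fin 2) (Fin 2 × Fin 2) ℂ)),
          X*Y = Y*X := fun Y hY => hX Y (by rw [hM]; exact Submodule.subset_span hY)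
      have h2' := hs ((1 : Matrix (Fin 2) (Fin 2) ℂ) ⊗ₖ σ)
        (Set.mem_insert_of_mem _ (Set.mem_insert _ _))
      have h3' := hs (σ ⊗ₖ (1 : Matrix (Fin 2) (Fin 2) ℂ))
        (Set.mem_insert_of_mem _ (Set.mem_insert_of_mem _ (Set.mem_insert _ _)))
      have h5' := hs OmegaPlus
        (Set.mem_insert_of_mem _ (Set.mem_insert_of_mem _ (Set.mem_insert_of_mem _
          (Set.mem_insert_of_mem _ (Set.mem_insert _ _)))))
      have k2 : (Q*X*Q) * ((1 : Matrix (Fin 2) (Fin 2) ℂ) ⊗ₖ pauli 2)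
          = ((1 : Matrix (Fin 2) (Fin 2) ℂ) ⊗ₖ pauli 2) * (Q*X*Q) := by
        have h := key _ _ h2'
        rw [c2] at h
        exact cancel μ hμ _ _ h
      have k3 : (Q*X*Q) * (pauli 2 ⊗ₖ (1 : Matrix (Fin 2) (Fin 2) ℂ))
          = (pauli 2 ⊗ₖ (1 : Matrix (Fin 2) (Fin 2) ℂ)) * (Q*X*Q) := by
        have h := key _ _ h3'
        rw [c3] at h
        exact cancel μ hμ _ _ h
      have k5 : (Q*X*Q) * OmegaPlus = OmegaPlus * (Q*X*Q) := by
        have h := key _ _ h5'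
        rwa [c5] at h
      obtain ⟨a, b, c, hcore⟩ := core (Q*X*Q) k2 k3 k5
      have expand : ∀ (x y z : ℂ) (U V W : Matrix (Fin 2 × Fin 2) (Fin 2 × Fin 2) ℂ),
          Q*(x•U+y•V+z•W)*Q = x•(Q*U*Q)+y•(Q*V*Q)+z•(Q*W*Q) := by
        intros; simp only [mul_add, add_mul, mul_smul_comm, smul_mul_assoc]
      have h0 := congrArg (fun Z => Q*Z*Q) hcore
      simp only at h0
      rw [assoc, expand, e1, e2, e3, smul_smul, smul_smul] at h0
      rw [h0]
      refine Submodule.add_mem _ (Submodule.add_mem _ (Submodule.smul_mem _ _ ?_)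
        (Submodule.smul_mem _ _ ?_)) (Submodule.smul_mem _ _ ?_) <;>
        apply Submodule.subset_span
      · exact Set.mem_insert _ _
      · exact Set.mem_insert_of_mem _ (Set.mem_insert _ _)
      · exact Set.mem_insert_of_mem _ (Set.mem_insert_of_mem _ rfl)
    · intro hX Y hY
      rw [hM] at hY
      refine comm_extend _ _ ?_ X hX Y hY
      rintro t ht s hs
      simp only [Set.mem_insert_iff, Set.mem_singleton_iff] at ht hs
      rcases ht with rfl | rfl | rfl
      · rcases hs with rfl | rfl | rfl | rfl | rfl | rfl <;>
          simp only [Matrix.one_kronecker_one, one_mul, mul_one]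
      · rcases hs with rfl | rfl | rfl | rfl | rfl | rfl
        · simp only [Matrix.one_kronecker_one, mul_one, one_mul]
        · rw [comm_iff, c4, c2]; exact sm _ _ _ _ hc1
        · rw [comm_iff, c4, c3]; exact sm _ _ _ _ hc2
        · rfl
        · rw [comm_iff, c4, c5]; exact sm1 _ _ _ C2_omega_comm
        · rw [comm_iff, c4, c6]; exact sm1 _ _ _ C2_delta_comm
      · rcases hs with rfl | rfl | rfl | rfl | rfl | rfl
        · simp only [Matrix.one_kronecker_one, mul_one, one_mul]
        · rw [comm_iff, cT3, c2]; exact sm _ _ _ _ hc3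
        · rw [comm_iff, cT3, c3]; exact sm _ _ _ _ hc4
        · rw [comm_iff, cT3, c4]; exact sm _ _ _ _ hc6
        · rw [comm_iff, cT3, c5]; exact sm1 _ _ _ C3_omega_comm
        · rw [comm_iff, cT3, c6]; exact sm1 _ _ _ C3_delta_comm
  refine ⟨hmain, ?_⟩
  rw [hmain]
  have hle : Submodule.span ℂ
      {(1 : Matrix (Fin 2) (Fin 2) ℂ) ⊗ₖ (1 : Matrix (Fin 2) (Fin 2) ℂ),
        σ ⊗ₖ σ,
        (1 : Matrix (Fin 2) (Fin 2) ℂ) ⊗ₖ σ + σ ⊗ₖ (1 : Matrix (Fin 2) (Fin 2) ℂ)} ≤ M := by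
    rw [hM]
    apply Submodule.span_le.mpr
    rintro t ht
    simp only [Set.mem_insert_iff, Set.mem_singleton_iff] at ht
    rcases ht with rfl | rfl | rfl
    · exact Submodule.subset_span (Set.mem_insert _ _)
    · exact Submodule.subset_span
        (Set.mem_insert_of_mem _ (Set.mem_insert_of_mem _ (Set.mem_insert_of_mem _ (Set.mem_insert _ _))))
    · exact Submodule.add_mem _
        (Submodule.subset_span (Set.mem_insert_of_mem _ (Set.mem_insert _ _)))
        (Submodule.subset_span (Set.mem_insert_of_mem _ (Set.mem_insert_of_mem _ (Set.mem_insert _ _))))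
  exact hle

end
end

section
/- Let σ and τ be Hermitian, traceless 2×2 complex matrices that are linearly independent over ℂ. Then the set of 4×4 complex matrices commuting with both 𝟙⊗σ + σ⊗𝟙 and 𝟙⊗τ + τ⊗𝟙 equals the complex linear span of 𝟙⊗𝟙 and Ω⁺. -/
open Matrix Complex
open scoped Kronecker

noncomputable section

abbrev M2' := Matrix (Fin 2) (Fin 2) ℂ
abbrev M4' := Matrix (Fin 2 × Fin 2) (Fin 2 × Fin 2) ℂ

/-- `S A = 1 ⊗ A + A ⊗ 1`. -/
def SS (A : M2') : M4' := (1 : M2') ⊗ₖ A + A ⊗ₖ (1 : M2')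

lemma sub_kron (C D E : M2') : (C - D) ⊗ₖ E = C ⊗ₖ E - D ⊗ₖ E := by
  ext ⟨i,j⟩ ⟨k,l⟩; simp [Matrix.kroneckerMap_apply, sub_mul]

lemma kron_sub (C D E : M2') : E ⊗ₖ (C - D) = E ⊗ₖ C - E ⊗ₖ D := by
  ext ⟨i,j⟩ ⟨k,l⟩; simp [Matrix.kroneckerMap_apply, mul_sub]

lemma SS_smul (x : ℂ) (A : M2') : SS (x • A) = x • SS A := by
  simp [SS, Matrix.kronecker_smul, Matrix.smul_kronecker, smul_add]

lemma SS_add (A B : M2') : SS (A + B) = SS A + SS B := by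
  simp [SS, Matrix.kronecker_add, Matrix.add_kronecker]; abel

lemma SS_comm (A B : M2') : SS A * SS B - SS B * SS A = SS (A * B - B * A) := by
  simp only [SS, add_mul, mul_add, ← Matrix.mul_kronecker_mul, sub_kron, kron_sub,
    Matrix.one_mul, Matrix.mul_one]
  abel

/-- commutation transfer -/
lemma comm_transfer {X : M4'} {σ τ A : M2'} (h1 : X * SS σ = SS σ * X)
    (h2 : X * SS τ = SS τ * X) (x y z : ℂ)
    (hA : A = x • σ + y • τ + z • (σ * τ - τ * σ)) : X * SS A = SS A * X := by
  subst hA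
  rw [SS_add, SS_add, SS_smul, SS_smul, SS_smul, ← SS_comm]
  simp only [mul_add, add_mul, Matrix.mul_smul, Matrix.smul_mul, mul_sub, sub_mul, h1, h2]
  rw [show X * (SS σ * SS τ) = SS σ * X * SS τ by rw [← Matrix.mul_assoc, h1],
      show X * (SS τ * SS σ) = SS τ * X * SS σ by rw [← Matrix.mul_assoc, h2]]
  rw [Matrix.mul_assoc, h2, Matrix.mul_assoc, h1, ← Matrix.mul_assoc, ← Matrix.mul_assoc]

/-- Cramer identity for `pauli 2`. -/
lemma cramer2 (σ τ : M2') (hσ : σ 1 1 = -σ 0 0) (hτ : τ 1 1 = -τ 0 0) :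
    (4 * ((σ 0 0)*(τ 0 1) - (τ 0 0)*(σ 0 1)) * ((σ 1 0)*(τ 0 0) - (σ 0 0)*(τ 1 0))
      + ((σ 0 1)*(τ 1 0) - (σ 1 0)*(τ 0 1))^2) • pauli 2
    = (2*((τ 0 1)*((σ 1 0)*(τ 0 0) - (σ 0 0)*(τ 1 0)) - (τ 1 0)*((σ 0 0)*(τ 0 1) - (τ 0 0)*(σ 0 1)))) • σ
      + (2*((σ 1 0)*((σ 0 0)*(τ 0 1) - (τ 0 0)*(σ 0 1)) - (σ 0 1)*((σ 1 0)*(τ 0 0) - (σ 0 0)*(τ 1 0)))) • τ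
      + ((σ 0 1)*(τ 1 0) - (σ 1 0)*(τ 0 1)) • (σ * τ - τ * σ) := by
  ext i j
  fin_cases i <;> fin_cases j <;>
    (simp [pauli, Matrix.mul_apply, Fin.sum_univ_succ, hσ, hτ]; ring)

/-- Cramer identity for `pauli 0`. -/
lemma cramer0 (σ τ : M2') (hσ : σ 1 1 = -σ 0 0) (hτ : τ 1 1 = -τ 0 0) :
    (4 * ((σ 0 0)*(τ 0 1) - (τ 0 0)*(σ 0 1)) * ((σ 1 0)*(τ 0 0) - (σ 0 0)*(τ 1 0))
      + ((σ 0 1)*(τ 1 0) - (σ 1 0)*(τ 0 1))^2) • pauli 0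
    = ((τ 1 0)*((σ 0 1)*(τ 1 0) - (σ 1 0)*(τ 0 1)) - 2*(τ 0 0)*((σ 1 0)*(τ 0 0) - (σ 0 0)*(τ 1 0))
        + 2*(τ 0 0)*((σ 0 0)*(τ 0 1) - (τ 0 0)*(σ 0 1)) - (τ 0 1)*((σ 0 1)*(τ 1 0) - (σ 1 0)*(τ 0 1))) • σ
      + (2*(σ 0 0)*((σ 1 0)*(τ 0 0) - (σ 0 0)*(τ 1 0)) - (σ 1 0)*((σ 0 1)*(τ 1 0) - (σ 1 0)*(τ 0 1))
        + (σ 0 1)*((σ 0 1)*(τ 1 0) - (σ 1 0)*(τ 0 1)) - 2*(σ 0 0)*((σ 0 0)*(τ 0 1) - (τ 0 0)*(σ 0 1))) • τ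
      + (((σ 0 0)*(τ 0 1) - (τ 0 0)*(σ 0 1)) + ((σ 1 0)*(τ 0 0) - (σ 0 0)*(τ 1 0))) • (σ * τ - τ * σ) := by
  ext i j
  fin_cases i <;> fin_cases j <;>
    (simp [pauli, Matrix.mul_apply, Fin.sum_univ_succ, hσ, hτ]; ring)

/-- joint commutant of the Pauli `S`'s. -/
lemma commutant_pauli (X : M4') (h0 : X * SS (pauli 0) = SS (pauli 0) * X)
    (h2 : X * SS (pauli 2) = SS (pauli 2) * X) :
    ∃ α β : ℂ, X = α • ((1:M2') ⊗ₖ (1:M2')) + β • OmegaPlus := by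
  have E0 : ∀ p q : Fin 2 × Fin 2, (X * SS (pauli 0)) p q = (SS (pauli 0) * X) p q :=
    fun p q => by rw [h0]
  have E2 : ∀ p q : Fin 2 × Fin 2, (X * SS (pauli 2)) p q = (SS (pauli 2) * X) p q :=
    fun p q => by rw [h2]
  have z01 := E2 (0,0) (0,1); have z02 := E2 (0,0) (1,0); have z03 := E2 (0,0) (1,1)
  have z10 := E2 (0,1) (0,0); have z20 := E2 (1,0) (0,0); have z30 := E2 (1,1) (0,0)
  have z13 := E2 (0,1) (1,1); have z23 := E2 (1,0) (1,1)
  have z31 := E2 (1,1) (0,1); have z32 := E2 (1,1) (1,0)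
  have t2 := E0 (0,0) (0,1); have t3 := E0 (0,1) (0,0)
  have e20 := E0 (1,0) (0,0); have e13 := E0 (0,1) (1,1)
  simp [SS, pauli, Matrix.mul_apply, Matrix.add_apply, Matrix.kroneckerMap_apply,
    Matrix.one_apply, Fintype.sum_prod_type, Fin.sum_univ_succ]
    at z01 z02 z03 z10 z20 z30 z13 z23 z31 z32 t2 t3 e20 e13
  refine ⟨X (0,1) (0,1) + X (0,1) (1,0)/2, X (0,1) (1,0)/2, ?_⟩
  ext ⟨i,j⟩ ⟨k,l⟩
  fin_cases i <;> fin_cases j <;> fin_cases k <;> fin_cases l <;>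
    simp [OmegaPlus, pauli, Matrix.one_apply, Matrix.kroneckerMap_apply, Prod.ext_iff]
  · linear_combination -z30/4 - t3
  · linear_combination z01
  · linear_combination z02
  · linear_combination -z03/4
  · linear_combination z10
  · linear_combination z13
  · linear_combination z20
  · linear_combination -t2 - t3 - z03/4 - z30/4
  · linear_combination e20 + t2 + z03/4 + z30/4
  · linear_combination z23
  · linear_combination z30/4
  · linear_combination z31
  · linear_combination z32
  · linear_combination -e13 + z03/4

/-- Ω⁺ commutes with every `S A`. -/
lemma Omega_comm (A : M2') : OmegaPlus * SS A = SS A * OmegaPlus := by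
  ext ⟨i,j⟩ ⟨k,l⟩
  fin_cases i <;> fin_cases j <;> fin_cases k <;> fin_cases l <;>
    (simp [OmegaPlus, SS, pauli, Matrix.mul_apply, Matrix.add_apply,
      Matrix.kroneckerMap_apply, Matrix.one_apply, Fintype.sum_prod_type,
      Fin.sum_univ_succ]) <;> ring

/-- Degenerate case: vanishing "cross product" contradicts linear independence. -/
lemma key_ne (σ τ : M2') (hσ : σ 1 1 = -σ 0 0) (hτ : τ 1 1 = -τ 0 0)
    (hU : σ 0 0 * τ 0 1 - τ 0 0 * σ 0 1 = 0)
    (hV : σ 1 0 * τ 0 0 - σ 0 0 * τ 1 0 = 0)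
    (hW : σ 0 1 * τ 1 0 - σ 1 0 * τ 0 1 = 0)
    (hind : LinearIndependent ℂ ![σ, τ]) : False := by
  rw [linearIndependent_fin2] at hind
  obtain ⟨hτ0, hs⟩ := hind
  simp only [Matrix.cons_val_one, Matrix.head_cons, Matrix.cons_val_zero] at hτ0 hs
  have hdep : ∀ μ : ℂ, τ ≠ μ • σ := by
    intro μ hμ
    rcases eq_or_ne μ 0 with h | h
    · exact hτ0 (by simp [hμ, h])
    · exact hs μ⁻¹ (by rw [hμ, smul_smul, inv_mul_cancel₀ h, one_smul])
  by_cases ha : σ 0 0 ≠ 0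
  · refine hdep (τ 0 0 / σ 0 0) ?_
    ext i j
    fin_cases i <;> fin_cases j <;>
      simp only [Fin.mk_zero, Fin.mk_one, Matrix.smul_apply, smul_eq_mul] <;>
      field_simp <;>
      first
        | ring1
        | linear_combination hU | linear_combination -hU
        | linear_combination 2*hU | linear_combination -2*hU
        | linear_combination hV | linear_combination -hV
        | linear_combination 2*hV | linear_combination -2*hV
        | linear_combination hW | linear_combination -hW
        | linear_combination σ 0 0 * hτ - τ 0 0 * hσ
        | linear_combination τ 0 0 * hσ - σ 0 0 * hτ
  · push_neg at ha
    by_cases hc : σ 0 1 ≠ 0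
    · have hb : τ 0 0 = 0 := by
        have h2 : τ 0 0 * σ 0 1 = 0 := by linear_combination -hU + τ 0 1 * ha
        exact (mul_eq_zero.mp h2).resolve_right hc
      refine hdep (τ 0 1 / σ 0 1) ?_
      ext i j
      fin_cases i <;> fin_cases j <;>
        simp only [Fin.mk_zero, Fin.mk_one, Matrix.smul_apply, smul_eq_mul, hσ, hτ, ha, hb, neg_zero, mul_zero,
          zero_mul] <;>
        field_simp <;>
        first
          | ring1
          | linear_combination hW | linear_combination -hW
          | linear_combination 2*hW | linear_combination -2*hW
    · push_neg at hc
      by_cases hg : σ 1 0 ≠ 0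
      · have hb : τ 0 0 = 0 := by
          have h2 : σ 1 0 * τ 0 0 = 0 := by linear_combination hV + τ 1 0 * ha
          exact (mul_eq_zero.mp h2).resolve_left hg
        have hd : τ 0 1 = 0 := by
          have h2 : σ 1 0 * τ 0 1 = 0 := by linear_combination -hW + τ 1 0 * hc
          exact (mul_eq_zero.mp h2).resolve_left hg
        refine hdep (τ 1 0 / σ 1 0) ?_
        ext i j
        fin_cases i <;> fin_cases j <;>
          simp only [Fin.mk_zero, Fin.mk_one, Matrix.smul_apply, smul_eq_mul, hσ, hτ, ha, hb, hc, hd, neg_zero,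
            mul_zero, zero_mul] <;>
          field_simp
      · push_neg at hg
        refine hs 0 ?_
        ext i j
        fin_cases i <;> fin_cases j <;>
          simp [hσ, hτ, ha, hc, hg]


lemma span_mem_comm (A : M2') (α β : ℂ) :
    (α • ((1:M2') ⊗ₖ (1:M2')) + β • OmegaPlus) * SS A
      = SS A * (α • ((1:M2') ⊗ₖ (1:M2')) + β • OmegaPlus) := by
  rw [Matrix.one_kronecker_one]
  simp only [add_mul, mul_add, Matrix.smul_mul, Matrix.mul_smul, Matrix.one_mul,
    Matrix.mul_one, Omega_comm]

/-- for Hermitian traceless linearly independent `σ, τ`, the joint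
commutant of `𝟙⊗σ + σ⊗𝟙` and `𝟙⊗τ + τ⊗𝟙` is the span of `𝟙⊗𝟙` and `Ω⁺`. -/
theorem joint_commutant_two_hermitian
    (σ τ : Matrix (Fin 2) (Fin 2) ℂ)
    (hσ_herm : σᴴ = σ) (hτ_herm : τᴴ = τ)
    (hσ_tr : σ.trace = 0) (hτ_tr : τ.trace = 0)
    (hind : LinearIndependent ℂ ![σ, τ]) :
    {X : Matrix (Fin 2 × Fin 2) (Fin 2 × Fin 2) ℂ |
        X * ((1 : Matrix (Fin 2) (Fin 2) ℂ) ⊗ₖ σ + σ ⊗ₖ (1 : Matrix (Fin 2) (Fin 2) ℂ))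
          = ((1 : Matrix (Fin 2) (Fin 2) ℂ) ⊗ₖ σ + σ ⊗ₖ (1 : Matrix (Fin 2) (Fin 2) ℂ)) * X
        ∧ X * ((1 : Matrix (Fin 2) (Fin 2) ℂ) ⊗ₖ τ + τ ⊗ₖ (1 : Matrix (Fin 2) (Fin 2) ℂ))
          = ((1 : Matrix (Fin 2) (Fin 2) ℂ) ⊗ₖ τ + τ ⊗ₖ (1 : Matrix (Fin 2) (Fin 2) ℂ)) * X}
      = (Submodule.span ℂ
          {(1 : Matrix (Fin 2) (Fin 2) ℂ) ⊗ₖ (1 : Matrix (Fin 2) (Fin 2) ℂ), OmegaPlus}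
          : Set (Matrix (Fin 2 × Fin 2) (Fin 2 × Fin 2) ℂ)) := by
  ext X
  simp only [Set.mem_setOf_eq, SetLike.mem_coe]
  constructor
  · rintro ⟨h1, h2⟩
    have h1' : X * SS σ = SS σ * X := h1
    have h2' : X * SS τ = SS τ * X := h2
    have hσ11 : σ 1 1 = -σ 0 0 := by
      have h := hσ_tr; rw [Matrix.trace_fin_two] at h; linear_combination h
    have hτ11 : τ 1 1 = -τ 0 0 := by
      have h := hτ_tr; rw [Matrix.trace_fin_two] at h; linear_combination h
    have hcσ : ∀ i j, (starRingEnd ℂ) (σ i j) = σ j i := by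
      intro i j
      have h := congrFun (congrFun hσ_herm j) i
      rw [Matrix.conjTranspose_apply] at h
      exact h
    have hcτ : ∀ i j, (starRingEnd ℂ) (τ i j) = τ j i := by
      intro i j
      have h := congrFun (congrFun hτ_herm j) i
      rw [Matrix.conjTranspose_apply] at h
      exact h
    set U := σ 0 0 * τ 0 1 - τ 0 0 * σ 0 1 with hU_def
    set V := σ 1 0 * τ 0 0 - σ 0 0 * τ 1 0 with hV_def
    set W := σ 0 1 * τ 1 0 - σ 1 0 * τ 0 1 with hW_def
    have hcU : (starRingEnd ℂ) U = -V := by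
      rw [hU_def, hV_def, map_sub, _root_.map_mul, _root_.map_mul, hcσ, hcσ, hcτ, hcτ]; ring
    have hcW : (starRingEnd ℂ) W = -W := by
      rw [hW_def, map_sub, _root_.map_mul, _root_.map_mul, hcσ, hcσ, hcτ, hcτ]; ring
    have hDne : 4*U*V + W^2 ≠ 0 := by
      intro h0
      have e1 : (Complex.normSq U : ℂ) = U * (starRingEnd ℂ) U := (Complex.mul_conj U).symm
      have e2 : (Complex.normSq W : ℂ) = (starRingEnd ℂ) W * W := (Complex.normSq_eq_conj_mul_self (z := W))
      have hcplx : ((4 * Complex.normSq U + Complex.normSq W : ℝ) : ℂ) = 0 := by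
        push_cast
        rw [e1, e2, hcU, hcW]
        linear_combination -h0
      have hr : (4 * Complex.normSq U + Complex.normSq W : ℝ) = 0 := by exact_mod_cast hcplx
      have hU0 : Complex.normSq U = 0 := by
        nlinarith [Complex.normSq_nonneg U, Complex.normSq_nonneg W]
      have hW0 : Complex.normSq W = 0 := by
        nlinarith [Complex.normSq_nonneg U, Complex.normSq_nonneg W]
      have hU0' : U = 0 := Complex.normSq_eq_zero.mp hU0
      have hW0' : W = 0 := Complex.normSq_eq_zero.mp hW0
      have hV0' : V = 0 := by
        rw [hU0', map_zero] at hcU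
        simpa using hcU.symm
      exact key_ne σ τ hσ11 hτ11 hU0' hV0' hW0' hind
    have hp2 : X * SS (pauli 2) = SS (pauli 2) * X := by
      have h' := comm_transfer h1' h2' _ _ _ (cramer2 σ τ hσ11 hτ11)
      rw [SS_smul, Matrix.mul_smul, Matrix.smul_mul] at h'
      exact smul_right_injective _ hDne h'
    have hp0 : X * SS (pauli 0) = SS (pauli 0) * X := by
      have h' := comm_transfer h1' h2' _ _ _ (cramer0 σ τ hσ11 hτ11)
      rw [SS_smul, Matrix.mul_smul, Matrix.smul_mul] at h'
      exact smul_right_injective _ hDne h'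
    obtain ⟨α, β, hX⟩ := commutant_pauli X hp0 hp2
    exact Submodule.mem_span_pair.mpr ⟨α, β, hX.symm⟩
  · intro hX
    obtain ⟨α, β, hX⟩ := Submodule.mem_span_pair.mp hX
    rw [← hX]
    exact ⟨span_mem_comm σ α β, span_mem_comm τ α β⟩

end
end

section
/- Let R be an invertible 2×2 complex matrix with R·R = 𝟙, let μ ∈ ℂ with μ ≠ 0, and set σ = μ · R σ3 R. Then the set M of 4×4 complex matrices commuting with both 𝟙⊗σ + σ⊗𝟙 and 𝟙⊗σ − σ⊗𝟙 equals the complex linear span of 𝟙⊗𝟙, 𝟙⊗σ, σ⊗𝟙, σ⊗σ, which equals the complex linear span of the four matrices P_j = (R⊗R) Π_j (R⊗R), j = 1, …, 4, where Π_j are the four diagonal matrix units of M₄(ℂ); moreover M is a commutative set (any two of its elements commute), so that Z = M in Frigerio's notation. -/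
open Matrix Complex
open scoped Kronecker

noncomputable section

/-- The diagonal matrix units `Π_p` of `M₄(ℂ)` indexed by `Fin 2 × Fin 2`. -/
def diagUnit (p : Fin 2 × Fin 2) : Matrix (Fin 2 × Fin 2) (Fin 2 × Fin 2) ℂ :=
  Matrix.single p p 1

namespace Case3Aux

abbrev Mat4 := Matrix (Fin 2 × Fin 2) (Fin 2 × Fin 2) ℂ

def v : Fin 2 → ℂ := ![1, -1]

lemma v_injective : Function.Injective v := by
  intro i j h
  fin_cases i <;> fin_cases j <;> simp_all [v] <;> norm_num at h

lemma pauli2_eq : pauli 2 = Matrix.diagonal v := by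
  ext i j
  fin_cases i <;> fin_cases j <;> simp [pauli, v, Matrix.diagonal]

def g1 : Mat4 := (1 : Matrix (Fin 2) (Fin 2) ℂ) ⊗ₖ (1 : Matrix (Fin 2) (Fin 2) ℂ)
def g2 : Mat4 := (1 : Matrix (Fin 2) (Fin 2) ℂ) ⊗ₖ pauli 2
def g3 : Mat4 := pauli 2 ⊗ₖ (1 : Matrix (Fin 2) (Fin 2) ℂ)
def g4 : Mat4 := pauli 2 ⊗ₖ pauli 2

lemma g1_eq : g1 = Matrix.diagonal (fun _ => 1) := by
  rw [g1, ← Matrix.diagonal_one, Matrix.diagonal_kronecker_diagonal]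
  simp

lemma g2_eq : g2 = Matrix.diagonal (fun p => v p.2) := by
  rw [g2, pauli2_eq, ← Matrix.diagonal_one, Matrix.diagonal_kronecker_diagonal]
  simp

lemma g3_eq : g3 = Matrix.diagonal (fun p => v p.1) := by
  rw [g3, pauli2_eq, ← Matrix.diagonal_one, Matrix.diagonal_kronecker_diagonal]
  simp

lemma g4_eq : g4 = Matrix.diagonal (fun p => v p.1 * v p.2) := by
  rw [g4, pauli2_eq, Matrix.diagonal_kronecker_diagonal]

/-- The submodule of diagonal matrices. -/
def diagSub : Submodule ℂ Mat4 where
  carrier := {Y | Y.IsDiag}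
  add_mem' := fun ha hb => ha.add hb
  zero_mem' := Matrix.isDiag_zero
  smul_mem' := fun c _ h => h.smul c

lemma mem_diagSub {Y : Mat4} : Y ∈ diagSub ↔ Y.IsDiag := Iff.rfl

lemma eq_of_commute_entry {d : Fin 2 × Fin 2 → ℂ} {Y : Mat4}
    (h : Y * Matrix.diagonal d = Matrix.diagonal d * Y) {p q} (hY : Y p q ≠ 0) :
    d p = d q := by
  have h1 := congrFun (congrFun h p) q
  rw [Matrix.mul_diagonal, Matrix.diagonal_mul] at h1
  have h2 : d p * Y p q = d q * Y p q := by linear_combination -h1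
  exact mul_right_cancel₀ hY h2

lemma commute_diagonal_of_isDiag {Y : Mat4} (h : Y.IsDiag) (d : Fin 2 × Fin 2 → ℂ) :
    Y * Matrix.diagonal d = Matrix.diagonal d * Y := by
  rw [← h.diagonal_diag, Matrix.diagonal_mul_diagonal, Matrix.diagonal_mul_diagonal]
  exact congrArg Matrix.diagonal (funext fun i => mul_comm _ _)

lemma isDiag_iff_commutes (Y : Mat4) :
    (Y * (g2 + g3) = (g2 + g3) * Y ∧ Y * (g2 - g3) = (g2 - g3) * Y) ↔ Y.IsDiag := by
  constructor
  · rintro ⟨h1, h2⟩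
    rw [g2_eq, g3_eq, Matrix.diagonal_add] at h1
    rw [g2_eq, g3_eq, Matrix.diagonal_sub] at h2
    intro p q hpq
    by_contra hY
    have e1 := eq_of_commute_entry h1 hY
    have e2 := eq_of_commute_entry h2 hY
    have hv2 : v p.2 = v q.2 := by linear_combination (e1 + e2) / 2
    have hv1 : v p.1 = v q.1 := by linear_combination (e1 - e2) / 2
    exact hpq (Prod.ext (v_injective hv1) (v_injective hv2))
  · intro h
    rw [g2_eq, g3_eq, Matrix.diagonal_add, Matrix.diagonal_sub]
    exact ⟨commute_diagonal_of_isDiag h _, commute_diagonal_of_isDiag h _⟩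

lemma isDiag_diagUnit (p : Fin 2 × Fin 2) : (diagUnit p).IsDiag := by
  intro a b hab
  simp only [diagUnit, Matrix.single, Matrix.of_apply, ite_eq_right_iff, and_imp]
  rintro rfl rfl
  exact absurd rfl hab

lemma diagUnit_eq (p : Fin 2 × Fin 2) :
    diagUnit p = Matrix.diagonal (fun q => if q = p then 1 else 0) := by
  ext a b
  by_cases hab : a = b
  · subst hab
    simp [diagUnit, Matrix.single, Matrix.diagonal_apply_eq, eq_comm]
  · rw [Matrix.diagonal_apply_ne _ hab]
    simp only [diagUnit, Matrix.single, Matrix.of_apply]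
    rw [if_neg]
    rintro ⟨rfl, rfl⟩
    exact hab rfl

lemma isDiag_mem_span_diagUnit {Y : Mat4} (h : Y.IsDiag) :
    Y ∈ Submodule.span ℂ (Set.range diagUnit) := by
  have hrep : Y = ∑ p : Fin 2 × Fin 2, Y p p • diagUnit p := by
    ext a b
    rw [Matrix.sum_apply]
    simp only [Matrix.smul_apply, diagUnit, Matrix.single, Matrix.of_apply,
      smul_eq_mul, mul_ite, mul_one, mul_zero]
    by_cases hab : a = b
    · subst hab
      simp [eq_comm]
    · rw [h hab]
      symm
      apply Finset.sum_eq_zero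
      intro p _
      rw [if_neg]
      rintro ⟨rfl, rfl⟩
      exact hab rfl
  rw [hrep]
  exact Submodule.sum_mem _ fun p _ => Submodule.smul_mem _ _ (Submodule.subset_span ⟨p, rfl⟩)

lemma diagSub_eq_span_diagUnit : diagSub = Submodule.span ℂ (Set.range diagUnit) := by
  apply le_antisymm
  · intro Y hY
    exact isDiag_mem_span_diagUnit hY
  · rw [Submodule.span_le]
    rintro _ ⟨p, rfl⟩
    exact isDiag_diagUnit p

lemma diagUnit_combo (p : Fin 2 × Fin 2) (a b c d : ℂ)
    (hcoef : ∀ q : Fin 2 × Fin 2,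
      (if q = p then (1 : ℂ) else 0) = a + b * v q.2 + c * v q.1 + d * (v q.1 * v q.2)) :
    diagUnit p = a • g1 + b • g2 + c • g3 + d • g4 := by
  rw [diagUnit_eq, g1_eq, g2_eq, g3_eq, g4_eq, ← Matrix.diagonal_smul, ← Matrix.diagonal_smul,
    ← Matrix.diagonal_smul, ← Matrix.diagonal_smul, Matrix.diagonal_add, Matrix.diagonal_add,
    Matrix.diagonal_add]
  exact congrArg Matrix.diagonal (funext fun q => by
    simpa [smul_eq_mul, mul_one] using hcoef q)

lemma diagUnit_mem_span_gens (p : Fin 2 × Fin 2) :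
    diagUnit p ∈ Submodule.span ℂ ({g1, g2, g3, g4} : Set Mat4) := by
  have key : ∀ (a b c d : ℂ), (a • g1 + b • g2 + c • g3 + d • g4)
      ∈ Submodule.span ℂ ({g1, g2, g3, g4} : Set Mat4) := by
    intro a b c d
    have m1 : g1 ∈ Submodule.span ℂ ({g1, g2, g3, g4} : Set Mat4) :=
      Submodule.subset_span (by simp)
    have m2 : g2 ∈ Submodule.span ℂ ({g1, g2, g3, g4} : Set Mat4) :=
      Submodule.subset_span (by simp)
    have m3 : g3 ∈ Submodule.span ℂ ({g1, g2, g3, g4} : Set Mat4) :=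
      Submodule.subset_span (by simp)
    have m4 : g4 ∈ Submodule.span ℂ ({g1, g2, g3, g4} : Set Mat4) :=
      Submodule.subset_span (by simp)
    exact Submodule.add_mem _ (Submodule.add_mem _ (Submodule.add_mem _
      (Submodule.smul_mem _ _ m1) (Submodule.smul_mem _ _ m2))
      (Submodule.smul_mem _ _ m3)) (Submodule.smul_mem _ _ m4)
  obtain ⟨i, j⟩ := p
  fin_cases i <;> fin_cases j
  · rw [diagUnit_combo _ (4⁻¹ : ℂ) (4⁻¹ : ℂ) (4⁻¹ : ℂ) (4⁻¹ : ℂ)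
      (fun q => by fin_cases q <;> norm_num [v, Prod.ext_iff])]
    apply key
  · rw [diagUnit_combo _ (4⁻¹ : ℂ) (-4⁻¹ : ℂ) (4⁻¹ : ℂ) (-4⁻¹ : ℂ)
      (fun q => by fin_cases q <;> norm_num [v, Prod.ext_iff])]
    apply key
  · rw [diagUnit_combo _ (4⁻¹ : ℂ) (4⁻¹ : ℂ) (-4⁻¹ : ℂ) (-4⁻¹ : ℂ)
      (fun q => by fin_cases q <;> norm_num [v, Prod.ext_iff])]
    apply key
  · rw [diagUnit_combo _ (4⁻¹ : ℂ) (-4⁻¹ : ℂ) (-4⁻¹ : ℂ) (4⁻¹ : ℂ)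
      (fun q => by fin_cases q <;> norm_num [v, Prod.ext_iff])]
    apply key

lemma diagSub_eq_span_gens : diagSub = Submodule.span ℂ ({g1, g2, g3, g4} : Set Mat4) := by
  apply le_antisymm
  · rw [diagSub_eq_span_diagUnit, Submodule.span_le]
    rintro _ ⟨p, rfl⟩
    exact diagUnit_mem_span_gens p
  · rw [Submodule.span_le]
    intro X hX
    simp only [Set.mem_insert_iff, Set.mem_singleton_iff] at hX
    rcases hX with rfl | rfl | rfl | rfl
    · rw [SetLike.mem_coe, mem_diagSub, g1_eq]; exact Matrix.isDiag_diagonal _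
    · rw [SetLike.mem_coe, mem_diagSub, g2_eq]; exact Matrix.isDiag_diagonal _
    · rw [SetLike.mem_coe, mem_diagSub, g3_eq]; exact Matrix.isDiag_diagonal _
    · rw [SetLike.mem_coe, mem_diagSub, g4_eq]; exact Matrix.isDiag_diagonal _

end Case3Aux

open Case3Aux

/-- Case 3: the joint commutant `M` of `𝟙⊗σ + σ⊗𝟙` and `𝟙⊗σ - σ⊗𝟙` equals
`span{𝟙⊗𝟙, 𝟙⊗σ, σ⊗𝟙, σ⊗σ}`, which equals the span of the four projectors
`P_j = (R⊗R) Π_j (R⊗R)`; moreover `M` is commutative (so `Z = M`). -/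
theorem joint_commutant_case3
    (R : Matrix (Fin 2) (Fin 2) ℂ) (hR_unit : IsUnit R) (hR : R * R = 1)
    (μ : ℂ) (hμ : μ ≠ 0)
    (σ : Matrix (Fin 2) (Fin 2) ℂ) (hσ : σ = μ • (R * pauli 2 * R))
    (M : Set (Matrix (Fin 2 × Fin 2) (Fin 2 × Fin 2) ℂ))
    (hM : M = {X : Matrix (Fin 2 × Fin 2) (Fin 2 × Fin 2) ℂ |
        X * ((1 : Matrix (Fin 2) (Fin 2) ℂ) ⊗ₖ σ + σ ⊗ₖ (1 : Matrix (Fin 2) (Fin 2) ℂ))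
          = ((1 : Matrix (Fin 2) (Fin 2) ℂ) ⊗ₖ σ + σ ⊗ₖ (1 : Matrix (Fin 2) (Fin 2) ℂ)) * X
        ∧ X * ((1 : Matrix (Fin 2) (Fin 2) ℂ) ⊗ₖ σ - σ ⊗ₖ (1 : Matrix (Fin 2) (Fin 2) ℂ))
          = ((1 : Matrix (Fin 2) (Fin 2) ℂ) ⊗ₖ σ - σ ⊗ₖ (1 : Matrix (Fin 2) (Fin 2) ℂ)) * X})
    (P : Fin 2 × Fin 2 → Matrix (Fin 2 × Fin 2) (Fin 2 × Fin 2) ℂ)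
    (hP : ∀ p, P p = (R ⊗ₖ R) * diagUnit p * (R ⊗ₖ R)) :
    M = (Submodule.span ℂ
          {(1 : Matrix (Fin 2) (Fin 2) ℂ) ⊗ₖ (1 : Matrix (Fin 2) (Fin 2) ℂ),
            (1 : Matrix (Fin 2) (Fin 2) ℂ) ⊗ₖ σ,
            σ ⊗ₖ (1 : Matrix (Fin 2) (Fin 2) ℂ),
            σ ⊗ₖ σ}
          : Set (Matrix (Fin 2 × Fin 2) (Fin 2 × Fin 2) ℂ))
    ∧ M = (Submodule.span ℂ (Set.range P)
          : Set (Matrix (Fin 2 × Fin 2) (Fin 2 × Fin 2) ℂ))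
    ∧ (∀ X ∈ M, ∀ Y ∈ M, X * Y = Y * X) := by
  set S : Mat4 := R ⊗ₖ R with hSdef
  have hS : S * S = 1 := by
    rw [hSdef, ← Matrix.mul_kronecker_mul, hR, Matrix.one_kronecker_one]
  -- the conjugation map
  set gm : Mat4 →ₗ[ℂ] Mat4 :=
    { toFun := fun X => S * X * S
      map_add' := fun X Y => by noncomm_ring
      map_smul' := fun c X => by
        simp [Matrix.smul_mul, Matrix.mul_smul] } with hgm
  have hgm_apply : ∀ X : Mat4, gm X = S * X * S := fun _ => rfl
  have ginv : Function.Involutive gm := by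
    intro X
    rw [hgm_apply, hgm_apply]
    calc S * (S * X * S) * S = (S * S) * X * (S * S) := by noncomm_ring
    _ = X := by rw [hS]; simp
  have gmul : ∀ X Y : Mat4, gm (X * Y) = gm X * gm Y := by
    intro X Y
    rw [hgm_apply, hgm_apply, hgm_apply]
    calc S * (X * Y) * S = S * X * 1 * Y * S := by noncomm_ring
    _ = S * X * (S * S) * Y * S := by rw [hS]
    _ = (S * X * S) * (S * Y * S) := by noncomm_ring
  set ge : Mat4 ≃ₗ[ℂ] Mat4 := LinearEquiv.ofInvolutive gm ginv with hge
  have hge_apply : ∀ X : Mat4, ge X = gm X := fun _ => rfl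
  have hge_symm : ∀ X : Mat4, ge.symm X = gm X := by
    intro X
    rw [LinearEquiv.symm_apply_eq, hge_apply]
    exact (ginv X).symm
  -- commuting transfers through conjugation
  have hcomm_iff : ∀ X B : Mat4, (X * gm B = gm B * X) ↔ (gm X * B = B * gm X) := by
    intro X B
    constructor
    · intro h
      have h2 := congrArg gm h
      rw [gmul, gmul, ginv B] at h2
      exact h2
    · intro h
      have h2 := congrArg gm h
      rw [gmul, gmul, ginv X] at h2
      exact h2
  -- express the generators via conjugation
  have h1σ : (1 : Matrix (Fin 2) (Fin 2) ℂ) ⊗ₖ σ = μ • gm g2 := by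
    rw [hσ, Matrix.kronecker_smul, hgm_apply, g2, hSdef, ← Matrix.mul_kronecker_mul,
      ← Matrix.mul_kronecker_mul, Matrix.mul_one, hR]
  have hσ1 : σ ⊗ₖ (1 : Matrix (Fin 2) (Fin 2) ℂ) = μ • gm g3 := by
    rw [hσ, Matrix.smul_kronecker, hgm_apply, g3, hSdef, ← Matrix.mul_kronecker_mul,
      ← Matrix.mul_kronecker_mul, Matrix.mul_one, hR]
  have hσσ : σ ⊗ₖ σ = (μ * μ) • gm g4 := by
    rw [hσ, Matrix.smul_kronecker, Matrix.kronecker_smul, smul_smul, hgm_apply, g4, hSdef,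
      ← Matrix.mul_kronecker_mul, ← Matrix.mul_kronecker_mul]
  have h11 : (1 : Matrix (Fin 2) (Fin 2) ℂ) ⊗ₖ (1 : Matrix (Fin 2) (Fin 2) ℂ) = gm g1 := by
    rw [hgm_apply, g1, hSdef, ← Matrix.mul_kronecker_mul, ← Matrix.mul_kronecker_mul,
      Matrix.mul_one, hR]
  -- membership characterization
  have hmemM : ∀ X : Mat4, X ∈ M ↔ (gm X).IsDiag := by
    intro X
    rw [hM, Set.mem_setOf_eq, h1σ, hσ1]
    have hA1 : μ • gm g2 + μ • gm g3 = μ • gm (g2 + g3) := by rw [map_add, smul_add]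
    have hA2 : μ • gm g2 - μ • gm g3 = μ • gm (g2 - g3) := by rw [map_sub, smul_sub]
    rw [hA1, hA2]
    have smul_cancel : ∀ B : Mat4, (X * (μ • B) = (μ • B) * X) ↔ (X * B = B * X) := by
      intro B
      rw [Matrix.mul_smul, Matrix.smul_mul]
      constructor
      · intro h; exact smul_right_injective _ hμ h
      · intro h; rw [h]
    rw [smul_cancel, smul_cancel, hcomm_iff, hcomm_iff]
    exact isDiag_iff_commutes (gm X)
  have hMeq : M = ((Submodule.map (ge : Mat4 →ₗ[ℂ] Mat4) diagSub : Submodule ℂ Mat4) : Set Mat4) := by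
    ext X
    rw [hmemM X]
    simp only [SetLike.mem_coe, Submodule.mem_map, LinearEquiv.coe_coe]
    constructor
    · intro h
      exact ⟨gm X, h, by rw [hge_apply]; exact ginv X⟩
    · rintro ⟨Y, hY, hYX⟩
      rw [← hYX, hge_apply, ginv Y]
      exact hY
  -- Part 1
  have part1 : M = (Submodule.span ℂ
      {(1 : Matrix (Fin 2) (Fin 2) ℂ) ⊗ₖ (1 : Matrix (Fin 2) (Fin 2) ℂ),
        (1 : Matrix (Fin 2) (Fin 2) ℂ) ⊗ₖ σ,
        σ ⊗ₖ (1 : Matrix (Fin 2) (Fin 2) ℂ),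
        σ ⊗ₖ σ} : Set Mat4) := by
    rw [hMeq]
    refine congrArg _ (le_antisymm ?_ ?_)
    · rw [diagSub_eq_span_gens, Submodule.map_span, LinearEquiv.coe_coe, Submodule.span_le]
      rintro _ ⟨x, hx, rfl⟩
      simp only [Set.mem_insert_iff, Set.mem_singleton_iff] at hx
      have sub := Submodule.subset_span (R := ℂ)
        (s := {(1 : Matrix (Fin 2) (Fin 2) ℂ) ⊗ₖ (1 : Matrix (Fin 2) (Fin 2) ℂ),
          (1 : Matrix (Fin 2) (Fin 2) ℂ) ⊗ₖ σ,
          σ ⊗ₖ (1 : Matrix (Fin 2) (Fin 2) ℂ), σ ⊗ₖ σ})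
      rcases hx with rfl | rfl | rfl | rfl
      · rw [hge_apply, ← h11]; exact sub (by simp)
      · rw [hge_apply]
        have : gm g2 = μ⁻¹ • ((1 : Matrix (Fin 2) (Fin 2) ℂ) ⊗ₖ σ) := by
          rw [h1σ, smul_smul, inv_mul_cancel₀ hμ, one_smul]
        rw [this]
        exact Submodule.smul_mem _ _ (sub (by simp))
      · rw [hge_apply]
        have : gm g3 = μ⁻¹ • (σ ⊗ₖ (1 : Matrix (Fin 2) (Fin 2) ℂ)) := by
          rw [hσ1, smul_smul, inv_mul_cancel₀ hμ, one_smul]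
        rw [this]
        exact Submodule.smul_mem _ _ (sub (by simp))
      · rw [hge_apply]
        have : gm g4 = (μ * μ)⁻¹ • (σ ⊗ₖ σ) := by
          rw [hσσ, smul_smul, inv_mul_cancel₀ (mul_ne_zero hμ hμ), one_smul]
        rw [this]
        exact Submodule.smul_mem _ _ (sub (by simp))
    · rw [Submodule.span_le]
      intro X hX
      simp only [Set.mem_insert_iff, Set.mem_singleton_iff] at hX
      rcases hX with rfl | rfl | rfl | rfl
      · rw [h11, ← hge_apply]
        exact SetLike.mem_coe.2 (Submodule.mem_map_of_mem (by
          rw [mem_diagSub, g1_eq]; exact Matrix.isDiag_diagonal _))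
      · rw [h1σ, ← LinearMap.map_smul, ← hge_apply]
        exact SetLike.mem_coe.2 (Submodule.mem_map_of_mem (Submodule.smul_mem _ _ (by
          rw [mem_diagSub, g2_eq]; exact Matrix.isDiag_diagonal _)))
      · rw [hσ1, ← LinearMap.map_smul, ← hge_apply]
        exact SetLike.mem_coe.2 (Submodule.mem_map_of_mem (Submodule.smul_mem _ _ (by
          rw [mem_diagSub, g3_eq]; exact Matrix.isDiag_diagonal _)))
      · rw [hσσ, ← LinearMap.map_smul, ← hge_apply]
        exact SetLike.mem_coe.2 (Submodule.mem_map_of_mem (Submodule.smul_mem _ _ (by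
          rw [mem_diagSub, g4_eq]; exact Matrix.isDiag_diagonal _)))
  -- Part 2
  have hPe : P = ⇑ge ∘ diagUnit := by
    funext p
    show P p = ge (diagUnit p)
    rw [hP p, hge_apply, hgm_apply]
  have hrangeP : Set.range P = ⇑ge '' Set.range diagUnit := by
    rw [hPe, Set.range_comp]
  have part2 : M = (Submodule.span ℂ (Set.range P) : Set Mat4) := by
    rw [hMeq, hrangeP]
    refine congrArg _ ?_
    rw [diagSub_eq_span_diagUnit, Submodule.map_span (ge : Mat4 →ₗ[ℂ] Mat4) (Set.range diagUnit), LinearEquiv.coe_coe]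
  refine ⟨part1, part2, ?_⟩
  -- Part 3: commutativity
  intro X hX Y hY
  rw [hmemM] at hX hY
  have hc : gm X * gm Y = gm Y * gm X := by
    have h := commute_diagonal_of_isDiag hX ((gm Y).diag)
    rw [hY.diagonal_diag] at h
    exact h
  have : gm (X * Y) = gm (Y * X) := by rw [gmul, gmul, hc]
  exact ginv.injective this

end
end

section
/- Let R be a 2×2 complex matrix that is unitary and Hermitian (so R = R† = R⁻¹). Define the projectors P_1 = (R⊗R) Π_1 (R⊗R), P_2 = (R⊗R) Π_4 (R⊗R), P_3 = (R⊗R)(Π_2 + Π_3)(R⊗R), where Π_1, Π_2, Π_3, Π_4 are the diagonal matrix units of M₄(ℂ) in the index order (0,0),(0,1),(1,0),(1,1). Then for any 2×2 complex matrices ρ_T, ρ_A, ρ_A′ with Tr ρ_A = Tr ρ_A′ = 1, the partial trace over the second factor satisfies Tr_A[Σ_{n=1}^{3} P_n (ρ_T ⊗ ρ_A) P_n] = Tr_A[Σ_{n=1}^{3} P_n (ρ_T ⊗ ρ_A′) P_n]; that is, the asymptotic reduced state obtained from an uncorrelated initial state ρ_T ⊗ ρ_A does not depend on the ancilla state ρ_A.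 -/
open Matrix Complex
open scoped Kronecker

noncomputable section

/-- Partial trace over the second tensor factor. -/
def ptraceA (M : Matrix (Fin 2 × Fin 2) (Fin 2 × Fin 2) ℂ) : Matrix (Fin 2) (Fin 2) ℂ :=
  Matrix.of fun i j => ∑ k : Fin 2, M (i, k) (j, k)

lemma key_lemma (R σ τ : Matrix (Fin 2) (Fin 2) ℂ) (hRR : R * R = 1) :
    ptraceA ((R ⊗ₖ R) *
      (diagUnit (0, 0) * (σ ⊗ₖ τ) * diagUnit (0, 0)
        + diagUnit (1, 1) * (σ ⊗ₖ τ) * diagUnit (1, 1)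
        + (diagUnit (0, 1) + diagUnit (1, 0)) * (σ ⊗ₖ τ) * (diagUnit (0, 1) + diagUnit (1, 0)))
      * (R ⊗ₖ R))
    = τ.trace • Matrix.of (fun i j => σ 0 0 * (R i 0 * R 0 j) + σ 1 1 * (R i 1 * R 1 j)) := by
  have h : ∀ d b : Fin 2, R d 0 * R 0 b + R d 1 * R 1 b = (1 : Matrix (Fin 2) (Fin 2) ℂ) d b := by
    intro d b
    rw [← hRR]
    simp [Matrix.mul_apply, Fin.sum_univ_two]
  have h00 : R 0 0 * R 0 0 + R 0 1 * R 1 0 = 1 := by simpa using h 0 0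
  have h11 : R 1 0 * R 0 1 + R 1 1 * R 1 1 = 1 := by simpa using h 1 1
  have h01 : R 0 0 * R 0 1 + R 0 1 * R 1 1 = 0 := by simpa using h 0 1
  have h10 : R 1 0 * R 0 0 + R 1 1 * R 1 0 = 0 := by simpa using h 1 0
  ext i j
  simp only [ptraceA, Matrix.of_apply, Matrix.mul_apply, Matrix.kroneckerMap_apply,
    Matrix.add_apply, diagUnit, Matrix.single, Matrix.of_apply, Matrix.smul_apply,
    Matrix.trace, Matrix.diag, Fintype.sum_prod_type, Fin.sum_univ_two, smul_eq_mul,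
    Prod.mk.injEq]
  simp only [Fin.isValue, show ((0:Fin 2) = 1) = False by simp, show ((1:Fin 2) = 0) = False by simp,
    eq_self_iff_true, if_true, if_false, true_and, false_and, and_true, and_false,
    mul_zero, zero_mul, add_zero, zero_add, mul_one, one_mul]
  linear_combination
    (σ 0 0 * τ 0 0 * (R i 0 * R 0 j) + σ 1 1 * τ 0 0 * (R i 1 * R 1 j)) * h00
    + (σ 0 0 * τ 1 1 * (R i 0 * R 0 j) + σ 1 1 * τ 1 1 * (R i 1 * R 1 j)) * h11
    + σ 0 1 * τ 1 0 * (R i 0 * R 1 j) * h01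
    + σ 1 0 * τ 0 1 * (R i 1 * R 0 j) * h10

/-- Cases 1 and 3, uncorrelated initial state: for the projectors
`P₁ = (R⊗R)Π₁(R⊗R)`, `P₂ = (R⊗R)Π₄(R⊗R)`, `P₃ = (R⊗R)(Π₂+Π₃)(R⊗R)`, the asymptotic
reduced state `Tr_A[Σₙ Pₙ (ρ_T ⊗ ρ_A) Pₙ]` does not depend on the ancilla state `ρ_A`. -/
theorem asymptotic_state_independent_of_ancilla
    (R : Matrix (Fin 2) (Fin 2) ℂ) (hR_herm : Rᴴ = R) (hR_unitary : R * Rᴴ = 1)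
    (P₁ P₂ P₃ : Matrix (Fin 2 × Fin 2) (Fin 2 × Fin 2) ℂ)
    (hP₁ : P₁ = (R ⊗ₖ R) * diagUnit (0, 0) * (R ⊗ₖ R))
    (hP₂ : P₂ = (R ⊗ₖ R) * diagUnit (1, 1) * (R ⊗ₖ R))
    (hP₃ : P₃ = (R ⊗ₖ R) * (diagUnit (0, 1) + diagUnit (1, 0)) * (R ⊗ₖ R))
    (ρT ρA ρA' : Matrix (Fin 2) (Fin 2) ℂ)
    (hρA : ρA.trace = 1) (hρA' : ρA'.trace = 1) :
    ptraceA (P₁ * (ρT ⊗ₖ ρA) * P₁ + P₂ * (ρT ⊗ₖ ρA) * P₂ + P₃ * (ρT ⊗ₖ ρA) * P₃)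
      = ptraceA (P₁ * (ρT ⊗ₖ ρA') * P₁ + P₂ * (ρT ⊗ₖ ρA') * P₂
          + P₃ * (ρT ⊗ₖ ρA') * P₃) := by
  have hRR : R * R = 1 := by rw [← hR_unitary, hR_herm]
  have rearr : ∀ (X : Matrix (Fin 2) (Fin 2) ℂ)
      (Q : Matrix (Fin 2 × Fin 2) (Fin 2 × Fin 2) ℂ),
      ((R ⊗ₖ R) * Q * (R ⊗ₖ R)) * (ρT ⊗ₖ X) * ((R ⊗ₖ R) * Q * (R ⊗ₖ R))
        = (R ⊗ₖ R) * (Q * ((R * ρT * R) ⊗ₖ (R * X * R)) * Q) * (R ⊗ₖ R) := by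
    intro X Q
    rw [Matrix.mul_kronecker_mul, Matrix.mul_kronecker_mul]
    noncomm_ring
  have main : ∀ (X : Matrix (Fin 2) (Fin 2) ℂ), X.trace = 1 →
      ptraceA (((R ⊗ₖ R) * diagUnit (0, 0) * (R ⊗ₖ R)) * (ρT ⊗ₖ X)
          * ((R ⊗ₖ R) * diagUnit (0, 0) * (R ⊗ₖ R))
        + ((R ⊗ₖ R) * diagUnit (1, 1) * (R ⊗ₖ R)) * (ρT ⊗ₖ X)
          * ((R ⊗ₖ R) * diagUnit (1, 1) * (R ⊗ₖ R))
        + ((R ⊗ₖ R) * (diagUnit (0, 1) + diagUnit (1, 0)) * (R ⊗ₖ R)) * (ρT ⊗ₖ X)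
          * ((R ⊗ₖ R) * (diagUnit (0, 1) + diagUnit (1, 0)) * (R ⊗ₖ R)))
      = Matrix.of (fun i j => (R * ρT * R) 0 0 * (R i 0 * R 0 j)
          + (R * ρT * R) 1 1 * (R i 1 * R 1 j)) := by
    intro X hX
    have collect : ∀ A B C : Matrix (Fin 2 × Fin 2) (Fin 2 × Fin 2) ℂ,
        (R ⊗ₖ R) * A * (R ⊗ₖ R) + (R ⊗ₖ R) * B * (R ⊗ₖ R) + (R ⊗ₖ R) * C * (R ⊗ₖ R)
          = (R ⊗ₖ R) * (A + B + C) * (R ⊗ₖ R) := by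
      intro A B C; noncomm_ring
    rw [rearr X, rearr X, rearr X, collect]
    rw [key_lemma R (R * ρT * R) (R * X * R) hRR]
    have htr : (R * X * R).trace = 1 := by
      rw [Matrix.trace_mul_cycle, hRR, Matrix.one_mul, hX]
    rw [htr, one_smul]
  rw [hP₁, hP₂, hP₃, main ρA hρA, main ρA' hρA']

end
end

section
/- Let R be a 2×2 complex matrix that is unitary and Hermitian (so R = R† = R⁻¹), and define the real numbers u_k = ½ Tr(σ_k · R σ3 R) for k = 1, 2, 3 (so that R σ3 R = Σ_k u_k σ_k). Define P_1 = (R⊗R) Π_1 (R⊗R), P_2 = (R⊗R) Π_4 (R⊗R), P_3 = (R⊗R)(Π_2 + Π_3)(R⊗R), where Π_1, Π_2, Π_3, Π_4 are the diagonal matrix units of M₄(ℂ) in index order (0,0),(0,1),(1,0),(1,1). Let P ∈ ℝ with 0 ≤ P ≤ 1 and let ψ = √P · e₀⊗e₀ + √(1−P) · e₁⊗e₁, where e₀, e₁ is the standard basis of ℂ². Then Tr_A[Σ_{n=1}^{3} P_n |ψ⟩⟨ψ| P_n] = ½(𝟙 + (2P−1)·u_3·(u_1 σ1 + u_2 σ2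 + u_3 σ3)); in particular, different values of the initial entanglement parameter P give different asymptotic states of the target system whenever u_3 ≠ 0. -/
open Matrix Complex
open scoped Kronecker

noncomputable section

/-- The standard basis `e₀, e₁` of `ℂ²`. -/
def stdVec (i : Fin 2) : Fin 2 → ℂ := Pi.single i 1

/-- The entangled vector `ψ = √P e₀⊗e₀ + √(1-P) e₁⊗e₁`. -/
def psiVec (P : ℝ) : Fin 2 × Fin 2 → ℂ := fun p =>
  ((Real.sqrt P : ℝ) : ℂ) * stdVec 0 p.1 * stdVec 0 p.2
    + ((Real.sqrt (1 - P) : ℝ) : ℂ) * stdVec 1 p.1 * stdVec 1 p.2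

/-- The asymptotic reduced state `Tr_A[Σₙ Pₙ |ψ⟩⟨ψ| Pₙ]` as a function of `P`. -/
def asympState (P₁ P₂ P₃ : Matrix (Fin 2 × Fin 2) (Fin 2 × Fin 2) ℂ) (P : ℝ) :
    Matrix (Fin 2) (Fin 2) ℂ :=
  ptraceA (P₁ * vecMulVec (psiVec P) (star (psiVec P)) * P₁
    + P₂ * vecMulVec (psiVec P) (star (psiVec P)) * P₂
    + P₃ * vecMulVec (psiVec P) (star (psiVec P)) * P₃)

lemma sandwich {n : Type*} [Fintype n] [DecidableEq n] (A B : Matrix n n ℂ) (a p q : n) :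
    (A * Matrix.single a a (1 : ℂ) * B) p q = A p a * B a q := by
  rw [Matrix.mul_assoc, Matrix.mul_apply, Finset.sum_eq_single a]
  · rw [Matrix.single_mul_apply_same]; ring
  · intro x _ hx
    rw [Matrix.single_mul_apply_of_ne (i := a) (j := a) (c := (1:ℂ)) x q hx B,
      mul_zero]
  · simp

lemma mid {n : Type*} [Fintype n] (A B : Matrix n n ℂ) (ψ φ : n → ℂ) (p q : n) :
    (A * Matrix.vecMulVec ψ φ * B) p q
      = (∑ r, A p r * ψ r) * (∑ r, φ r * B r q) := by
  rw [Matrix.mul_assoc, Matrix.mul_apply, Finset.sum_mul_sum]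
  apply Finset.sum_congr rfl
  intro x _
  rw [Matrix.mul_apply, Finset.mul_sum]
  apply Finset.sum_congr rfl
  intro y _
  rw [Matrix.vecMulVec_apply]
  ring

set_option maxHeartbeats 2000000 in
/-- Cases 1 and 3, correlated initial state: for the entangled initial state
`ψ`, the asymptotic reduced state is `½(𝟙 + (2P-1) u₃ (u₁σ₁ + u₂σ₂ + u₃σ₃))`; in particular
different values of `P` give different asymptotic states whenever `u₃ ≠ 0`. -/
theorem asymptotic_state_from_entangled_initial_state
    (R : Matrix (Fin 2) (Fin 2) ℂ) (hR_herm : Rᴴ = R) (hR_unitary : R * Rᴴ = 1)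
    (u : Fin 3 → ℝ)
    (hu : ∀ k, (u k : ℂ) = (pauli k * (R * pauli 2 * R)).trace / 2)
    (P₁ P₂ P₃ : Matrix (Fin 2 × Fin 2) (Fin 2 × Fin 2) ℂ)
    (hP₁ : P₁ = (R ⊗ₖ R) * diagUnit (0, 0) * (R ⊗ₖ R))
    (hP₂ : P₂ = (R ⊗ₖ R) * diagUnit (1, 1) * (R ⊗ₖ R))
    (hP₃ : P₃ = (R ⊗ₖ R) * (diagUnit (0, 1) + diagUnit (1, 0)) * (R ⊗ₖ R)) :
    (∀ P : ℝ, 0 ≤ P → P ≤ 1 →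
      asympState P₁ P₂ P₃ P
        = (1 / 2 : ℂ) • ((1 : Matrix (Fin 2) (Fin 2) ℂ)
            + (((2 * P - 1) * u 2 : ℝ) : ℂ) •
                ((u 0 : ℂ) • pauli 0 + (u 1 : ℂ) • pauli 1 + (u 2 : ℂ) • pauli 2)))
    ∧ (u 2 ≠ 0 → ∀ P Q : ℝ, 0 ≤ P → P ≤ 1 → 0 ≤ Q → Q ≤ 1 →
        asympState P₁ P₂ P₃ P = asympState P₁ P₂ P₃ Q → P = Q) := by
  rw [hR_herm] at hR_unitary
  have he1 : R 0 0 * R 0 0 + R 0 1 * R 1 0 = 1 := by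
    have h := congrFun (congrFun hR_unitary 0) 0
    simpa [Matrix.mul_apply, Fin.sum_univ_two, Matrix.one_apply] using h
  have he2 : R 0 0 * R 0 1 + R 0 1 * R 1 1 = 0 := by
    have h := congrFun (congrFun hR_unitary 0) 1
    simpa [Matrix.mul_apply, Fin.sum_univ_two, Matrix.one_apply] using h
  have he3 : R 1 0 * R 0 0 + R 1 1 * R 1 0 = 0 := by
    have h := congrFun (congrFun hR_unitary 1) 0
    simpa [Matrix.mul_apply, Fin.sum_univ_two, Matrix.one_apply] using h
  have he4 : R 1 0 * R 0 1 + R 1 1 * R 1 1 = 1 := by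
    have h := congrFun (congrFun hR_unitary 1) 1
    simpa [Matrix.mul_apply, Fin.sum_univ_two, Matrix.one_apply] using h
  have hu0 : ((u 0 : ℝ) : ℂ) = (R 0 0 - R 1 1) * (R 0 1 + R 1 0) / 2 := by
    rw [hu 0]
    simp [pauli, Matrix.trace, Matrix.mul_apply, Fin.sum_univ_two, Matrix.diag]
    ring
  have hu1 : ((u 1 : ℝ) : ℂ) = Complex.I * ((R 0 0 - R 1 1) * (R 0 1 - R 1 0)) / 2 := by
    rw [hu 1]
    simp [pauli, Matrix.trace, Matrix.mul_apply, Fin.sum_univ_two, Matrix.diag]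
    ring
  have hu2 : ((u 2 : ℝ) : ℂ)
      = (R 0 0 * R 0 0 + R 1 1 * R 1 1 - 2 * (R 0 1 * R 1 0)) / 2 := by
    rw [hu 2]
    simp [pauli, Matrix.trace, Matrix.mul_apply, Fin.sum_univ_two, Matrix.diag]
    ring
  subst hP₁ hP₂ hP₃
  have main : ∀ P : ℝ, 0 ≤ P → P ≤ 1 →
      asympState ((R ⊗ₖ R) * diagUnit (0, 0) * (R ⊗ₖ R))
          ((R ⊗ₖ R) * diagUnit (1, 1) * (R ⊗ₖ R))
          ((R ⊗ₖ R) * (diagUnit (0, 1) + diagUnit (1, 0)) * (R ⊗ₖ R)) P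
        = (1 / 2 : ℂ) • ((1 : Matrix (Fin 2) (Fin 2) ℂ)
            + (((2 * P - 1) * u 2 : ℝ) : ℂ) •
                ((u 0 : ℂ) • pauli 0 + (u 1 : ℂ) • pauli 1 + (u 2 : ℂ) • pauli 2)) := by
    intro P hP0 hP1le
    have hs : ((Real.sqrt P : ℝ) : ℂ) * ((Real.sqrt P : ℝ) : ℂ) = (P : ℂ) := by
      rw [← Complex.ofReal_mul, Real.mul_self_sqrt hP0]
    have ht : ((Real.sqrt (1 - P) : ℝ) : ℂ) * ((Real.sqrt (1 - P) : ℝ) : ℂ)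
        = 1 - (P : ℂ) := by
      rw [← Complex.ofReal_mul, Real.mul_self_sqrt (by linarith)]
      push_cast
      ring
    have hP3' : (R ⊗ₖ R) * (diagUnit (0, 1) + diagUnit (1, 0)) * (R ⊗ₖ R)
        = (R ⊗ₖ R) * diagUnit (0, 1) * (R ⊗ₖ R)
          + (R ⊗ₖ R) * diagUnit (1, 0) * (R ⊗ₖ R) := by
      rw [Matrix.mul_add, Matrix.add_mul]
    ext i j
    fin_cases i <;> fin_cases j <;>
      ( simp only [asympState, ptraceA, hP3', Matrix.of_apply, Matrix.add_apply,
          Matrix.add_mul, Matrix.mul_add, mid, Fin.sum_univ_two, Fintype.sum_prod_type,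
          diagUnit, sandwich, Matrix.kroneckerMap_apply, Matrix.smul_apply,
          Matrix.one_apply, smul_eq_mul]
        simp only [psiVec, stdVec, Pi.star_apply, Pi.single_apply, pauli,
          Matrix.cons_val', Matrix.cons_val_zero, Matrix.cons_val_one, Matrix.head_cons,
          Matrix.head_fin_const, Matrix.empty_val', Matrix.cons_val_fin_one, Fin.isValue, Matrix.of_apply,
          Matrix.cons_val_two, Matrix.tail_cons]
        norm_num
        push_cast)
    · linear_combination ((R 0 0)^4*(R 0 1)^2*((Real.sqrt P : ℝ) : ℂ)*((Real.sqrt (1-P) : ℝ) : ℂ) + (R 0 0)^4*(R 1 0)^2*((Real.sqrt P : ℝ) : ℂ)*((Real.sqrt (1-P) : ℝ) : ℂ) + 4*(R 0 0)*(R 0 1)^3*(R 1 0)*(R 1 1)*((Real.sqrt P : ℝ) : ℂ)*((Real.sqrt (1-P) : ℝ) : ℂ) + 4*(R 0 0)*(R 0 1)*(R 1 0)^3*(R 1 1)*((Real.sqrt P : ℝ) : ℂ)*((Real.sqrt (1-P) : ℝ) : ℂ) + 2*(R 0 1)^3*(R 1 0)*(R 1 1)^2*((Real.sqrt P : ℝ)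 : ℂ)*((Real.sqrt (1-P) : ℝ) : ℂ) + 2*(R 0 1)*(R 1 0)^3*(R 1 1)^2*((Real.sqrt P : ℝ) : ℂ)*((Real.sqrt (1-P) : ℝ) : ℂ) + (R 0 0)*(R 0 1)^2*(R 1 1)^3*((Real.sqrt P : ℝ) : ℂ)*((Real.sqrt (1-P) : ℝ) : ℂ) + (R 0 0)*(R 1 0)^2*(R 1 1)^3*((Real.sqrt P : ℝ) : ℂ)*((Real.sqrt (1-P) : ℝ) : ℂ) + (R 0 0)^6*(P:ℂ) + 3*(R 0 0)^2*(R 0 1)^2*(R 1 0)^2*(P:ℂ) + (-3)*(R 0 1)^3*(R 1 0)^3*(P:ℂ) + 2*(R 0 0)*(R 0 1)^2*(R 1 0)^2*(R 1 1)*(P:ℂ) + (R 0 0)^2*(R 0 1)*(R 1 0)*(R 1 1)^2*(P:ℂ) + (-5)*(R 0 1)^2*(R 1 0)^2*(R 1 1)^2*(P:ℂ) + (-1)*(R 0 1)*(R 1 0)*(R 1 1)^4*(P:ℂ) + (R 0 0)^2*(R 0 1)^2*(R 1 0)^2 + 4*(R 0 1)^2*(R 1 0)^2*(R 1 1)^2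 + (R 0 1)*(R 1 0)*(R 1 1)^4 + (R 0 0)^2*(R 0 1)^2*((Real.sqrt P : ℝ) : ℂ)*((Real.sqrt (1-P) : ℝ) : ℂ) + (-1)*(R 0 1)^3*(R 1 0)*((Real.sqrt P : ℝ) : ℂ)*((Real.sqrt (1-P) : ℝ) : ℂ) + (R 0 0)^2*(R 1 0)^2*((Real.sqrt P : ℝ) : ℂ)*((Real.sqrt (1-P) : ℝ) : ℂ) + (-1)*(R 0 1)*(R 1 0)^3*((Real.sqrt P : ℝ) : ℂ)*((Real.sqrt (1-P) : ℝ) : ℂ) + (R 0 0)^4*(P:ℂ) + (-1)*(R 0 0)^2*(R 0 1)*(R 1 0)*(P:ℂ) + 4*(R 0 1)^2*(R 1 0)^2*(P:ℂ) + (R 0 1)*(R 1 0)*(R 1 1)^2*(P:ℂ) + (R 0 1)^2*(R 1 0)^2 + (R 0 1)^2*((Real.sqrt P : ℝ) : ℂ)*((Real.sqrt (1-P) : ℝ) : ℂ) + (R 1 0)^2*((Real.sqrt P : ℝ) : ℂ)*((Real.sqrt (1-P) : ℝ) : ℂ) + (3/4)*(R 0 0)^2*(P:ℂ) + (-3/4)*(R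 0 1)*(R 1 0)*(P:ℂ) + (-1/2)*(R 1 1)^2*(P:ℂ) + (1/8)*(R 0 0)^2 + (-5/8)*(R 0 1)*(R 1 0) + (1/4)*(R 1 1)^2 + (3/4)*(P:ℂ) + (1/8)) * he1 + ((-3)*(R 0 1)^3*(R 1 0)^2*(R 1 1)*((Real.sqrt P : ℝ) : ℂ)*((Real.sqrt (1-P) : ℝ) : ℂ) + (-3)*(R 0 1)*(R 1 0)^4*(R 1 1)*((Real.sqrt P : ℝ) : ℂ)*((Real.sqrt (1-P) : ℝ) : ℂ) + (-1)*(R 0 1)^2*(R 1 0)*(R 1 1)^3*((Real.sqrt P : ℝ) : ℂ)*((Real.sqrt (1-P) : ℝ) : ℂ) + (-1)*(R 1 0)^3*(R 1 1)^3*((Real.sqrt P : ℝ) : ℂ)*((Real.sqrt (1-P) : ℝ) : ℂ) + (-2)*(R 0 1)^2*(R 1 0)^3*(R 1 1)*(P:ℂ) + (-2)*(R 0 1)*(R 1 0)^2*(R 1 1)^3*(P:ℂ) + 2*(R 0 1)*(R 1 0)^2*(R 1 1)^3 + 4*(R 0 1)^2*(R 1 0)*(R 1 1)*((Real.sqrt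 P : ℝ) : ℂ)*((Real.sqrt (1-P) : ℝ) : ℂ) + 4*(R 1 0)^3*(R 1 1)*((Real.sqrt P : ℝ) : ℂ)*((Real.sqrt (1-P) : ℝ) : ℂ) + (R 0 1)*(R 1 1)^3*((Real.sqrt P : ℝ) : ℂ)*((Real.sqrt (1-P) : ℝ) : ℂ) + 2*(R 0 1)*(R 1 0)^2*(R 1 1)*(P:ℂ)) * he2 + ((R 1 0)*(R 1 1)^3*((Real.sqrt P : ℝ) : ℂ)*((Real.sqrt (1-P) : ℝ) : ℂ)) * he3 + (2*(R 0 1)^3*(R 1 0)*(R 1 1)^2*((Real.sqrt P : ℝ) : ℂ)*((Real.sqrt (1-P) : ℝ) : ℂ) + 2*(R 0 1)*(R 1 0)^3*(R 1 1)^2*((Real.sqrt P : ℝ) : ℂ)*((Real.sqrt (1-P) : ℝ) : ℂ) + 4*(R 0 1)^3*(R 1 0)^3*(P:ℂ) + 3*(R 0 1)^2*(R 1 0)^2*(R 1 1)^2*(P:ℂ) + (-1)*(R 0 1)*(R 1 0)*(R 1 1)^4*(P:ℂ) + (-3)*(R 0 1)^2*(R 1 0)^2*(R 1 1)^2 + (R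 0 1)*(R 1 0)*(R 1 1)^4 + (R 0 1)^3*(R 1 0)*((Real.sqrt P : ℝ) : ℂ)*((Real.sqrt (1-P) : ℝ) : ℂ) + (R 0 1)*(R 1 0)^3*((Real.sqrt P : ℝ) : ℂ)*((Real.sqrt (1-P) : ℝ) : ℂ) + (-1)*(R 0 1)^2*(R 1 1)^2*((Real.sqrt P : ℝ) : ℂ)*((Real.sqrt (1-P) : ℝ) : ℂ) + (-1)*(R 1 0)^2*(R 1 1)^2*((Real.sqrt P : ℝ) : ℂ)*((Real.sqrt (1-P) : ℝ) : ℂ) + (-3)*(R 0 1)^2*(R 1 0)^2*(P:ℂ) + (-2)*(R 0 1)*(R 1 0)*(R 1 1)^2*(P:ℂ) + (-1)*(R 0 1)^2*(R 1 0)^2 + 2*(R 0 1)*(R 1 0)*(R 1 1)^2 + (-1)*(R 0 1)^2*((Real.sqrt P : ℝ) : ℂ)*((Real.sqrt (1-P) : ℝ) : ℂ) + (-1)*(R 1 0)^2*((Real.sqrt P : ℝ) : ℂ)*((Real.sqrt (1-P) : ℝ) : ℂ) + (3/4)*(R 0 1)*(R 1 0)*(P:ℂ) + (-1/4)*(R 1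 1)^2*(P:ℂ) + (9/8)*(R 0 1)*(R 1 0) + (1/8)*(R 1 1)^2 + (-3/4)*(P:ℂ) + (3/8)) * he4 + ((-1/2)*(R 0 0)^2*(P:ℂ) + (R 0 1)*(R 1 0)*(P:ℂ) + (-1/2)*(R 1 1)^2*(P:ℂ) + (1/4)*(R 0 0)^2 + (-1/2)*(R 0 1)*(R 1 0) + (1/4)*(R 1 1)^2 + (-1)*(P:ℂ)*((u 2 : ℝ):ℂ) + (1/2)*((u 2 : ℝ):ℂ)) * hu2 + ((R 0 0)^8 + (R 0 0)^6*(R 0 1)*(R 1 0) + 4*(R 0 0)^4*(R 0 1)^2*(R 1 0)^2 + (R 0 0)^2*(R 0 1)^3*(R 1 0)^3 + (R 0 1)^4*(R 1 0)^4 + 2*(R 0 0)^3*(R 0 1)^2*(R 1 0)^2*(R 1 1) + (R 0 0)^4*(R 0 1)*(R 1 0)*(R 1 1)^2 + (R 0 1)^3*(R 1 0)^3*(R 1 1)^2) * hs + ((R 0 0)^4*(R 0 1)^2*(R 1 0)^2 + (R 0 0)^2*(R 0 1)^3*(R 1 0)^3 + 4*(R 0 0)^2*(R 0 1)^2*(R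 1 0)^2*(R 1 1)^2 + (R 0 1)^3*(R 1 0)^3*(R 1 1)^2 + 2*(R 0 0)*(R 0 1)^2*(R 1 0)^2*(R 1 1)^3 + (R 0 0)^2*(R 0 1)*(R 1 0)*(R 1 1)^4 + (R 0 1)^2*(R 1 0)^2*(R 1 1)^4 + (R 0 1)*(R 1 0)*(R 1 1)^6) * ht
    · linear_combination ((R 0 0)^3*(R 0 1)^3*((Real.sqrt P : ℝ) : ℂ)*((Real.sqrt (1-P) : ℝ) : ℂ) + (R 0 0)^3*(R 0 1)*(R 1 0)^2*((Real.sqrt P : ℝ) : ℂ)*((Real.sqrt (1-P) : ℝ) : ℂ) + 2*(R 0 1)^4*(R 1 0)*(R 1 1)*((Real.sqrt P : ℝ) : ℂ)*((Real.sqrt (1-P) : ℝ) : ℂ) + 2*(R 0 1)^2*(R 1 0)^3*(R 1 1)*((Real.sqrt P : ℝ) : ℂ)*((Real.sqrt (1-P) : ℝ) : ℂ) + 2*(R 0 0)*(R 0 1)^3*(R 1 1)^2*((Real.sqrt P : ℝ) : ℂ)*((Real.sqrt (1-P) : ℝ) : ℂ) + 2*(R 0 0)*(R 0 1)*(R 1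 0)^2*(R 1 1)^2*((Real.sqrt P : ℝ) : ℂ)*((Real.sqrt (1-P) : ℝ) : ℂ) + 2*(R 0 1)^3*(R 1 1)^3*((Real.sqrt P : ℝ) : ℂ)*((Real.sqrt (1-P) : ℝ) : ℂ) + 2*(R 0 1)*(R 1 0)^2*(R 1 1)^3*((Real.sqrt P : ℝ) : ℂ)*((Real.sqrt (1-P) : ℝ) : ℂ) + (R 0 0)^5*(R 0 1)*(P:ℂ) + (R 0 0)*(R 0 1)^3*(R 1 0)^2*(P:ℂ) + 2*(R 0 0)^2*(R 0 1)^2*(R 1 0)*(R 1 1)*(P:ℂ) + 2*(R 0 0)*(R 0 1)^2*(R 1 0)*(R 1 1)^2*(P:ℂ) + (-2)*(R 0 1)^2*(R 1 0)*(R 1 1)^3*(P:ℂ) + (R 0 0)*(R 0 1)^3*(R 1 0)^2 + 2*(R 0 1)^2*(R 1 0)*(R 1 1)^3 + (R 0 0)*(R 0 1)^3*((Real.sqrt P : ℝ) : ℂ)*((Real.sqrt (1-P) : ℝ) : ℂ) + (R 0 0)*(R 0 1)*(R 1 0)^2*((Real.sqrt P : ℝ) : ℂ)*((Real.sqrt (1-P)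 : ℝ) : ℂ) + (R 0 0)^3*(R 0 1)*(P:ℂ) + (-1)*(R 0 0)*(R 0 1)^2*(R 1 0)*(P:ℂ) + 2*(R 0 1)^2*(R 1 0)*(R 1 1)*(P:ℂ) + (1/2)*(R 0 0)*(R 0 1)*(P:ℂ) + (1/2)*(R 0 1)*(R 1 1)*(P:ℂ) + (1/4)*(R 0 0)*(R 0 1) + (-1/4)*(R 0 1)*(R 1 1)) * he1 + ((-2)*(R 0 1)^3*(R 1 0)^3*(P:ℂ) + (-4)*(R 0 1)^2*(R 1 0)^2*(R 1 1)^2*(P:ℂ) + (-2)*(R 0 1)*(R 1 0)*(R 1 1)^4*(P:ℂ) + 2*(R 0 1)^2*(R 1 0)^2*(R 1 1)^2 + 2*(R 0 1)*(R 1 0)*(R 1 1)^4 + (-1)*(R 0 1)^3*(R 1 0)*((Real.sqrt P : ℝ) : ℂ)*((Real.sqrt (1-P) : ℝ) : ℂ) + (-1)*(R 0 1)*(R 1 0)^3*((Real.sqrt P : ℝ) : ℂ)*((Real.sqrt (1-P) : ℝ) : ℂ) + 2*(R 0 1)^2*(R 1 1)^2*((Real.sqrt P : ℝ) : ℂ)*((Real.sqrt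 (1-P) : ℝ) : ℂ) + 2*(R 1 0)^2*(R 1 1)^2*((Real.sqrt P : ℝ) : ℂ)*((Real.sqrt (1-P) : ℝ) : ℂ) + 2*(R 0 1)^2*(R 1 0)^2*(P:ℂ) + 2*(R 0 1)*(R 1 0)*(R 1 1)^2*(P:ℂ) + (R 0 1)^2*(R 1 0)^2 + (R 0 1)^2*((Real.sqrt P : ℝ) : ℂ)*((Real.sqrt (1-P) : ℝ) : ℂ) + (R 1 0)^2*((Real.sqrt P : ℝ) : ℂ)*((Real.sqrt (1-P) : ℝ) : ℂ) + (-1/2)*(R 0 1)*(R 1 0)*(P:ℂ) + (-1/2)*(R 1 1)^2*(P:ℂ) + (-3/4)*(R 0 1)*(R 1 0) + (1/4)*(R 1 1)^2 + (1/2)*(P:ℂ) + (1/4)) * he2 + ((-2)*(R 0 1)^4*(R 1 0)*(R 1 1)*((Real.sqrt P : ℝ) : ℂ)*((Real.sqrt (1-P) : ℝ) : ℂ) + (-2)*(R 0 1)^2*(R 1 0)^3*(R 1 1)*((Real.sqrt P : ℝ) : ℂ)*((Real.sqrt (1-P) : ℝ) : ℂ) + (R 0 1)^3*(R 1 1)^3*((Real.sqrt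 P : ℝ) : ℂ)*((Real.sqrt (1-P) : ℝ) : ℂ) + (R 0 1)*(R 1 0)^2*(R 1 1)^3*((Real.sqrt P : ℝ) : ℂ)*((Real.sqrt (1-P) : ℝ) : ℂ) + 3*(R 0 1)^3*(R 1 0)^2*(R 1 1)*(P:ℂ) + 2*(R 0 1)^2*(R 1 0)*(R 1 1)^3*(P:ℂ) + (-1)*(R 0 1)*(R 1 1)^5*(P:ℂ) + (-2)*(R 0 1)^2*(R 1 0)*(R 1 1)^3 + (R 0 1)*(R 1 1)^5 + (R 0 1)^3*(R 1 1)*((Real.sqrt P : ℝ) : ℂ)*((Real.sqrt (1-P) : ℝ) : ℂ) + (R 0 1)*(R 1 0)^2*(R 1 1)*((Real.sqrt P : ℝ) : ℂ)*((Real.sqrt (1-P) : ℝ) : ℂ) + (-1)*(R 0 1)^2*(R 1 0)*(R 1 1)*(P:ℂ) + (-1)*(R 0 1)*(R 1 1)^3*(P:ℂ) + (-1)*(R 0 1)^2*(R 1 0)*(R 1 1) + (R 0 1)*(R 1 1)^3 + (1/2)*(R 0 1)*(R 1 1)) * he4 + ((-1)*(P:ℂ)*((u 2 : ℝ):ℂ)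 + (1/2)*((u 2 : ℝ):ℂ)) * hu0 + (Complex.I*(P:ℂ)*((u 2 : ℝ):ℂ) + (-1/2*Complex.I)*((u 2 : ℝ):ℂ)) * hu1 + ((-1)*(R 0 0)*(R 0 1)*(P:ℂ) + (R 0 1)*(R 1 1)*(P:ℂ) + (1/2)*(R 0 0)*(R 0 1) + (-1/2)*(R 0 1)*(R 1 1)) * hu2 + ((R 0 0)^7*(R 0 1) + (R 0 0)^5*(R 0 1)^2*(R 1 0) + 2*(R 0 0)^3*(R 0 1)^3*(R 1 0)^2 + 2*(R 0 0)^4*(R 0 1)^2*(R 1 0)*(R 1 1) + 2*(R 0 0)^2*(R 0 1)^3*(R 1 0)^2*(R 1 1) + (R 0 1)^4*(R 1 0)^3*(R 1 1) + 2*(R 0 0)^3*(R 0 1)^2*(R 1 0)*(R 1 1)^2 + (R 0 1)^3*(R 1 0)^2*(R 1 1)^3) * hs + ((R 0 0)^3*(R 0 1)^3*(R 1 0)^2 + (R 0 0)*(R 0 1)^4*(R 1 0)^3 + 2*(R 0 0)*(R 0 1)^3*(R 1 0)^2*(R 1 1)^2 + 2*(R 0 0)^2*(R 0 1)^2*(R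 1 0)*(R 1 1)^3 + 2*(R 0 1)^3*(R 1 0)^2*(R 1 1)^3 + 2*(R 0 0)*(R 0 1)^2*(R 1 0)*(R 1 1)^4 + (R 0 1)^2*(R 1 0)*(R 1 1)^5 + (R 0 1)*(R 1 1)^7) * ht + (((u 2:ℝ):ℂ) * ((P:ℂ)/2 - 1/4) * (R 0 0 - R 1 1) * (R 0 1 - R 1 0)) * Complex.I_sq
    · linear_combination ((R 0 0)^3*(R 0 1)^2*(R 1 0)*((Real.sqrt P : ℝ) : ℂ)*((Real.sqrt (1-P) : ℝ) : ℂ) + (R 0 0)^3*(R 1 0)^3*((Real.sqrt P : ℝ) : ℂ)*((Real.sqrt (1-P) : ℝ) : ℂ) + 2*(R 0 1)^3*(R 1 0)^2*(R 1 1)*((Real.sqrt P : ℝ) : ℂ)*((Real.sqrt (1-P) : ℝ) : ℂ) + 2*(R 0 1)*(R 1 0)^4*(R 1 1)*((Real.sqrt P : ℝ) : ℂ)*((Real.sqrt (1-P) : ℝ) : ℂ) + 2*(R 0 0)*(R 0 1)^2*(R 1 0)*(R 1 1)^2*((Real.sqrt P : ℝ) : ℂ)*((Real.sqrt (1-P)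 : ℝ) : ℂ) + 2*(R 0 0)*(R 1 0)^3*(R 1 1)^2*((Real.sqrt P : ℝ) : ℂ)*((Real.sqrt (1-P) : ℝ) : ℂ) + 2*(R 0 1)^2*(R 1 0)*(R 1 1)^3*((Real.sqrt P : ℝ) : ℂ)*((Real.sqrt (1-P) : ℝ) : ℂ) + 2*(R 1 0)^3*(R 1 1)^3*((Real.sqrt P : ℝ) : ℂ)*((Real.sqrt (1-P) : ℝ) : ℂ) + (R 0 0)^5*(R 1 0)*(P:ℂ) + (R 0 0)*(R 0 1)^2*(R 1 0)^3*(P:ℂ) + 2*(R 0 0)^2*(R 0 1)*(R 1 0)^2*(R 1 1)*(P:ℂ) + 2*(R 0 0)*(R 0 1)*(R 1 0)^2*(R 1 1)^2*(P:ℂ) + (-2)*(R 0 1)*(R 1 0)^2*(R 1 1)^3*(P:ℂ) + (R 0 0)*(R 0 1)^2*(R 1 0)^3 + 2*(R 0 1)*(R 1 0)^2*(R 1 1)^3 + (R 0 0)*(R 0 1)^2*(R 1 0)*((Real.sqrt P : ℝ) : ℂ)*((Real.sqrt (1-P) : ℝ) : ℂ) + (R 0 0)*(R 1 0)^3*((Real.sqrt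 P : ℝ) : ℂ)*((Real.sqrt (1-P) : ℝ) : ℂ) + (R 0 0)^3*(R 1 0)*(P:ℂ) + (-1)*(R 0 0)*(R 0 1)*(R 1 0)^2*(P:ℂ) + 2*(R 0 1)*(R 1 0)^2*(R 1 1)*(P:ℂ) + (1/2)*(R 0 0)*(R 1 0)*(P:ℂ) + (1/2)*(R 1 0)*(R 1 1)*(P:ℂ) + (1/4)*(R 0 0)*(R 1 0) + (-1/4)*(R 1 0)*(R 1 1)) * he1 + ((-2)*(R 0 1)^2*(R 1 0)^4*(P:ℂ) + (-4)*(R 0 1)*(R 1 0)^3*(R 1 1)^2*(P:ℂ) + (-2)*(R 1 0)^2*(R 1 1)^4*(P:ℂ) + 2*(R 0 1)*(R 1 0)^3*(R 1 1)^2 + 2*(R 1 0)^2*(R 1 1)^4 + (-1)*(R 0 1)^2*(R 1 0)^2*((Real.sqrt P : ℝ) : ℂ)*((Real.sqrt (1-P) : ℝ) : ℂ) + (-1)*(R 1 0)^4*((Real.sqrt P : ℝ) : ℂ)*((Real.sqrt (1-P) : ℝ) : ℂ) + 2*(R 0 1)*(R 1 0)*(R 1 1)^2*((Real.sqrt P :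 ℝ) : ℂ)*((Real.sqrt (1-P) : ℝ) : ℂ) + 2*(R 0 1)*(R 1 0)^3*(P:ℂ) + 2*(R 1 0)^2*(R 1 1)^2*(P:ℂ) + (R 0 1)*(R 1 0)^3 + (R 0 1)*(R 1 0)*((Real.sqrt P : ℝ) : ℂ)*((Real.sqrt (1-P) : ℝ) : ℂ) + (-1/2)*(R 1 0)^2*(P:ℂ) + (-3/4)*(R 1 0)^2) * he2 + (2*(R 1 0)^2*(R 1 1)^2*((Real.sqrt P : ℝ) : ℂ)*((Real.sqrt (1-P) : ℝ) : ℂ) + (R 1 0)^2*((Real.sqrt P : ℝ) : ℂ)*((Real.sqrt (1-P) : ℝ) : ℂ) + (-1/2)*(R 1 1)^2*(P:ℂ) + (1/4)*(R 1 1)^2 + (1/2)*(P:ℂ) + (1/4)) * he3 + ((-2)*(R 0 1)^3*(R 1 0)^2*(R 1 1)*((Real.sqrt P : ℝ) : ℂ)*((Real.sqrt (1-P) : ℝ) : ℂ) + (-2)*(R 0 1)*(R 1 0)^4*(R 1 1)*((Real.sqrt P : ℝ) : ℂ)*((Real.sqrt (1-P) : ℝ) : ℂ) + (R 0 1)^2*(R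 1 0)*(R 1 1)^3*((Real.sqrt P : ℝ) : ℂ)*((Real.sqrt (1-P) : ℝ) : ℂ) + (R 1 0)^3*(R 1 1)^3*((Real.sqrt P : ℝ) : ℂ)*((Real.sqrt (1-P) : ℝ) : ℂ) + 3*(R 0 1)^2*(R 1 0)^3*(R 1 1)*(P:ℂ) + 2*(R 0 1)*(R 1 0)^2*(R 1 1)^3*(P:ℂ) + (-1)*(R 1 0)*(R 1 1)^5*(P:ℂ) + (-2)*(R 0 1)*(R 1 0)^2*(R 1 1)^3 + (R 1 0)*(R 1 1)^5 + (R 0 1)^2*(R 1 0)*(R 1 1)*((Real.sqrt P : ℝ) : ℂ)*((Real.sqrt (1-P) : ℝ) : ℂ) + (R 1 0)^3*(R 1 1)*((Real.sqrt P : ℝ) : ℂ)*((Real.sqrt (1-P) : ℝ) : ℂ) + (-1)*(R 0 1)*(R 1 0)^2*(R 1 1)*(P:ℂ) + (-1)*(R 1 0)*(R 1 1)^3*(P:ℂ) + (-1)*(R 0 1)*(R 1 0)^2*(R 1 1) + (R 1 0)*(R 1 1)^3 + (1/2)*(R 1 0)*(R 1 1)) * he4 + ((-1)*(P:ℂ)*((u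 2 : ℝ):ℂ) + (1/2)*((u 2 : ℝ):ℂ)) * hu0 + ((-1*Complex.I)*(P:ℂ)*((u 2 : ℝ):ℂ) + (1/2*Complex.I)*((u 2 : ℝ):ℂ)) * hu1 + ((-1)*(R 0 0)*(R 1 0)*(P:ℂ) + (R 1 0)*(R 1 1)*(P:ℂ) + (1/2)*(R 0 0)*(R 1 0) + (-1/2)*(R 1 0)*(R 1 1)) * hu2 + ((R 0 0)^7*(R 1 0) + (R 0 0)^5*(R 0 1)*(R 1 0)^2 + 2*(R 0 0)^3*(R 0 1)^2*(R 1 0)^3 + 2*(R 0 0)^4*(R 0 1)*(R 1 0)^2*(R 1 1) + 2*(R 0 0)^2*(R 0 1)^2*(R 1 0)^3*(R 1 1) + (R 0 1)^3*(R 1 0)^4*(R 1 1) + 2*(R 0 0)^3*(R 0 1)*(R 1 0)^2*(R 1 1)^2 + (R 0 1)^2*(R 1 0)^3*(R 1 1)^3) * hs + ((R 0 0)^3*(R 0 1)^2*(R 1 0)^3 + (R 0 0)*(R 0 1)^3*(R 1 0)^4 + 2*(R 0 0)*(R 0 1)^2*(R 1 0)^3*(R 1 1)^2 + 2*(R 0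 0)^2*(R 0 1)*(R 1 0)^2*(R 1 1)^3 + 2*(R 0 1)^2*(R 1 0)^3*(R 1 1)^3 + 2*(R 0 0)*(R 0 1)*(R 1 0)^2*(R 1 1)^4 + (R 0 1)*(R 1 0)^2*(R 1 1)^5 + (R 1 0)*(R 1 1)^7) * ht + (((u 2:ℝ):ℂ) * ((P:ℂ)/2 - 1/4) * (R 0 0 - R 1 1) * (R 1 0 - R 0 1)) * Complex.I_sq
    · linear_combination ((R 0 0)^2*(R 0 1)^3*(R 1 0)*((Real.sqrt P : ℝ) : ℂ)*((Real.sqrt (1-P) : ℝ) : ℂ) + (R 0 0)^2*(R 0 1)*(R 1 0)^3*((Real.sqrt P : ℝ) : ℂ)*((Real.sqrt (1-P) : ℝ) : ℂ) + 2*(R 0 1)^3*(R 1 0)*(R 1 1)^2*((Real.sqrt P : ℝ) : ℂ)*((Real.sqrt (1-P) : ℝ) : ℂ) + 2*(R 0 1)*(R 1 0)^3*(R 1 1)^2*((Real.sqrt P : ℝ) : ℂ)*((Real.sqrt (1-P) : ℝ) : ℂ) + (R 0 0)*(R 0 1)^2*(R 1 1)^3*((Real.sqrt P : ℝ) : ℂ)*((Real.sqrt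 (1-P) : ℝ) : ℂ) + (R 0 0)*(R 1 0)^2*(R 1 1)^3*((Real.sqrt P : ℝ) : ℂ)*((Real.sqrt (1-P) : ℝ) : ℂ) + (R 0 0)^4*(R 0 1)*(R 1 0)*(P:ℂ) + 2*(R 0 0)*(R 0 1)^2*(R 1 0)^2*(R 1 1)*(P:ℂ) + (R 0 0)^2*(R 0 1)*(R 1 0)*(R 1 1)^2*(P:ℂ) + 3*(R 0 1)^2*(R 1 0)^2*(R 1 1)^2*(P:ℂ) + (-1)*(R 0 1)*(R 1 0)*(R 1 1)^4*(P:ℂ) + (R 0 1)^3*(R 1 0)^3 + (R 0 1)*(R 1 0)*(R 1 1)^4 + (R 0 1)^3*(R 1 0)*((Real.sqrt P : ℝ) : ℂ)*((Real.sqrt (1-P) : ℝ) : ℂ) + (R 0 1)*(R 1 0)^3*((Real.sqrt P : ℝ) : ℂ)*((Real.sqrt (1-P) : ℝ) : ℂ) + (R 0 0)^2*(R 0 1)*(R 1 0)*(P:ℂ) + (-1)*(R 0 1)^2*(R 1 0)^2*(P:ℂ) + (R 0 1)*(R 1 0)*(R 1 1)^2*(P:ℂ) + (1/4)*(R 0 0)^2*(P:ℂ)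 + (-1/4)*(R 0 1)*(R 1 0)*(P:ℂ) + (1/2)*(R 1 1)^2*(P:ℂ) + (-1/8)*(R 0 0)^2 + (5/8)*(R 0 1)*(R 1 0) + (-1/4)*(R 1 1)^2 + (1/4)*(P:ℂ) + (-1/8)) * he1 + ((R 0 1)^3*(R 1 0)^2*(R 1 1)*((Real.sqrt P : ℝ) : ℂ)*((Real.sqrt (1-P) : ℝ) : ℂ) + (R 0 1)*(R 1 0)^4*(R 1 1)*((Real.sqrt P : ℝ) : ℂ)*((Real.sqrt (1-P) : ℝ) : ℂ) + 3*(R 0 1)^2*(R 1 0)*(R 1 1)^3*((Real.sqrt P : ℝ) : ℂ)*((Real.sqrt (1-P) : ℝ) : ℂ) + 3*(R 1 0)^3*(R 1 1)^3*((Real.sqrt P : ℝ) : ℂ)*((Real.sqrt (1-P) : ℝ) : ℂ) + (-2)*(R 0 1)^2*(R 1 0)^3*(R 1 1)*(P:ℂ) + (-2)*(R 0 1)*(R 1 0)^2*(R 1 1)^3*(P:ℂ) + 2*(R 0 1)*(R 1 0)^2*(R 1 1)^3 + (R 0 1)*(R 1 1)^3*((Real.sqrt P : ℝ) : ℂ)*((Real.sqrt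 (1-P) : ℝ) : ℂ) + 2*(R 0 1)*(R 1 0)^2*(R 1 1)*(P:ℂ)) * he2 + ((R 1 0)*(R 1 1)^3*((Real.sqrt P : ℝ) : ℂ)*((Real.sqrt (1-P) : ℝ) : ℂ)) * he3 + ((-3)*(R 0 1)^3*(R 1 0)*(R 1 1)^2*((Real.sqrt P : ℝ) : ℂ)*((Real.sqrt (1-P) : ℝ) : ℂ) + (-3)*(R 0 1)*(R 1 0)^3*(R 1 1)^2*((Real.sqrt P : ℝ) : ℂ)*((Real.sqrt (1-P) : ℝ) : ℂ) + (R 0 1)^2*(R 1 1)^4*((Real.sqrt P : ℝ) : ℂ)*((Real.sqrt (1-P) : ℝ) : ℂ) + (R 1 0)^2*(R 1 1)^4*((Real.sqrt P : ℝ) : ℂ)*((Real.sqrt (1-P) : ℝ) : ℂ) + (-1)*(R 0 1)^3*(R 1 0)^3*(P:ℂ) + (-1)*(R 1 1)^6*(P:ℂ) + (R 0 1)^2*(R 1 0)^2*(R 1 1)^2 + (R 1 1)^6 + (-1)*(R 0 1)^3*(R 1 0)*((Real.sqrt P : ℝ) : ℂ)*((Real.sqrt (1-P) : ℝ) : ℂ)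 + (-1)*(R 0 1)*(R 1 0)^3*((Real.sqrt P : ℝ) : ℂ)*((Real.sqrt (1-P) : ℝ) : ℂ) + (-1)*(R 1 1)^4*(P:ℂ) + (R 0 1)^2*(R 1 0)^2 + (R 1 1)^4 + (1/4)*(R 0 1)*(R 1 0)*(P:ℂ) + (-3/4)*(R 1 1)^2*(P:ℂ) + (-1/8)*(R 0 1)*(R 1 0) + (7/8)*(R 1 1)^2 + (-1/4)*(P:ℂ) + (5/8)) * he4 + ((1/2)*(R 0 0)^2*(P:ℂ) + (-1)*(R 0 1)*(R 1 0)*(P:ℂ) + (1/2)*(R 1 1)^2*(P:ℂ) + (-1/4)*(R 0 0)^2 + (1/2)*(R 0 1)*(R 1 0) + (-1/4)*(R 1 1)^2 + (P:ℂ)*((u 2 : ℝ):ℂ) + (-1/2)*((u 2 : ℝ):ℂ)) * hu2 + ((R 0 0)^6*(R 0 1)*(R 1 0) + (R 0 0)^4*(R 0 1)^2*(R 1 0)^2 + (R 0 0)^2*(R 0 1)^3*(R 1 0)^3 + 2*(R 0 0)^3*(R 0 1)^2*(R 1 0)^2*(R 1 1) + (R 0 0)^4*(R 0 1)*(R 1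 0)*(R 1 1)^2 + 4*(R 0 0)^2*(R 0 1)^2*(R 1 0)^2*(R 1 1)^2 + (R 0 1)^3*(R 1 0)^3*(R 1 1)^2 + (R 0 1)^2*(R 1 0)^2*(R 1 1)^4) * hs + ((R 0 0)^2*(R 0 1)^3*(R 1 0)^3 + (R 0 1)^4*(R 1 0)^4 + (R 0 1)^3*(R 1 0)^3*(R 1 1)^2 + 2*(R 0 0)*(R 0 1)^2*(R 1 0)^2*(R 1 1)^3 + (R 0 0)^2*(R 0 1)*(R 1 0)*(R 1 1)^4 + 4*(R 0 1)^2*(R 1 0)^2*(R 1 1)^4 + (R 0 1)*(R 1 0)*(R 1 1)^6 + (R 1 1)^8) * ht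
  refine ⟨main, ?_⟩
  intro hu2ne P Q hP0 hP1le hQ0 hQ1le hPQ
  rw [main P hP0 hP1le, main Q hQ0 hQ1le] at hPQ
  have h00 := congrFun (congrFun hPQ 0) 0
  simp [pauli, Matrix.smul_apply, Matrix.add_apply, Matrix.one_apply, smul_eq_mul] at h00
  rcases h00 with h | h
  · exact h
  · exact absurd h hu2ne

end
end
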